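/- arXiv:2411.05866 — 5 statements merged into one kernel-verified Lean document; each statement's English description precedes it below -/
import Mathlib

section
/- Let α, β ∈ C¹([0,L]×[0,∞)) satisfy ∂_t α + λ₁ ∂_x α = 0, ∂_t β − λ₂ ∂_x β = 0, and the boundary coupling α(0,t) = −r β(0,t) for all t ≥ 0, and suppose the boundary value at x = L is only approximately zero: |β(L,t)| ≤ ε for all t ≥ 0. Then for every ν > 0 there exist constants C₁ > 0 and C₂ > 0, depending only on λ₁, λ₂, r, L and ν, such that for all t ≥ 0: ∫₀^L (α(x,t)² + β(x,t)²) dx ≤ C₁ e^{−ν t} ∫₀^L (α(x,0)² + β(x,0)²) dx + C₂ ε². That is, the target system with an ε-approximate boundary control is locally practically exponentially stable in L². -/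
set_option maxHeartbeats 1000000

open Set Real MeasureTheory intervalIntegral

lemma char_const (L c : ℝ) (hc : c ≠ 0) (u : ℝ → ℝ → ℝ)
    (hu : ContDiffOn ℝ 1 (fun p : ℝ × ℝ => u p.1 p.2) (Icc 0 L ×ˢ Ici 0))
    (pde : ∀ x ∈ Ioo (0:ℝ) L, ∀ t ∈ Ioi (0:ℝ),
      deriv (fun s => u x s) t + c * deriv (fun y => u y t) x = 0)
    (x t d : ℝ) (hx : x ∈ Icc (0:ℝ) L) (ht : 0 ≤ t) (hd : 0 ≤ d)
    (hx' : x + c * d ∈ Icc (0:ℝ) L) :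
    u x t = u (x + c * d) (t + d) := by
  rcases eq_or_lt_of_le hd with rfl | hd0
  · simp
  set f : ℝ × ℝ → ℝ := fun p => u p.1 p.2 with hf
  set γ : ℝ → ℝ × ℝ := fun s => (x + c * s, t + s) with hγ
  have hcont_γ : Continuous γ := by fun_prop
  have hmem : ∀ s ∈ Icc (0:ℝ) d, γ s ∈ (Icc 0 L ×ˢ Ici 0 : Set (ℝ × ℝ)) := by
    rintro s ⟨hs0, hsd⟩
    refine ⟨⟨?_, ?_⟩, by simp [hγ]; linarith⟩
    · rcases le_or_gt c 0 with hc | hc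
      · have : c * d ≤ c * s := by nlinarith
        simp only [hγ]; nlinarith [hx'.1]
      · simp only [hγ]; nlinarith [hx.1]
    · rcases le_or_gt c 0 with hc | hc
      · simp only [hγ]; nlinarith [hx.2]
      · have : c * s ≤ c * d := by nlinarith
        simp only [hγ]; nlinarith [hx'.2]
  have hmemi : ∀ s ∈ Ioo (0:ℝ) d, γ s ∈ (Ioo 0 L ×ˢ Ioi 0 : Set (ℝ × ℝ)) := by
    rintro s ⟨hs0, hsd⟩
    refine ⟨⟨?_, ?_⟩, by simp [hγ]; linarith⟩
    · rcases lt_or_gt_of_ne hc with hc | hc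
      · have : c * d < c * s := by nlinarith
        simp only [hγ]; nlinarith [hx'.1]
      · simp only [hγ]; nlinarith [hx.1]
    · rcases lt_or_gt_of_ne hc with hc | hc
      · simp only [hγ]; nlinarith [hx.2]
      · have : c * s < c * d := by nlinarith
        simp only [hγ]; nlinarith [hx'.2]
  have hg : ∀ s ∈ Ioo (0:ℝ) d, HasDerivAt (f ∘ γ) 0 s := by
    intro s hs
    have hin : γ s ∈ (Ioo 0 L ×ˢ Ioi 0 : Set (ℝ × ℝ)) := hmemi s hs
    have hnhds : (Icc 0 L ×ˢ Ici 0 : Set (ℝ × ℝ)) ∈ nhds (γ s) :=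
      Filter.mem_of_superset ((isOpen_Ioo.prod isOpen_Ioi).mem_nhds hin)
        (prod_mono Ioo_subset_Icc_self Ioi_subset_Ici_self)
    have hfd : DifferentiableAt ℝ f ((x + c * s, t + s) : ℝ × ℝ) :=
      ((hu.contDiffAt hnhds).differentiableAt one_ne_zero)
    have hγ' : HasDerivAt γ (c, 1) s := by
      have h1 : HasDerivAt (fun s : ℝ => x + c * s) c s := by
        simpa using ((hasDerivAt_id s).const_mul c).const_add x
      have h2 : HasDerivAt (fun s : ℝ => t + s) 1 s := by
        simpa using (hasDerivAt_id s).const_add t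
      exact h1.prodMk h2
    have hcomp : HasDerivAt (f ∘ γ) (fderiv ℝ f ((x + c * s, t + s) : ℝ × ℝ) (c, 1)) s := by
      exact HasFDerivAt.comp_hasDerivAt s hfd.hasFDerivAt hγ'
    have hx' : deriv (fun y => u y (t + s)) (x + c * s) = fderiv ℝ f ((x + c * s, t + s) : ℝ × ℝ) (1, 0) := by
      have hι : HasDerivAt (fun y : ℝ => (y, t + s)) ((1:ℝ), (0:ℝ)) (x + c * s) :=
        (hasDerivAt_id _).prodMk (hasDerivAt_const _ _)
      have : HasDerivAt (fun y => u y (t + s)) (fderiv ℝ f ((x + c * s, t + s) : ℝ × ℝ) (1, 0)) (x + c * s) :=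
        by have := HasFDerivAt.comp_hasDerivAt (x + c * s) hfd.hasFDerivAt hι; exact this
      exact this.deriv
    have ht' : deriv (fun τ => u (x + c * s) τ) (t + s) = fderiv ℝ f ((x + c * s, t + s) : ℝ × ℝ) (0, 1) := by
      have hι : HasDerivAt (fun τ : ℝ => (x + c * s, τ)) ((0:ℝ), (1:ℝ)) (t + s) :=
        (hasDerivAt_const _ _).prodMk (hasDerivAt_id _)
      have : HasDerivAt (fun τ => u (x + c * s) τ) (fderiv ℝ f ((x + c * s, t + s) : ℝ × ℝ) (0, 1)) (t + s) :=
        HasFDerivAt.comp_hasDerivAt (t + s) hfd.hasFDerivAt hι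
      exact this.deriv
    have hpde := pde (x + c * s) hin.1 (t + s) hin.2
    have hdecomp : ((c:ℝ), (1:ℝ)) = c • ((1:ℝ), (0:ℝ)) + ((0:ℝ), (1:ℝ)) := by
      simp [Prod.ext_iff]
    have : fderiv ℝ f ((x + c * s, t + s) : ℝ × ℝ) (c, 1) = 0 := by
      rw [hdecomp, ContinuousLinearMap.map_add, ContinuousLinearMap.map_smul]
      rw [← hx', ← ht'] at *
      simp only [smul_eq_mul]
      linarith [hpde]
    rwa [this] at hcomp
  have hcont : ContinuousOn (f ∘ γ) (Icc 0 d) :=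
    hu.continuousOn.comp hcont_γ.continuousOn hmem
  have hdiff : DifferentiableOn ℝ (f ∘ γ) (interior (Icc (0:ℝ) d)) := by
    rw [interior_Icc]; exact fun s hs => ((hg s hs).differentiableAt).differentiableWithinAt
  have hmono : MonotoneOn (f ∘ γ) (Icc 0 d) :=
    monotoneOn_of_deriv_nonneg (convex_Icc 0 d) hcont hdiff
      (by rw [interior_Icc]; intro s hs; rw [(hg s hs).deriv])
  have hanti : AntitoneOn (f ∘ γ) (Icc 0 d) :=
    antitoneOn_of_deriv_nonpos (convex_Icc 0 d) hcont hdiff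
      (by rw [interior_Icc]; intro s hs; rw [(hg s hs).deriv])
  have h0 : (0:ℝ) ∈ Icc (0:ℝ) d := ⟨le_rfl, hd⟩
  have hdd : d ∈ Icc (0:ℝ) d := ⟨hd, le_rfl⟩
  have := le_antisymm (hmono h0 hdd hd) (hanti h0 hdd hd)
  simpa [f, γ] using this

lemma slice_int (L : ℝ) (u : ℝ → ℝ → ℝ)
    (hu : ContDiffOn ℝ 1 (fun p : ℝ × ℝ => u p.1 p.2) (Icc 0 L ×ˢ Ici 0))
    (t : ℝ) (ht : 0 ≤ t) (a b : ℝ) (hab : uIcc a b ⊆ Icc 0 L) :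
    IntervalIntegrable (fun x => u x t ^ 2) volume a b := by
  have hcont : ContinuousOn (fun x : ℝ => u x t) (Icc 0 L) := by
    have : ContinuousOn (fun x : ℝ => (x, t)) (Icc 0 L) := by fun_prop
    exact hu.continuousOn.comp this (fun x hx => ⟨hx, ht⟩)
  exact ((hcont.pow 2).mono hab).intervalIntegrable

lemma pdeB {L lam2 : ℝ} {β : ℝ → ℝ → ℝ}
    (pdeβ : ∀ x ∈ Ioo (0:ℝ) L, ∀ t ∈ Ioi (0:ℝ),
      deriv (fun s => β x s) t - lam2 * deriv (fun y => β y t) x = 0) :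
    ∀ x ∈ Ioo (0:ℝ) L, ∀ t ∈ Ioi (0:ℝ),
    deriv (fun s => β x s) t + (-lam2) * deriv (fun y => β y t) x = 0 := by
  intro x hx t ht; have := pdeβ x hx t ht; linarith

lemma betaF1 {L lam2 : ℝ} {β : ℝ → ℝ → ℝ} (hL : 0 < L) (h2 : 0 < lam2)
    (hβ : ContDiffOn ℝ 1 (fun p : ℝ × ℝ => β p.1 p.2) (Icc 0 L ×ˢ Ici 0))
    (pdeβ : ∀ x ∈ Ioo (0:ℝ) L, ∀ t ∈ Ioi (0:ℝ),
      deriv (fun s => β x s) t - lam2 * deriv (fun y => β y t) x = 0)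
    (x t : ℝ) (hx : x ∈ Icc (0:ℝ) L) (ht : 0 ≤ t) (hxt : x + lam2 * t ≤ L) :
    β x t = β (x + lam2 * t) 0 := by
  have h := char_const L (-lam2) (neg_ne_zero.mpr h2.ne') β hβ (pdeB pdeβ)
    (x + lam2 * t) 0 t ⟨by nlinarith [hx.1], hxt⟩ le_rfl ht
    (by rw [show x + lam2 * t + -lam2 * t = x by ring]; exact hx)
  rw [show x + lam2 * t + -lam2 * t = x by ring, zero_add] at h
  exact h.symm

lemma betaF2 {L lam2 ε : ℝ} {β : ℝ → ℝ → ℝ} (hL : 0 < L) (h2 : 0 < lam2) (hε : 0 ≤ ε)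
    (hβ : ContDiffOn ℝ 1 (fun p : ℝ × ℝ => β p.1 p.2) (Icc 0 L ×ˢ Ici 0))
    (pdeβ : ∀ x ∈ Ioo (0:ℝ) L, ∀ t ∈ Ioi (0:ℝ),
      deriv (fun s => β x s) t - lam2 * deriv (fun y => β y t) x = 0)
    (hbl : ∀ t : ℝ, 0 ≤ t → |β L t| ≤ ε)
    (x t : ℝ) (hx : x ∈ Icc (0:ℝ) L) (ht : 0 ≤ t) (hxt : L ≤ x + lam2 * t) :
    |β x t| ≤ ε := by
  set τ := (L - x) / lam2 with hτ
  have hτ0 : 0 ≤ τ := by apply div_nonneg; linarith [hx.2]; exact h2.le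
  have hτt : τ ≤ t := by rw [hτ, div_le_iff₀ h2]; nlinarith
  have h := char_const L (-lam2) (neg_ne_zero.mpr h2.ne') β hβ (pdeB pdeβ)
    L (t - τ) τ ⟨hL.le, le_rfl⟩ (by linarith) hτ0
    (by rw [show L + -lam2 * τ = x by rw [hτ, neg_mul, mul_div_cancel₀ _ h2.ne']; ring]; exact hx)
  rw [show L + -lam2 * τ = x by rw [hτ, neg_mul, mul_div_cancel₀ _ h2.ne']; ring, show t - τ + τ = t by ring] at h
  rw [← h]
  exact hbl (t - τ) (by linarith)

lemma alphaF3 {L lam1 : ℝ} {α : ℝ → ℝ → ℝ} (hL : 0 < L) (h1 : 0 < lam1)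
    (hα : ContDiffOn ℝ 1 (fun p : ℝ × ℝ => α p.1 p.2) (Icc 0 L ×ˢ Ici 0))
    (pdeα : ∀ x ∈ Ioo (0:ℝ) L, ∀ t ∈ Ioi (0:ℝ),
      deriv (fun s => α x s) t + lam1 * deriv (fun y => α y t) x = 0)
    (x t : ℝ) (hx : x ∈ Icc (0:ℝ) L) (ht : 0 ≤ t) (hxt : lam1 * t ≤ x) :
    α x t = α (x - lam1 * t) 0 := by
  have h := char_const L lam1 h1.ne' α hα pdeα
    (x - lam1 * t) 0 t ⟨by linarith, by nlinarith [hx.2, mul_nonneg h1.le ht]⟩ le_rfl ht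
    (by rw [show x - lam1 * t + lam1 * t = x by ring]; exact hx)
  rw [show x - lam1 * t + lam1 * t = x by ring, zero_add] at h
  exact h.symm

lemma alphaF4 {L lam1 r : ℝ} {α β : ℝ → ℝ → ℝ} (hL : 0 < L) (h1 : 0 < lam1)
    (hα : ContDiffOn ℝ 1 (fun p : ℝ × ℝ => α p.1 p.2) (Icc 0 L ×ˢ Ici 0))
    (pdeα : ∀ x ∈ Ioo (0:ℝ) L, ∀ t ∈ Ioi (0:ℝ),
      deriv (fun s => α x s) t + lam1 * deriv (fun y => α y t) x = 0)
    (hc : ∀ t : ℝ, 0 ≤ t → α 0 t = -r * β 0 t)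
    (x t : ℝ) (hx : x ∈ Icc (0:ℝ) L) (ht : 0 ≤ t) (hxt : x ≤ lam1 * t) :
    α x t = -r * β 0 (t - x / lam1) := by
  have hs0 : 0 ≤ t - x / lam1 := by
    rw [sub_nonneg, div_le_iff₀ h1]; nlinarith
  have h := char_const L lam1 h1.ne' α hα pdeα
    0 (t - x / lam1) (x / lam1) ⟨le_rfl, hL.le⟩ hs0 (div_nonneg hx.1 h1.le)
    (by rw [show (0:ℝ) + lam1 * (x / lam1) = x by field_simp; ring]; exact hx)
  rw [show (0:ℝ) + lam1 * (x / lam1) = x by field_simp; ring,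
    show t - x / lam1 + x / lam1 = t by ring] at h
  rw [← h]
  exact hc (t - x / lam1) hs0

lemma beta_int {L lam2 ε : ℝ} {β : ℝ → ℝ → ℝ} (hL : 0 < L) (h2 : 0 < lam2) (hε : 0 ≤ ε)
    (hβ : ContDiffOn ℝ 1 (fun p : ℝ × ℝ => β p.1 p.2) (Icc 0 L ×ˢ Ici 0))
    (pdeβ : ∀ x ∈ Ioo (0:ℝ) L, ∀ t ∈ Ioi (0:ℝ),
      deriv (fun s => β x s) t - lam2 * deriv (fun y => β y t) x = 0)
    (hbl : ∀ t : ℝ, 0 ≤ t → |β L t| ≤ ε)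
    (t : ℝ) (ht : 0 ≤ t) :
    (∫ x in (0:ℝ)..L, β x t ^ 2) ≤ (∫ y in (0:ℝ)..L, β y 0 ^ 2) + L * ε ^ 2 := by
  set x₀ := max 0 (L - lam2 * t) with hx₀def
  have hx₀0 : 0 ≤ x₀ := le_max_left _ _
  have hx₀L : x₀ ≤ L := max_le hL.le (by nlinarith)
  have I1 : IntervalIntegrable (fun x => β x t ^ 2) volume 0 x₀ :=
    slice_int L β hβ t ht 0 x₀ (by rw [uIcc_of_le hx₀0]; exact Icc_subset_Icc le_rfl hx₀L)
  have I2 : IntervalIntegrable (fun x => β x t ^ 2) volume x₀ L :=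
    slice_int L β hβ t ht x₀ L (by rw [uIcc_of_le hx₀L]; exact Icc_subset_Icc hx₀0 le_rfl)
  have I0 : IntervalIntegrable (fun y => β y 0 ^ 2) volume 0 L :=
    slice_int L β hβ 0 le_rfl 0 L (by rw [uIcc_of_le hL.le])
  have hsplit : (∫ x in (0:ℝ)..L, β x t ^ 2)
      = (∫ x in (0:ℝ)..x₀, β x t ^ 2) + ∫ x in x₀..L, β x t ^ 2 :=
    (integral_add_adjacent_intervals I1 I2).symm
  have hp2 : (∫ x in x₀..L, β x t ^ 2) ≤ L * ε ^ 2 := by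
    have hmono : (∫ x in x₀..L, β x t ^ 2) ≤ ∫ _x in x₀..L, (ε ^ 2 : ℝ) := by
      apply integral_mono_on hx₀L I2 intervalIntegrable_const
      intro x hx
      have hb := betaF2 hL h2 hε hβ pdeβ hbl x t ⟨hx.1.trans' hx₀0, hx.2⟩ ht
        (by have : L - lam2 * t ≤ x₀ := le_max_right _ _; linarith [hx.1])
      calc β x t ^ 2 = |β x t| ^ 2 := (sq_abs _).symm
        _ ≤ ε ^ 2 := by apply pow_le_pow_left₀ (abs_nonneg _) hb
    have : (∫ _x in x₀..L, (ε ^ 2 : ℝ)) = (L - x₀) * ε ^ 2 := by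
      rw [intervalIntegral.integral_const, smul_eq_mul]
    nlinarith [sq_nonneg ε]
  have hp1 : (∫ x in (0:ℝ)..x₀, β x t ^ 2) ≤ ∫ y in (0:ℝ)..L, β y 0 ^ 2 := by
    rcases le_or_gt (lam2 * t) L with hcase | hcase
    · have hx₀ : x₀ = L - lam2 * t := max_eq_right (by linarith)
      have hcongr : (∫ x in (0:ℝ)..x₀, β x t ^ 2)
          = ∫ x in (0:ℝ)..x₀, β (x + lam2 * t) 0 ^ 2 := by
        apply integral_congr
        intro x hx
        rw [uIcc_of_le hx₀0] at hx
        show β x t ^ 2 = β (x + lam2 * t) 0 ^ 2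
        rw [betaF1 hL h2 hβ pdeβ x t ⟨hx.1, hx.2.trans hx₀L⟩ ht (by rw [hx₀] at hx; linarith [hx.2])]
      rw [hcongr, integral_comp_add_right (fun y => β y 0 ^ 2) (lam2 * t)]
      apply integral_mono_interval (by positivity) (by rw [hx₀]; linarith) (by rw [hx₀]; linarith)
        (Filter.Eventually.of_forall (fun y => sq_nonneg _)) I0
    · have hx₀ : x₀ = 0 := max_eq_left (by linarith)
      rw [hx₀, integral_same]
      exact integral_nonneg hL.le (fun y _ => sq_nonneg _)
  linarith

lemma alpha_int {L lam1 lam2 r ε : ℝ} {α β : ℝ → ℝ → ℝ}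
    (hL : 0 < L) (h1 : 0 < lam1) (h2 : 0 < lam2) (hε : 0 ≤ ε)
    (hα : ContDiffOn ℝ 1 (fun p : ℝ × ℝ => α p.1 p.2) (Icc 0 L ×ˢ Ici 0))
    (pdeα : ∀ x ∈ Ioo (0:ℝ) L, ∀ t ∈ Ioi (0:ℝ),
      deriv (fun s => α x s) t + lam1 * deriv (fun y => α y t) x = 0)
    (hβ : ContDiffOn ℝ 1 (fun p : ℝ × ℝ => β p.1 p.2) (Icc 0 L ×ˢ Ici 0))
    (pdeβ : ∀ x ∈ Ioo (0:ℝ) L, ∀ t ∈ Ioi (0:ℝ),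
      deriv (fun s => β x s) t - lam2 * deriv (fun y => β y t) x = 0)
    (hc : ∀ t : ℝ, 0 ≤ t → α 0 t = -r * β 0 t)
    (hbl : ∀ t : ℝ, 0 ≤ t → |β L t| ≤ ε)
    (t : ℝ) (ht : 0 ≤ t) :
    (∫ x in (0:ℝ)..L, α x t ^ 2)
      ≤ (∫ y in (0:ℝ)..L, α y 0 ^ 2)
        + r ^ 2 * (lam1 / lam2) * (∫ y in (0:ℝ)..L, β y 0 ^ 2)
        + r ^ 2 * L * ε ^ 2 := by
  set x₁ := min L (lam1 * t) with hx₁def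
  set m := lam1 * max 0 (t - L / lam2) with hmdef
  set x₂ := min x₁ m with hx₂def
  have hx₁0 : 0 ≤ x₁ := le_min hL.le (by positivity)
  have hx₁L : x₁ ≤ L := min_le_left _ _
  have hx₁t : x₁ ≤ lam1 * t := min_le_right _ _
  have hm0 : 0 ≤ m := by positivity
  have hx₂0 : 0 ≤ x₂ := le_min hx₁0 hm0
  have hx₂1 : x₂ ≤ x₁ := min_le_left _ _
  have Iβ0 : IntervalIntegrable (fun y => β y 0 ^ 2) volume 0 L :=
    slice_int L β hβ 0 le_rfl 0 L (by rw [uIcc_of_le hL.le])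
  have Iβ0n : (0:ℝ) ≤ ∫ y in (0:ℝ)..L, β y 0 ^ 2 :=
    integral_nonneg hL.le (fun y _ => sq_nonneg _)
  have Iα0n : (0:ℝ) ≤ ∫ y in (0:ℝ)..L, α y 0 ^ 2 :=
    integral_nonneg hL.le (fun y _ => sq_nonneg _)
  have J1 : IntervalIntegrable (fun x => α x t ^ 2) volume 0 x₂ :=
    slice_int L α hα t ht 0 x₂
      (by rw [uIcc_of_le hx₂0]; exact Icc_subset_Icc le_rfl (hx₂1.trans hx₁L))
  have J2 : IntervalIntegrable (fun x => α x t ^ 2) volume x₂ x₁ :=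
    slice_int L α hα t ht x₂ x₁
      (by rw [uIcc_of_le hx₂1]; exact Icc_subset_Icc hx₂0 hx₁L)
  have J3 : IntervalIntegrable (fun x => α x t ^ 2) volume x₁ L :=
    slice_int L α hα t ht x₁ L
      (by rw [uIcc_of_le hx₁L]; exact Icc_subset_Icc hx₁0 le_rfl)
  have hsplit : (∫ x in (0:ℝ)..L, α x t ^ 2)
      = (∫ x in (0:ℝ)..x₂, α x t ^ 2) + ((∫ x in x₂..x₁, α x t ^ 2)
        + ∫ x in x₁..L, α x t ^ 2) := by
    rw [integral_add_adjacent_intervals J2 J3,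
      integral_add_adjacent_intervals J1 (J2.trans J3)]
  have hP1 : (∫ x in (0:ℝ)..x₂, α x t ^ 2) ≤ r ^ 2 * L * ε ^ 2 := by
    rcases le_or_gt (t - L / lam2) 0 with hcase | hcase
    · have : m = 0 := by rw [hmdef, max_eq_left hcase, mul_zero]
      have hx₂ : x₂ = 0 := by rw [hx₂def, this, min_eq_right hx₁0]
      rw [hx₂, integral_same]; positivity
    · have hmax : max 0 (t - L / lam2) = t - L / lam2 := max_eq_right hcase.le
      have hmono : (∫ x in (0:ℝ)..x₂, α x t ^ 2) ≤ ∫ _x in (0:ℝ)..x₂, (r ^ 2 * ε ^ 2 : ℝ) := by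
        apply integral_mono_on hx₂0 J1 intervalIntegrable_const
        intro x hx
        have hxL : x ∈ Icc (0:ℝ) L := ⟨hx.1, hx.2.trans (hx₂1.trans hx₁L)⟩
        have hxlt : x ≤ lam1 * t := hx.2.trans (hx₂1.trans hx₁t)
        have hs0 : 0 ≤ t - x / lam1 := by
          rw [sub_nonneg, div_le_iff₀ h1]; nlinarith
        have hxm : x ≤ lam1 * (t - L / lam2) := by
          have : x₂ ≤ m := min_le_right _ _
          rw [hmdef, hmax] at this; linarith [hx.2]
        have hsL : L ≤ 0 + lam2 * (t - x / lam1) := by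
          have h3 : x / lam1 ≤ t - L / lam2 := by
            rw [div_le_iff₀ h1]; nlinarith
          have h4 : L / lam2 ≤ t - x / lam1 := by linarith
          rw [div_le_iff₀ h2] at h4; nlinarith
        rw [alphaF4 hL h1 hα pdeα hc x t hxL ht hxlt]
        have hb := betaF2 hL h2 hε hβ pdeβ hbl 0 (t - x / lam1) ⟨le_rfl, hL.le⟩ hs0 hsL
        have : (-r * β 0 (t - x / lam1)) ^ 2 = r ^ 2 * |β 0 (t - x / lam1)| ^ 2 := by
          rw [sq_abs]; ring
        rw [this]
        have := pow_le_pow_left₀ (abs_nonneg _) hb 2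
        nlinarith [sq_nonneg r]
      have : (∫ _x in (0:ℝ)..x₂, (r ^ 2 * ε ^ 2 : ℝ)) = x₂ * (r ^ 2 * ε ^ 2) := by
        rw [intervalIntegral.integral_const, smul_eq_mul, sub_zero]
      rw [this] at hmono
      have hx₂L : x₂ ≤ L := hx₂1.trans hx₁L
      nlinarith [sq_nonneg (r * ε)]
  have hP3 : (∫ x in x₁..L, α x t ^ 2) ≤ ∫ y in (0:ℝ)..L, α y 0 ^ 2 := by
    rcases le_or_gt (lam1 * t) L with hcase | hcase
    · have hx₁ : x₁ = lam1 * t := min_eq_right hcase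
      have hcongr : (∫ x in x₁..L, α x t ^ 2)
          = ∫ x in x₁..L, α (x - lam1 * t) 0 ^ 2 := by
        apply integral_congr
        intro x hx
        rw [uIcc_of_le hx₁L] at hx
        show α x t ^ 2 = α (x - lam1 * t) 0 ^ 2
        rw [alphaF3 hL h1 hα pdeα x t ⟨hx₁0.trans hx.1, hx.2⟩ ht (by rw [← hx₁]; exact hx.1)]
      rw [hcongr, integral_comp_sub_right (fun y => α y 0 ^ 2) (lam1 * t)]
      rw [hx₁, sub_self]
      apply integral_mono_interval le_rfl (by linarith) (by nlinarith)
        (Filter.Eventually.of_forall (fun y => sq_nonneg _))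
        (slice_int L α hα 0 le_rfl 0 L (by rw [uIcc_of_le hL.le]))
    · have hx₁ : x₁ = L := min_eq_left (by linarith)
      rw [hx₁, integral_same]; exact Iα0n
  have hP2 : (∫ x in x₂..x₁, α x t ^ 2)
      ≤ r ^ 2 * (lam1 / lam2) * ∫ y in (0:ℝ)..L, β y 0 ^ 2 := by
    rcases le_or_gt x₁ m with hcm | hcm
    · have hx₂ : x₂ = x₁ := min_eq_left hcm
      rw [hx₂, integral_same]
      exact mul_nonneg (by positivity) Iβ0n
    · have hx₂ : x₂ = m := min_eq_right hcm.le
      have hcongr : (∫ x in x₂..x₁, α x t ^ 2)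
          = ∫ x in x₂..x₁, r ^ 2 * (fun y => β y 0 ^ 2) (-(lam2 / lam1) * x + lam2 * t) := by
        apply integral_congr
        intro x hx
        rw [uIcc_of_le hx₂1] at hx
        show α x t ^ 2 = r ^ 2 * β (-(lam2 / lam1) * x + lam2 * t) 0 ^ 2
        have hxL : x ∈ Icc (0:ℝ) L := ⟨hx₂0.trans hx.1, hx.2.trans hx₁L⟩
        have hxlt : x ≤ lam1 * t := hx.2.trans hx₁t
        have hs0 : 0 ≤ t - x / lam1 := by
          rw [sub_nonneg, div_le_iff₀ h1]; nlinarith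
        have hxm : m ≤ x := by rw [← hx₂]; exact hx.1
        have hsL : 0 + lam2 * (t - x / lam1) ≤ L := by
          rcases le_or_gt (t - L / lam2) 0 with hc2 | hc2
          · have h4 : t ≤ L / lam2 := by linarith
            rw [le_div_iff₀ h2] at h4
            have h5 : 0 ≤ x / lam1 := div_nonneg hxL.1 h1.le
            nlinarith
          · have hmax : max 0 (t - L / lam2) = t - L / lam2 := max_eq_right hc2.le
            rw [hmdef, hmax] at hxm
            have h3 : t - L / lam2 ≤ x / lam1 := by
              rw [le_div_iff₀ h1]; nlinarith
            have h4 : t - x / lam1 ≤ L / lam2 := by linarith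
            rw [le_div_iff₀ h2] at h4; nlinarith
        rw [alphaF4 hL h1 hα pdeα hc x t hxL ht hxlt,
          betaF1 hL h2 hβ pdeβ 0 (t - x / lam1) ⟨le_rfl, hL.le⟩ hs0 hsL]
        have harg : (0:ℝ) + lam2 * (t - x / lam1) = -(lam2 / lam1) * x + lam2 * t := by
          field_simp; ring
        rw [harg]; ring
      have hc' : -(lam2 / lam1) ≠ 0 := by
        have : (0:ℝ) < lam2 / lam1 := by positivity
        exact neg_ne_zero.mpr this.ne'
      have hsub := integral_comp_mul_add (a := x₂) (b := x₁)
        (f := fun y => β y 0 ^ 2) hc' (lam2 * t)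
      rw [hcongr, intervalIntegral.integral_const_mul, hsub]
      set a' := -(lam2 / lam1) * x₂ + lam2 * t with ha'def
      set b' := -(lam2 / lam1) * x₁ + lam2 * t with hb'def
      have hba : b' ≤ a' := by
        have : (0:ℝ) < lam2 / lam1 := by positivity
        rw [ha'def, hb'def]; nlinarith
      have hb'0 : 0 ≤ b' := by
        have hkey : lam2 / lam1 * (lam1 * t) = lam2 * t := by field_simp
        have : lam2 / lam1 * x₁ ≤ lam2 / lam1 * (lam1 * t) :=
          mul_le_mul_of_nonneg_left hx₁t (by positivity)
        rw [hb'def]; nlinarith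
      have ha'L : a' ≤ L := by
        rcases le_or_gt (t - L / lam2) 0 with hc2 | hc2
        · have hm : m = 0 := by rw [hmdef, max_eq_left hc2, mul_zero]
          have h4 : t ≤ L / lam2 := by linarith
          rw [le_div_iff₀ h2] at h4
          rw [ha'def, hx₂, hm]; nlinarith
        · have hm : m = lam1 * (t - L / lam2) := by rw [hmdef, max_eq_right hc2.le]
          have hkey : lam2 / lam1 * (lam1 * (t - L / lam2)) = lam2 * t - L := by
            field_simp
          rw [ha'def, hx₂, hm]; linarith [hkey]
      have hflip : ((-(lam2 / lam1) : ℝ)⁻¹ • ∫ y in a'..b', β y 0 ^ 2)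
          = (lam1 / lam2) * ∫ y in b'..a', β y 0 ^ 2 := by
        rw [integral_symm, smul_eq_mul]
        have : ((-(lam2 / lam1) : ℝ))⁻¹ = -(lam1 / lam2) := by
          rw [inv_neg, inv_div]
        rw [this]; ring
      rw [hflip]
      have hmono2 : (∫ y in b'..a', β y 0 ^ 2) ≤ ∫ y in (0:ℝ)..L, β y 0 ^ 2 :=
        integral_mono_interval hb'0 hba ha'L
          (Filter.Eventually.of_forall (fun y => sq_nonneg _)) Iβ0
      have hpos : (0:ℝ) ≤ r ^ 2 * (lam1 / lam2) := by positivity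
      calc r ^ 2 * ((lam1 / lam2) * ∫ y in b'..a', β y 0 ^ 2)
          = r ^ 2 * (lam1 / lam2) * ∫ y in b'..a', β y 0 ^ 2 := by ring
        _ ≤ r ^ 2 * (lam1 / lam2) * ∫ y in (0:ℝ)..L, β y 0 ^ 2 :=
            mul_le_mul_of_nonneg_left hmono2 hpos
  linarith

lemma large_time {L lam1 lam2 r ε : ℝ} {α β : ℝ → ℝ → ℝ}
    (hL : 0 < L) (h1 : 0 < lam1) (h2 : 0 < lam2) (hε : 0 ≤ ε)
    (hα : ContDiffOn ℝ 1 (fun p : ℝ × ℝ => α p.1 p.2) (Icc 0 L ×ˢ Ici 0))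
    (pdeα : ∀ x ∈ Ioo (0:ℝ) L, ∀ t ∈ Ioi (0:ℝ),
      deriv (fun s => α x s) t + lam1 * deriv (fun y => α y t) x = 0)
    (hβ : ContDiffOn ℝ 1 (fun p : ℝ × ℝ => β p.1 p.2) (Icc 0 L ×ˢ Ici 0))
    (pdeβ : ∀ x ∈ Ioo (0:ℝ) L, ∀ t ∈ Ioi (0:ℝ),
      deriv (fun s => β x s) t - lam2 * deriv (fun y => β y t) x = 0)
    (hc : ∀ t : ℝ, 0 ≤ t → α 0 t = -r * β 0 t)
    (hbl : ∀ t : ℝ, 0 ≤ t → |β L t| ≤ ε)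
    (t : ℝ) (hT : L / lam1 + L / lam2 ≤ t) :
    (∫ x in (0:ℝ)..L, (α x t ^ 2 + β x t ^ 2)) ≤ L * ((r ^ 2 + 1) * ε ^ 2) := by
  have hT0 : (0:ℝ) ≤ L / lam1 + L / lam2 := by positivity
  have ht : 0 ≤ t := hT0.trans hT
  have hI : IntervalIntegrable (fun x => α x t ^ 2 + β x t ^ 2) volume 0 L :=
    (slice_int L α hα t ht 0 L (by rw [uIcc_of_le hL.le])).add
      (slice_int L β hβ t ht 0 L (by rw [uIcc_of_le hL.le]))
  have hmono : (∫ x in (0:ℝ)..L, (α x t ^ 2 + β x t ^ 2))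
      ≤ ∫ _x in (0:ℝ)..L, ((r ^ 2 + 1) * ε ^ 2 : ℝ) := by
    apply integral_mono_on hL.le hI intervalIntegrable_const
    intro x hx
    have hL1 : L / lam1 ≤ t - L / lam2 := by linarith
    have hb : β x t ^ 2 ≤ ε ^ 2 := by
      have hxt : L ≤ x + lam2 * t := by
        have : L / lam2 ≤ t := by linarith [div_nonneg hL.le h1.le]
        rw [div_le_iff₀ h2] at this
        nlinarith [hx.1]
      have := betaF2 hL h2 hε hβ pdeβ hbl x t hx ht hxt
      calc β x t ^ 2 = |β x t| ^ 2 := (sq_abs _).symm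
        _ ≤ ε ^ 2 := pow_le_pow_left₀ (abs_nonneg _) this 2
    have ha : α x t ^ 2 ≤ r ^ 2 * ε ^ 2 := by
      have hxlt : x ≤ lam1 * t := by
        have h3 : L / lam1 ≤ t := by linarith [div_nonneg hL.le h2.le]
        rw [div_le_iff₀ h1] at h3
        nlinarith [hx.2]
      have hs0 : 0 ≤ t - x / lam1 := by
        rw [sub_nonneg, div_le_iff₀ h1]; nlinarith
      have hsL : L ≤ 0 + lam2 * (t - x / lam1) := by
        have h4 : x / lam1 ≤ L / lam1 := by
          gcongr
          exact hx.2
        have h5 : L / lam2 ≤ t - x / lam1 := by linarith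
        rw [div_le_iff₀ h2] at h5; nlinarith
      have hbb := betaF2 hL h2 hε hβ pdeβ hbl 0 (t - x / lam1) ⟨le_rfl, hL.le⟩ hs0 hsL
      rw [alphaF4 hL h1 hα pdeα hc x t hx ht hxlt]
      have : (-r * β 0 (t - x / lam1)) ^ 2 = r ^ 2 * |β 0 (t - x / lam1)| ^ 2 := by
        rw [sq_abs]; ring
      rw [this]
      nlinarith [pow_le_pow_left₀ (abs_nonneg (β 0 (t - x / lam1))) hbb 2, sq_nonneg r]
    linarith
  have : (∫ _x in (0:ℝ)..L, ((r ^ 2 + 1) * ε ^ 2 : ℝ)) = L * ((r ^ 2 + 1) * ε ^ 2) := by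
    rw [intervalIntegral.integral_const, smul_eq_mul, sub_zero]
  linarith

/-- local practical exponential stability of the target system with
an `ε`-approximate boundary control: for every `ν > 0` there are constants
`C₁, C₂ > 0` (depending only on `λ₁, λ₂, r, L, ν`) such that any C¹ solution of
the two transport equations with `α(0,t) = −r β(0,t)` and `|β(L,t)| ≤ ε`
satisfies `∫₀^L (α² + β²)(·,t) ≤ C₁ e^{−ν t} ∫₀^L (α² + β²)(·,0) + C₂ ε²`. -/
theorem stmt_2 (L lam1 lam2 r : ℝ)
    (hL : 0 < L) (h1 : 0 < lam1) (h2 : 0 < lam2) :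
    ∀ ν > (0:ℝ), ∃ C₁ > (0:ℝ), ∃ C₂ > (0:ℝ),
      ∀ ε : ℝ, 0 ≤ ε →
      ∀ α β : ℝ → ℝ → ℝ,
        ContDiffOn ℝ 1 (fun p : ℝ × ℝ => α p.1 p.2) (Icc 0 L ×ˢ Ici 0) →
        ContDiffOn ℝ 1 (fun p : ℝ × ℝ => β p.1 p.2) (Icc 0 L ×ˢ Ici 0) →
        (∀ x ∈ Ioo (0:ℝ) L, ∀ t ∈ Ioi (0:ℝ),
          deriv (fun s => α x s) t + lam1 * deriv (fun y => α y t) x = 0) →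
        (∀ x ∈ Ioo (0:ℝ) L, ∀ t ∈ Ioi (0:ℝ),
          deriv (fun s => β x s) t - lam2 * deriv (fun y => β y t) x = 0) →
        (∀ t : ℝ, 0 ≤ t → α 0 t = -r * β 0 t) →
        (∀ t : ℝ, 0 ≤ t → |β L t| ≤ ε) →
        ∀ t : ℝ, 0 ≤ t →
          (∫ x in (0:ℝ)..L, ((α x t) ^ 2 + (β x t) ^ 2))
            ≤ C₁ * Real.exp (-ν * t) * (∫ x in (0:ℝ)..L, ((α x 0) ^ 2 + (β x 0) ^ 2))
              + C₂ * ε ^ 2 := by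
  intro ν hν
  set T : ℝ := L / lam1 + L / lam2 with hTdef
  have hT0 : 0 < T := by positivity
  set K : ℝ := 2 + r ^ 2 * (lam1 / lam2) with hKdef
  have hK : 0 < K := by positivity
  refine ⟨K * Real.exp (ν * T), by positivity, L * (r ^ 2 + 1) + 1, by positivity, ?_⟩
  intro ε hε α β hα hβ pdeα pdeβ hc hbl t ht
  -- basic integrability and splitting
  have Iαt : IntervalIntegrable (fun x => α x t ^ 2) volume 0 L :=
    slice_int L α hα t ht 0 L (by rw [uIcc_of_le hL.le])
  have Iβt : IntervalIntegrable (fun x => β x t ^ 2) volume 0 L :=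
    slice_int L β hβ t ht 0 L (by rw [uIcc_of_le hL.le])
  have Iα0 : IntervalIntegrable (fun x => α x 0 ^ 2) volume 0 L :=
    slice_int L α hα 0 le_rfl 0 L (by rw [uIcc_of_le hL.le])
  have Iβ0 : IntervalIntegrable (fun x => β x 0 ^ 2) volume 0 L :=
    slice_int L β hβ 0 le_rfl 0 L (by rw [uIcc_of_le hL.le])
  have hsplitt : (∫ x in (0:ℝ)..L, (α x t ^ 2 + β x t ^ 2))
      = (∫ x in (0:ℝ)..L, α x t ^ 2) + ∫ x in (0:ℝ)..L, β x t ^ 2 :=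
    integral_add Iαt Iβt
  have hsplit0 : (∫ x in (0:ℝ)..L, (α x 0 ^ 2 + β x 0 ^ 2))
      = (∫ x in (0:ℝ)..L, α x 0 ^ 2) + ∫ x in (0:ℝ)..L, β x 0 ^ 2 :=
    integral_add Iα0 Iβ0
  have hIα0n : (0:ℝ) ≤ ∫ y in (0:ℝ)..L, α y 0 ^ 2 :=
    integral_nonneg hL.le (fun y _ => sq_nonneg _)
  have hIβ0n : (0:ℝ) ≤ ∫ y in (0:ℝ)..L, β y 0 ^ 2 :=
    integral_nonneg hL.le (fun y _ => sq_nonneg _)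
  have hI0n : (0:ℝ) ≤ ∫ x in (0:ℝ)..L, (α x 0 ^ 2 + β x 0 ^ 2) := by
    rw [hsplit0]; linarith
  rcases le_or_gt t T with hcase | hcase
  · -- small time
    have ha := alpha_int hL h1 h2 hε hα pdeα hβ pdeβ hc hbl t ht
    have hb := beta_int hL h2 hε hβ pdeβ hbl t ht
    have hbound : (∫ x in (0:ℝ)..L, (α x t ^ 2 + β x t ^ 2))
        ≤ K * (∫ x in (0:ℝ)..L, (α x 0 ^ 2 + β x 0 ^ 2)) + (L * (r ^ 2 + 1)) * ε ^ 2 := by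
      rw [hsplitt, hsplit0, hKdef]
      have hq : (0:ℝ) ≤ r ^ 2 * (lam1 / lam2) := by positivity
      nlinarith [mul_nonneg hq hIα0n]
    have hexp : K ≤ K * Real.exp (ν * T) * Real.exp (-ν * t) := by
      rw [mul_assoc, ← Real.exp_add]
      have h6 : (0:ℝ) ≤ ν * T + -ν * t := by nlinarith
      nlinarith [Real.one_le_exp h6, hK.le]
    have h7 : K * (∫ x in (0:ℝ)..L, (α x 0 ^ 2 + β x 0 ^ 2))
        ≤ K * Real.exp (ν * T) * Real.exp (-ν * t)
          * (∫ x in (0:ℝ)..L, (α x 0 ^ 2 + β x 0 ^ 2)) :=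
      mul_le_mul_of_nonneg_right hexp hI0n
    have h8 : (L * (r ^ 2 + 1)) * ε ^ 2 ≤ (L * (r ^ 2 + 1) + 1) * ε ^ 2 := by
      nlinarith [sq_nonneg ε]
    calc (∫ x in (0:ℝ)..L, (α x t ^ 2 + β x t ^ 2))
        ≤ K * (∫ x in (0:ℝ)..L, (α x 0 ^ 2 + β x 0 ^ 2)) + (L * (r ^ 2 + 1)) * ε ^ 2 := hbound
      _ ≤ K * Real.exp (ν * T) * Real.exp (-ν * t)
            * (∫ x in (0:ℝ)..L, (α x 0 ^ 2 + β x 0 ^ 2)) + (L * (r ^ 2 + 1) + 1) * ε ^ 2 := by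
          linarith
  · -- large time
    have hlt := large_time hL h1 h2 hε hα pdeα hβ pdeβ hc hbl t hcase.le
    have hpos : (0:ℝ) ≤ K * Real.exp (ν * T) * Real.exp (-ν * t)
        * (∫ x in (0:ℝ)..L, (α x 0 ^ 2 + β x 0 ^ 2)) := by
      apply mul_nonneg (by positivity) hI0n
    have h9 : L * ((r ^ 2 + 1) * ε ^ 2) ≤ (L * (r ^ 2 + 1) + 1) * ε ^ 2 := by
      nlinarith [sq_nonneg ε]
    linarith
end

section
/- Suppose K^w, K^v ∈ C¹(𝒯) solve the kernel equations, and let (w̃, ṽ) be a C¹ solution of the plant with the backstepping control U(t) = −κ w̃(L,t) + ∫₀^L K^w(L,ξ) w̃(ξ,t) dξ + ∫₀^L K^v(L,ξ) ṽ(ξ,t) dξ. Define the backstepping transformation α(x,t) = w̃(x,t) and β(x,t) = ṽ(x,t) − ∫₀^x K^w(x,ξ) w̃(ξ,t) dξ − ∫₀^x K^v(x,ξ) ṽ(ξ,t) dξ. Then (α, β) is a classical solution of the target system: ∂_t α + λ₁ ∂_x α = 0, ∂_t β − λ₂ ∂_x β = 0 on (0,L)×(0,∞), with α(0,t) = −r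 β(0,t) and β(L,t) = 0 for all t ≥ 0. -/
open Set Real MeasureTheory Filter Topology Metric
open scoped Interval

noncomputable section

def triSet (L : ℝ) : Set (ℝ × ℝ) := {p : ℝ × ℝ | 0 ≤ p.2 ∧ p.2 ≤ p.1 ∧ p.1 ≤ L}

lemma convex_triSet (L : ℝ) : Convex ℝ (triSet L) := by
  intro p hp q hq a b ha hb hab
  obtain ⟨h1, h2, h3⟩ := hp
  obtain ⟨k1, k2, k3⟩ := hq
  refine ⟨?_, ?_, ?_⟩ <;> simp only [Prod.fst_add, Prod.snd_add, Prod.smul_fst, Prod.smul_snd,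
    smul_eq_mul]
  · exact add_nonneg (mul_nonneg ha h1) (mul_nonneg hb k1)
  · exact add_le_add (mul_le_mul_of_nonneg_left h2 ha) (mul_le_mul_of_nonneg_left k2 hb)
  · calc a * p.1 + b * q.1 ≤ a * L + b * L :=
        add_le_add (mul_le_mul_of_nonneg_left h3 ha) (mul_le_mul_of_nonneg_left k3 hb)
    _ = L := by rw [← add_mul, hab, one_mul]

lemma triSet_mem_nhds {L a b : ℝ} (hb : 0 < b) (hba : b < a) (haL : a < L) :
    triSet L ∈ 𝓝 (a, b) := by
  have hopen : IsOpen {p : ℝ × ℝ | 0 < p.2 ∧ p.2 < p.1 ∧ p.1 < L} := by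
    refine IsOpen.inter ?_ (IsOpen.inter ?_ ?_)
    · exact isOpen_lt continuous_const continuous_snd
    · exact isOpen_lt continuous_snd continuous_fst
    · exact isOpen_lt continuous_fst continuous_const
  refine Filter.mem_of_superset (hopen.mem_nhds ⟨hb, hba, haL⟩) ?_
  rintro ⟨x, y⟩ ⟨u1, u2, u3⟩
  exact ⟨u1.le, u2.le, u3.le⟩

lemma uniqueDiffOn_triSet {L : ℝ} (hL : 0 < L) : UniqueDiffOn ℝ (triSet L) := by
  refine uniqueDiffOn_convex (convex_triSet L) ?_
  refine ⟨(2*L/3, L/3), ?_⟩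
  have h1 : 0 < L/3 := by linarith
  have h2 : L/3 < 2*L/3 := by linarith
  have h3 : 2*L/3 < L := by linarith
  exact mem_interior_iff_mem_nhds.2 (triSet_mem_nhds h1 h2 h3)

lemma isCompact_triSet (L : ℝ) : IsCompact (triSet L) := by
  have hclosed : IsClosed (triSet L) := by
    refine IsClosed.inter ?_ (IsClosed.inter ?_ ?_)
    · exact isClosed_le continuous_const continuous_snd
    · exact isClosed_le continuous_snd continuous_fst
    · exact isClosed_le continuous_fst continuous_const
  refine IsCompact.of_isClosed_subset (isCompact_Icc (a := ((0:ℝ),(0:ℝ))) (b := (L, L))) hclosed ?_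
  rintro ⟨x, y⟩ ⟨u1, u2, u3⟩
  exact ⟨⟨le_trans u1 u2, u1⟩, ⟨u3, le_trans u2 u3⟩⟩

def kext (K : ℝ → ℝ → ℝ) (x ξ : ℝ) : ℝ :=
  if ξ ≤ x then K x ξ else 2 * K ((x+ξ)/2) ((x+ξ)/2) - K ξ x

def pP (L : ℝ) (K : ℝ → ℝ → ℝ) (p : ℝ × ℝ) : ℝ × ℝ →L[ℝ] ℝ :=
  fderivWithin ℝ (fun q : ℝ × ℝ => K q.1 q.2) (triSet L) p

def pDx (L : ℝ) (K : ℝ → ℝ → ℝ) (a b : ℝ) : ℝ :=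
  if b ≤ a then pP L K (a,b) (1,0)
  else pP L K ((a+b)/2,(a+b)/2) (1,1) - pP L K (b,a) (0,1)

lemma line_hasDerivAt {f : ℝ × ℝ → ℝ} {s : Set (ℝ × ℝ)} {φ : ℝ × ℝ →L[ℝ] ℝ}
    (γ : ℝ → ℝ × ℝ) {γ' : ℝ × ℝ} {a : ℝ}
    (hf : HasFDerivWithinAt f φ s (γ a)) (hγ : HasDerivAt γ γ' a)
    (hmem : γ ⁻¹' s ∈ 𝓝 a) :
    HasDerivAt (fun z => f (γ z)) (φ γ') a := by
  have h1 : HasDerivWithinAt γ γ' (γ ⁻¹' s) a := hγ.hasDerivWithinAt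
  have h2 := hf.comp_hasDerivWithinAt a h1 (Set.mapsTo_preimage γ s)
  exact h2.hasDerivAt hmem

lemma line_hasDerivWithinAt {f : ℝ × ℝ → ℝ} {s : Set (ℝ × ℝ)} {φ : ℝ × ℝ →L[ℝ] ℝ}
    (γ : ℝ → ℝ × ℝ) {γ' : ℝ × ℝ} {a : ℝ} {s' : Set ℝ}
    (hf : HasFDerivWithinAt f φ s (γ a)) (hγ : HasDerivAt γ γ' a)
    (hmap : Set.MapsTo γ s' s) :
    HasDerivWithinAt (fun z => f (γ z)) (φ γ') s' a :=
  hf.comp_hasDerivWithinAt a hγ.hasDerivWithinAt hmap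

lemma pP_smul_half {L : ℝ} (K : ℝ → ℝ → ℝ) (p : ℝ × ℝ) :
    2 * pP L K p ((1:ℝ)/2, (1:ℝ)/2) = pP L K p (1,1) := by
  have h11 : ((1:ℝ)/2, (1:ℝ)/2) = ((1:ℝ)/2) • ((1:ℝ),(1:ℝ)) := by
    simp [Prod.smul_def]
  rw [h11, ContinuousLinearMap.map_smul, smul_eq_mul]
  ring

section KernelPkg
variable {L : ℝ} {K : ℝ → ℝ → ℝ}
variable (hL : 0 < L)
variable (hK : ContDiffOn ℝ 1 (fun p : ℝ × ℝ => K p.1 p.2) (triSet L))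

include hK

lemma pP_fderivWithin {p : ℝ × ℝ} (hp : p ∈ triSet L) :
    HasFDerivWithinAt (fun q : ℝ × ℝ => K q.1 q.2) (pP L K p) (triSet L) p :=
  ((hK.differentiableOn one_ne_zero) p hp).hasFDerivWithinAt

lemma K_deriv_x {a b : ℝ} (hb : 0 ≤ b) (hba : b < a) (haL : a < L) :
    HasDerivAt (fun z => K z b) (pP L K (a,b) (1,0)) a := by
  have hp : (a, b) ∈ triSet L := ⟨hb, hba.le, haL.le⟩
  refine line_hasDerivAt (fun z : ℝ => (z, b)) (pP_fderivWithin hK hp)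
    ((hasDerivAt_id a).prodMk (hasDerivAt_const a b)) ?_
  refine Filter.mem_of_superset (Ioo_mem_nhds hba haL) ?_
  intro z hz
  exact ⟨hb, le_of_lt hz.1, le_of_lt hz.2⟩

lemma K_deriv_xi {a b : ℝ} (hb : 0 < b) (hba : b < a) (haL : a ≤ L) :
    HasDerivAt (fun s => K a s) (pP L K (a,b) (0,1)) b := by
  have hp : (a, b) ∈ triSet L := ⟨hb.le, hba.le, haL⟩
  refine line_hasDerivAt (fun s : ℝ => (a, s)) (pP_fderivWithin hK hp)
    ((hasDerivAt_const b a).prodMk (hasDerivAt_id b)) ?_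
  refine Filter.mem_of_superset (Ioo_mem_nhds hb hba) ?_
  intro s hs
  exact ⟨hs.1.le, hs.2.le, haL⟩

lemma kext_deriv_x_diag {a : ℝ} (ha0 : 0 < a) (haL : a < L) :
    HasDerivAt (fun z => kext K z a) (pP L K (a,a) (1,0)) a := by
  have hmem : (a, a) ∈ triSet L := ⟨ha0.le, le_rfl, haL.le⟩
  have hIci : HasDerivWithinAt (fun z => kext K z a) (pP L K (a,a) (1,0)) (Ici a) a := by
    have base : HasDerivWithinAt (fun z => K z a) (pP L K (a,a) (1,0)) (Icc a L) a := by
      refine line_hasDerivWithinAt (fun z : ℝ => (z, a)) (pP_fderivWithin hK hmem)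
        ((hasDerivAt_id a).prodMk (hasDerivAt_const a a)) ?_
      intro z hz
      exact ⟨ha0.le, hz.1, hz.2⟩
    have base' : HasDerivWithinAt (fun z => K z a) (pP L K (a,a) (1,0)) (Ici a) a := by
      refine base.mono_of_mem_nhdsWithin ?_
      rw [← Ici_inter_Iic]
      exact Filter.inter_mem self_mem_nhdsWithin
        (mem_nhdsWithin_of_mem_nhds (Iic_mem_nhds haL))
    refine base'.congr (fun z hz => ?_) ?_
    · rw [kext, if_pos (mem_Ici.mp hz)]
    · rw [kext, if_pos le_rfl]
  have hIic : HasDerivWithinAt (fun z => kext K z a) (pP L K (a,a) (1,0)) (Iic a) a := by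
    have hd : HasDerivWithinAt (fun z => K ((z+a)/2) ((z+a)/2))
        (pP L K (a,a) ((1:ℝ)/2, (1:ℝ)/2)) (Icc 0 a) a := by
      have hγ : HasDerivAt (fun z : ℝ => ((z+a)/2, (z+a)/2)) ((1:ℝ)/2, (1:ℝ)/2) a := by
        have h : HasDerivAt (fun z : ℝ => (z+a)/2) ((1:ℝ)/2) a := by
          simpa using ((hasDerivAt_id a).add_const a).div_const 2
        exact h.prodMk h
      have hmid : ((a+a)/2 : ℝ) = a := by ring
      refine line_hasDerivWithinAt (f := fun q : ℝ × ℝ => K q.1 q.2) (s := triSet L)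
        (fun z : ℝ => ((z+a)/2, (z+a)/2)) ?_ hγ ?_
      · show HasFDerivWithinAt _ _ _ (((a+a)/2, (a+a)/2) : ℝ × ℝ)
        rw [hmid]
        exact pP_fderivWithin hK hmem
      · intro z hz
        simp only [Set.mem_Icc] at hz
        refine ⟨?_, le_rfl, ?_⟩
        · show (0:ℝ) ≤ (z+a)/2; linarith [hz.1]
        · show (z+a)/2 ≤ L; linarith [hz.2]
    have hd2 : HasDerivWithinAt (fun z => K a z) (pP L K (a,a) (0,1)) (Icc 0 a) a := by
      refine line_hasDerivWithinAt (fun z : ℝ => (a, z)) (pP_fderivWithin hK hmem)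
        ((hasDerivAt_const a a).prodMk (hasDerivAt_id a)) ?_
      intro z hz
      exact ⟨hz.1, hz.2, haL.le⟩
    have comb : HasDerivWithinAt (fun z => 2 * K ((z+a)/2) ((z+a)/2) - K a z)
        (pP L K (a,a) (1,0)) (Icc 0 a) a := by
      have h := (hd.const_mul 2).sub hd2
      have heq : 2 * pP L K (a,a) ((1:ℝ)/2, (1:ℝ)/2) - pP L K (a,a) (0,1)
          = pP L K (a,a) (1,0) := by
        rw [pP_smul_half]
        have h2 : ((1:ℝ),(1:ℝ)) = ((1:ℝ),(0:ℝ)) + ((0:ℝ),(1:ℝ)) := by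
          simp [Prod.ext_iff]
        rw [h2, ContinuousLinearMap.map_add]
        ring
      rwa [heq] at h
    have comb' : HasDerivWithinAt (fun z => 2 * K ((z+a)/2) ((z+a)/2) - K a z)
        (pP L K (a,a) (1,0)) (Iic a) a := by
      refine comb.mono_of_mem_nhdsWithin ?_
      have h2 : Icc (0:ℝ) a = Iic a ∩ Ici 0 := by
        rw [Set.inter_comm, Ici_inter_Iic]
      rw [h2]
      exact Filter.inter_mem self_mem_nhdsWithin
        (mem_nhdsWithin_of_mem_nhds (Ici_mem_nhds ha0))
    refine comb'.congr (fun z hz => ?_) ?_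
    · rcases eq_or_lt_of_le (mem_Iic.mp hz) with rfl | hlt
      · have hmid : ((z+z)/2 : ℝ) = z := by ring
        rw [kext, if_pos le_rfl, hmid]
        ring
      · rw [kext, if_neg (not_le.2 hlt)]
    · have hmid : ((a+a)/2 : ℝ) = a := by ring
      rw [kext, if_pos le_rfl, hmid]
      ring
  have h := hIic.union hIci
  rw [Iic_union_Ici] at h
  exact h.hasDerivAt (by simp)

lemma kext_deriv_x {a b : ℝ} (ha0 : 0 < a) (haL : a < L) (hb0 : 0 < b) (hbL : b < L) :
    HasDerivAt (fun z => kext K z b) (pDx L K a b) a := by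
  rcases lt_trichotomy b a with hba | heq | hab
  · have h1 : HasDerivAt (fun z => K z b) (pP L K (a,b) (1,0)) a :=
      K_deriv_x hK hb0.le hba haL
    have h2 : (fun z => kext K z b) =ᶠ[𝓝 a] fun z => K z b := by
      filter_upwards [Ioi_mem_nhds hba] with z hz
      rw [kext, if_pos (le_of_lt hz)]
    rw [pDx, if_pos hba.le]
    exact h1.congr_of_eventuallyEq h2
  · subst heq
    rw [pDx, if_pos le_rfl]
    exact kext_deriv_x_diag hK hb0 hbL
  · rw [pDx, if_neg (not_le.2 hab)]
    have hmid0 : (0:ℝ) < (a+b)/2 := by linarith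
    have hmidL : (a+b)/2 < L := by linarith
    have hd : HasDerivAt (fun z => K ((z+b)/2) ((z+b)/2))
        (pP L K ((a+b)/2,(a+b)/2) ((1:ℝ)/2,(1:ℝ)/2)) a := by
      have hγ : HasDerivAt (fun z : ℝ => ((z+b)/2, (z+b)/2)) ((1:ℝ)/2, (1:ℝ)/2) a := by
        have h : HasDerivAt (fun z : ℝ => (z+b)/2) ((1:ℝ)/2) a := by
          simpa using ((hasDerivAt_id a).add_const b).div_const 2
        exact h.prodMk h
      refine line_hasDerivAt (f := fun q : ℝ × ℝ => K q.1 q.2) (s := triSet L)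
        (fun z : ℝ => ((z+b)/2, (z+b)/2)) ?_ hγ ?_
      · show HasFDerivWithinAt _ _ _ (((a+b)/2, (a+b)/2) : ℝ × ℝ)
        exact pP_fderivWithin hK ⟨hmid0.le, le_rfl, hmidL.le⟩
      refine Filter.mem_of_superset (Ioo_mem_nhds (show -b < a by linarith)
        (show a < 2*L - b by linarith)) ?_
      intro z hz
      refine ⟨?_, le_rfl, ?_⟩
      · show (0:ℝ) ≤ (z+b)/2; linarith [hz.1]
      · show (z+b)/2 ≤ L; linarith [hz.2]
    have hd2 : HasDerivAt (fun z => K b z) (pP L K (b,a) (0,1)) a := by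
      refine line_hasDerivAt (fun z : ℝ => (b, z))
        (pP_fderivWithin hK ⟨ha0.le, hab.le, hbL.le⟩)
        ((hasDerivAt_const a b).prodMk (hasDerivAt_id a)) ?_
      refine Filter.mem_of_superset (Ioo_mem_nhds ha0 hab) ?_
      intro z hz
      exact ⟨hz.1.le, hz.2.le, hbL.le⟩
    have comb := (hd.const_mul 2).sub hd2
    rw [pP_smul_half] at comb
    have h2 : (fun z => kext K z b) =ᶠ[𝓝 a] fun z => 2 * K ((z+b)/2) ((z+b)/2) - K b z := by
      filter_upwards [Iio_mem_nhds hab] with z hz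
      rw [kext, if_neg (not_le.2 hz)]
    exact comb.congr_of_eventuallyEq h2

end KernelPkg

section KernelCont
variable {L : ℝ} {K : ℝ → ℝ → ℝ}
variable (hK : ContDiffOn ℝ 1 (fun p : ℝ × ℝ => K p.1 p.2) (triSet L))
include hK

lemma kext_continuousAt {a : ℝ × ℝ} (h1 : a.1 ∈ Ioo 0 L) (h2 : a.2 ∈ Ioo 0 L) :
    ContinuousAt (fun p : ℝ × ℝ => kext K p.1 p.2) a := by
  set S : Set (ℝ × ℝ) := Ioo (0:ℝ) L ×ˢ Ioo (0:ℝ) L with hS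
  have hSopen : IsOpen S := isOpen_Ioo.prod isOpen_Ioo
  have haS : a ∈ S := ⟨h1, h2⟩
  set F : ℝ × ℝ → ℝ := fun p => K (max p.1 p.2) (min p.1 p.2) with hF
  set G : ℝ × ℝ → ℝ := fun p =>
    2 * K ((p.1+p.2)/2) ((p.1+p.2)/2) - K (max p.1 p.2) (min p.1 p.2) with hG
  have φc : Continuous (fun p : ℝ × ℝ => ((max p.1 p.2, min p.1 p.2) : ℝ × ℝ)) := by fun_prop
  have ψc : Continuous (fun p : ℝ × ℝ => (((p.1+p.2)/2, (p.1+p.2)/2) : ℝ × ℝ)) := by fun_prop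
  have hFc : ContinuousOn F S := by
    have hmap : Set.MapsTo (fun p : ℝ × ℝ => ((max p.1 p.2, min p.1 p.2) : ℝ × ℝ)) S (triSet L) := by
      rintro ⟨x, y⟩ ⟨hx, hy⟩
      exact ⟨le_min hx.1.le hy.1.le, min_le_max, max_le hx.2.le hy.2.le⟩
    simpa [Function.comp_def] using hK.continuousOn.comp φc.continuousOn hmap
  have hMc : ContinuousOn (fun p : ℝ × ℝ => K ((p.1+p.2)/2) ((p.1+p.2)/2)) S := by
    have hmap : Set.MapsTo (fun p : ℝ × ℝ => (((p.1+p.2)/2, (p.1+p.2)/2) : ℝ × ℝ)) S (triSet L) := by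
      rintro ⟨x, y⟩ ⟨hx, hy⟩
      refine ⟨?_, le_rfl, ?_⟩
      · show (0:ℝ) ≤ (x+y)/2
        linarith [hx.1, hy.1]
      · show (x+y)/2 ≤ L
        linarith [hx.2, hy.2]
    simpa [Function.comp_def] using hK.continuousOn.comp ψc.continuousOn hmap
  have hGc : ContinuousOn G S := ((continuousOn_const.mul hMc).sub hFc).congr
    (fun p _ => rfl)
  have hFa : ContinuousAt F a := hFc.continuousAt (hSopen.mem_nhds haS)
  have hGa : ContinuousAt G a := hGc.continuousAt (hSopen.mem_nhds haS)
  rcases lt_trichotomy a.2 a.1 with hlt | heq | hgt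
  · -- below diagonal: kext = K locally
    have hev : (fun p : ℝ × ℝ => kext K p.1 p.2) =ᶠ[𝓝 a] F := by
      have : IsOpen {p : ℝ × ℝ | p.2 < p.1} := isOpen_lt continuous_snd continuous_fst
      filter_upwards [this.mem_nhds hlt] with p hp
      rw [kext, if_pos (le_of_lt hp)]
      simp [hF, max_eq_left (le_of_lt hp), min_eq_right (le_of_lt hp)]
    exact hFa.congr hev.symm
  · -- diagonal: squeeze
    have hmid : ((a.1 + a.2)/2 : ℝ) = a.1 := by rw [← heq]; ring
    have hFa' : F a = K a.1 a.2 := by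
      simp only [hF, ← heq, max_self, min_self]
    have hFGa : F a = G a := by
      simp only [hF, hG, hmid, ← heq, max_self, min_self]
      ring
    have hka : kext K a.1 a.2 = F a := by
      rw [kext, if_pos heq.le, hFa']
    have hbdd : ∀ p : ℝ × ℝ,
        ‖kext K p.1 p.2 - kext K a.1 a.2‖ ≤ |F p - F a| + |G p - G a| := by
      intro p
      rw [Real.norm_eq_abs]
      by_cases hp : p.2 ≤ p.1
      · have h1 : kext K p.1 p.2 = F p := by
          rw [kext, if_pos hp]
          simp [hF, max_eq_left hp, min_eq_right hp]
        rw [h1, hka]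
        exact le_add_of_le_of_nonneg le_rfl (abs_nonneg _)
      · have h1 : kext K p.1 p.2 = G p := by
          push_neg at hp
          rw [kext, if_neg (not_le.2 hp)]
          simp [hG, max_eq_right hp.le, min_eq_left hp.le]
        rw [h1, hka, hFGa]
        exact le_add_of_nonneg_of_le (abs_nonneg _) le_rfl
    have hb : Tendsto (fun p : ℝ × ℝ => |F p - F a| + |G p - G a|) (𝓝 a) (𝓝 0) := by
      have hc : ContinuousAt (fun p : ℝ × ℝ => |F p - F a| + |G p - G a|) a :=
        ((hFa.sub continuousAt_const).abs.add ((hGa.sub continuousAt_const).abs))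
      simpa using hc.tendsto
    have hsq : Tendsto (fun p : ℝ × ℝ => kext K p.1 p.2 - kext K a.1 a.2) (𝓝 a) (𝓝 0) :=
      squeeze_zero_norm hbdd hb
    have : Tendsto (fun p : ℝ × ℝ => kext K p.1 p.2) (𝓝 a) (𝓝 (kext K a.1 a.2)) := by
      have h2 := hsq.add_const (kext K a.1 a.2)
      simpa using h2
    exact this
  · -- above diagonal
    have hev : (fun p : ℝ × ℝ => kext K p.1 p.2) =ᶠ[𝓝 a] G := by
      have : IsOpen {p : ℝ × ℝ | p.1 < p.2} := isOpen_lt continuous_fst continuous_snd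
      filter_upwards [this.mem_nhds hgt] with p hp
      rw [kext, if_neg (not_le.2 hp)]
      simp [hG, max_eq_right (le_of_lt hp), min_eq_left (le_of_lt hp)]
    exact hGa.congr hev.symm
end KernelCont

def rectSet (L : ℝ) : Set (ℝ × ℝ) := Icc (0:ℝ) L ×ˢ Ici (0:ℝ)
def pQ (L : ℝ) (u : ℝ → ℝ → ℝ) (p : ℝ × ℝ) : ℝ × ℝ →L[ℝ] ℝ :=
  fderivWithin ℝ (fun q : ℝ × ℝ => u q.1 q.2) (rectSet L) p



section RectPkg
variable {L : ℝ} {u : ℝ → ℝ → ℝ}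
variable (hL : 0 < L)
variable (hu : ContDiffOn ℝ 1 (fun p : ℝ × ℝ => u p.1 p.2) (rectSet L))

lemma uniqueDiffOn_rectSet (hL : 0 < L) : UniqueDiffOn ℝ (rectSet L) :=
  (uniqueDiffOn_Icc hL).prod (uniqueDiffOn_Ici 0)

include hu

lemma pQ_fderivWithin {p : ℝ × ℝ} (hp : p ∈ rectSet L) :
    HasFDerivWithinAt (fun q : ℝ × ℝ => u q.1 q.2) (pQ L u p) (rectSet L) p :=
  ((hu.differentiableOn one_ne_zero) p hp).hasFDerivWithinAt

lemma u_deriv_t {ξ t : ℝ} (hx : ξ ∈ Icc 0 L) (ht : 0 < t) :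
    HasDerivAt (fun s => u ξ s) (pQ L u (ξ, t) (0, 1)) t := by
  refine line_hasDerivAt (fun s : ℝ => (ξ, s))
    (pQ_fderivWithin hu ⟨hx, le_of_lt ht⟩)
    ((hasDerivAt_const t ξ).prodMk (hasDerivAt_id t)) ?_
  refine Filter.mem_of_superset (Ioi_mem_nhds ht) ?_
  intro s hs
  exact ⟨hx, mem_Ici.2 (le_of_lt hs)⟩

lemma u_deriv_x {ξ t : ℝ} (hx : ξ ∈ Ioo 0 L) (ht : 0 ≤ t) :
    HasDerivAt (fun y => u y t) (pQ L u (ξ, t) (1, 0)) ξ := by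
  refine line_hasDerivAt (fun y : ℝ => (y, t))
    (pQ_fderivWithin hu ⟨⟨hx.1.le, hx.2.le⟩, ht⟩)
    ((hasDerivAt_id ξ).prodMk (hasDerivAt_const ξ t)) ?_
  refine Filter.mem_of_superset (Ioo_mem_nhds hx.1 hx.2) ?_
  intro y hy
  exact ⟨⟨hy.1.le, hy.2.le⟩, ht⟩

lemma pQ_cont (hL : 0 < L) : ContinuousOn (pQ L u) (rectSet L) :=
  hu.continuousOn_fderivWithin (uniqueDiffOn_rectSet hL) le_rfl

end RectPkg

lemma pP_cont {L : ℝ} {K : ℝ → ℝ → ℝ} (hL : 0 < L)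
    (hK : ContDiffOn ℝ 1 (fun p : ℝ × ℝ => K p.1 p.2) (triSet L)) :
    ContinuousOn (pP L K) (triSet L) :=
  hK.continuousOn_fderivWithin (uniqueDiffOn_triSet hL) le_rfl

section SliceCont
variable {L : ℝ} {K u : ℝ → ℝ → ℝ}
variable (hK : ContDiffOn ℝ 1 (fun p : ℝ × ℝ => K p.1 p.2) (triSet L))
variable (hu : ContDiffOn ℝ 1 (fun p : ℝ × ℝ => u p.1 p.2) (rectSet L))

lemma K_slice_cont_xi (hK : ContDiffOn ℝ 1 (fun p : ℝ × ℝ => K p.1 p.2) (triSet L))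
    {x₀ : ℝ} (hx0 : 0 ≤ x₀) (hxL : x₀ ≤ L) :
    ContinuousOn (fun ξ => K x₀ ξ) (Icc 0 x₀) := by
  have hmap : Set.MapsTo (fun ξ : ℝ => ((x₀, ξ) : ℝ × ℝ)) (Icc 0 x₀) (triSet L) :=
    fun ξ hξ => ⟨hξ.1, hξ.2, hxL⟩
  simpa [Function.comp_def] using
    hK.continuousOn.comp (Continuous.continuousOn (by fun_prop)) hmap

lemma pP_slice_cont_xi (hL : 0 < L)
    (hK : ContDiffOn ℝ 1 (fun p : ℝ × ℝ => K p.1 p.2) (triSet L))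
    {x₀ : ℝ} (hx0 : 0 ≤ x₀) (hxL : x₀ ≤ L) (v : ℝ × ℝ) :
    ContinuousOn (fun ξ => pP L K (x₀, ξ) v) (Icc 0 x₀) := by
  have hmap : Set.MapsTo (fun ξ : ℝ => ((x₀, ξ) : ℝ × ℝ)) (Icc 0 x₀) (triSet L) :=
    fun ξ hξ => ⟨hξ.1, hξ.2, hxL⟩
  have h1 : ContinuousOn (fun ξ => pP L K (x₀, ξ)) (Icc 0 x₀) := by
    simpa [Function.comp_def] using
      (pP_cont hL hK).comp (Continuous.continuousOn (by fun_prop)) hmap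
  exact h1.clm_apply continuousOn_const

lemma u_slice_cont_x (hu : ContDiffOn ℝ 1 (fun p : ℝ × ℝ => u p.1 p.2) (rectSet L))
    {t : ℝ} (ht : 0 ≤ t) :
    ContinuousOn (fun ξ => u ξ t) (Icc 0 L) := by
  have hmap : Set.MapsTo (fun ξ : ℝ => ((ξ, t) : ℝ × ℝ)) (Icc 0 L) (rectSet L) :=
    fun ξ hξ => ⟨hξ, ht⟩
  simpa [Function.comp_def] using
    hu.continuousOn.comp (Continuous.continuousOn (by fun_prop)) hmap

lemma pQ_slice_cont_x (hL : 0 < L)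
    (hu : ContDiffOn ℝ 1 (fun p : ℝ × ℝ => u p.1 p.2) (rectSet L))
    {t : ℝ} (ht : 0 ≤ t) (v : ℝ × ℝ) :
    ContinuousOn (fun ξ => pQ L u (ξ, t) v) (Icc 0 L) := by
  have hmap : Set.MapsTo (fun ξ : ℝ => ((ξ, t) : ℝ × ℝ)) (Icc 0 L) (rectSet L) :=
    fun ξ hξ => ⟨hξ, ht⟩
  have h1 : ContinuousOn (fun ξ => pQ L u (ξ, t)) (Icc 0 L) := by
    simpa [Function.comp_def] using
      (pQ_cont hu hL).comp (Continuous.continuousOn (by fun_prop)) hmap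
  exact h1.clm_apply continuousOn_const

lemma kext_slice_cont (hK : ContDiffOn ℝ 1 (fun p : ℝ × ℝ => K p.1 p.2) (triSet L))
    {y m : ℝ} (hy : y ∈ Ioo 0 L) (hm0 : 0 ≤ m) (hmL : m < L) :
    ContinuousOn (fun ξ => kext K y ξ) (Icc 0 m) := by
  intro ξ hξ
  rcases eq_or_lt_of_le hξ.1 with heq | hpos
  · -- ξ = 0
    subst heq
    have base : ContinuousWithinAt (fun ξ => K y ξ) (Icc 0 m) 0 := by
      have hmap : Set.MapsTo (fun ξ : ℝ => ((y, ξ) : ℝ × ℝ)) (Icc 0 (min y m)) (triSet L) :=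
        fun ξ hξ' => ⟨hξ'.1, le_trans hξ'.2 (min_le_left _ _), hy.2.le⟩
      have h1 : ContinuousOn (fun ξ => K y ξ) (Icc 0 (min y m)) := by
        simpa [Function.comp_def] using
          hK.continuousOn.comp (Continuous.continuousOn (by fun_prop)) hmap
      have h2 : ContinuousWithinAt (fun ξ => K y ξ) (Icc 0 (min y m)) 0 :=
        h1 0 ⟨le_rfl, le_min hy.1.le hm0⟩
      refine h2.mono_of_mem_nhdsWithin ?_
      have : Icc 0 (min y m) = Icc 0 m ∩ Iic y := by
        ext ξ; simp only [mem_Icc, mem_inter_iff, mem_Iic, le_min_iff]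
        constructor
        · rintro ⟨a, b, c⟩; exact ⟨⟨a, c⟩, b⟩
        · rintro ⟨⟨a, c⟩, b⟩; exact ⟨a, b, c⟩
      rw [this]
      exact Filter.inter_mem self_mem_nhdsWithin
        (mem_nhdsWithin_of_mem_nhds (Iic_mem_nhds hy.1))
    refine base.congr_of_eventuallyEq ?_ ?_
    · filter_upwards [mem_nhdsWithin_of_mem_nhds (Iio_mem_nhds hy.1)] with ξ hξ'
      rw [kext, if_pos (le_of_lt hξ')]
    · rw [kext, if_pos hy.1.le]
  · -- 0 < ξ
    have hca : ContinuousAt (fun ξ => kext K y ξ) ξ := by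
      have hj := kext_continuousAt hK (a := (y, ξ)) hy ⟨hpos, lt_of_le_of_lt hξ.2 hmL⟩
      exact hj.comp ((continuous_prodMk.2 ⟨continuous_const, continuous_id⟩).continuousAt)
    exact hca.continuousWithinAt

end SliceCont

section CoreLemmas
variable {L : ℝ} {K u : ℝ → ℝ → ℝ}

lemma norm_prod_01 : ‖((0:ℝ), (1:ℝ))‖ = 1 := by
  simp [Prod.norm_def]

lemma norm_prod_10 : ‖((1:ℝ), (0:ℝ))‖ = 1 := by
  simp [Prod.norm_def]

lemma norm_prod_11 : ‖((1:ℝ), (1:ℝ))‖ = 1 := by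
  simp [Prod.norm_def]

/-- t-derivative of the transform integral. -/
lemma transform_deriv_t (hL : 0 < L)
    (hK : ContDiffOn ℝ 1 (fun p : ℝ × ℝ => K p.1 p.2) (triSet L))
    (hu : ContDiffOn ℝ 1 (fun p : ℝ × ℝ => u p.1 p.2) (rectSet L))
    {x₀ t₀ : ℝ} (hx0 : 0 < x₀) (hxL : x₀ ≤ L) (ht0 : 0 < t₀) :
    HasDerivAt (fun s => ∫ ξ in (0:ℝ)..x₀, K x₀ ξ * u ξ s)
      (∫ ξ in (0:ℝ)..x₀, K x₀ ξ * (pQ L u (ξ, t₀) (0, 1))) t₀ := by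
  have hIoc : Ι (0:ℝ) x₀ = Ioc 0 x₀ := uIoc_of_le hx0.le
  have hIcc : uIcc (0:ℝ) x₀ = Icc 0 x₀ := uIcc_of_le hx0.le
  have hKc : ContinuousOn (fun ξ => K x₀ ξ) (Icc 0 x₀) := K_slice_cont_xi hK hx0.le hxL
  -- bound for |K x₀ ξ|
  obtain ⟨CK, hCK⟩ := (isCompact_Icc.image_of_continuousOn hKc).isBounded.exists_norm_le
  -- bound for ‖pQ‖ on the compact slab
  have hslab : IsCompact (Icc (0:ℝ) L ×ˢ Icc (t₀/2) (3*t₀/2)) :=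
    isCompact_Icc.prod isCompact_Icc
  have hsub : (Icc (0:ℝ) L ×ˢ Icc (t₀/2) (3*t₀/2)) ⊆ rectSet L := by
    rintro ⟨a, b⟩ ⟨ha, hb⟩
    exact ⟨ha, le_trans (by linarith) hb.1⟩
  have hpQc : ContinuousOn (fun p => ‖pQ L u p‖) (Icc (0:ℝ) L ×ˢ Icc (t₀/2) (3*t₀/2)) :=
    ((pQ_cont hu hL).mono hsub).norm
  obtain ⟨CQ, hCQ⟩ := (hslab.image_of_continuousOn hpQc).isBounded.exists_norm_le
  have key := (intervalIntegral.hasDerivAt_integral_of_dominated_loc_of_deriv_le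
    (μ := volume) (F := fun s ξ => K x₀ ξ * u ξ s)
    (F' := fun s ξ => K x₀ ξ * (pQ L u (ξ, s) (0, 1)))
    (x₀ := t₀) (a := 0) (b := x₀) (s := Metric.ball t₀ (t₀/2))
    (bound := fun _ => CK * CQ) (Metric.ball_mem_nhds _ (by positivity)) ?_ ?_ ?_ ?_ ?_ ?_).2
  · exact key
  · -- measurability of F s near t₀
    filter_upwards [Ioi_mem_nhds ht0] with s hs
    have hc : ContinuousOn (fun ξ => K x₀ ξ * u ξ s) (Icc 0 x₀) :=
      hKc.mul ((u_slice_cont_x hu (le_of_lt hs)).mono (fun ξ hξ => ⟨hξ.1, le_trans hξ.2 hxL⟩))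
    rw [hIoc]
    exact (hc.mono Ioc_subset_Icc_self).aestronglyMeasurable measurableSet_Ioc
  · -- integrability of F t₀
    apply ContinuousOn.intervalIntegrable
    rw [hIcc]
    exact hKc.mul ((u_slice_cont_x hu ht0.le).mono (fun ξ hξ => ⟨hξ.1, le_trans hξ.2 hxL⟩))
  · -- measurability of F' t₀
    rw [hIoc]
    have hc : ContinuousOn (fun ξ => K x₀ ξ * (pQ L u (ξ, t₀) (0, 1))) (Icc 0 x₀) :=
      hKc.mul ((pQ_slice_cont_x hL hu ht0.le ((0:ℝ),(1:ℝ))).mono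
        (fun ξ hξ => ⟨hξ.1, le_trans hξ.2 hxL⟩))
    exact (hc.mono Ioc_subset_Icc_self).aestronglyMeasurable measurableSet_Ioc
  · -- bound
    refine Filter.Eventually.of_forall (fun ξ hξ => fun s hs => ?_)
    rw [hIoc] at hξ
    have hsI : s ∈ Icc (t₀/2) (3*t₀/2) := by
      rw [Metric.mem_ball, Real.dist_eq] at hs
      constructor <;> [linarith [abs_lt.1 hs]; linarith [(abs_lt.1 hs).2] ]
    have h1 : |K x₀ ξ| ≤ CK := by
      have := hCK (K x₀ ξ) ⟨ξ, ⟨hξ.1.le, hξ.2⟩, rfl⟩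
      simpa [Real.norm_eq_abs] using this
    have h2 : ‖pQ L u (ξ, s) (0, 1)‖ ≤ CQ := by
      have hmem : ((ξ, s) : ℝ × ℝ) ∈ Icc (0:ℝ) L ×ˢ Icc (t₀/2) (3*t₀/2) :=
        ⟨⟨hξ.1.le, le_trans hξ.2 hxL⟩, hsI⟩
      have hb := hCQ (‖pQ L u (ξ, s)‖) ⟨(ξ, s), hmem, rfl⟩
      calc ‖pQ L u (ξ, s) (0, 1)‖ ≤ ‖pQ L u (ξ, s)‖ * ‖((0:ℝ),(1:ℝ))‖ :=
            ContinuousLinearMap.le_opNorm _ _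
        _ = ‖pQ L u (ξ, s)‖ := by rw [norm_prod_01, mul_one]
        _ ≤ CQ := by simpa [Real.norm_eq_abs, abs_of_nonneg (norm_nonneg _)] using hb
    calc ‖K x₀ ξ * (pQ L u (ξ, s) (0, 1))‖ = |K x₀ ξ| * ‖pQ L u (ξ, s) (0, 1)‖ := by
          rw [Real.norm_eq_abs, abs_mul]; rfl
      _ ≤ CK * CQ := mul_le_mul h1 h2 (norm_nonneg _) (le_trans (abs_nonneg _) h1)
  · exact intervalIntegrable_const
  · -- differentiability in s
    refine Filter.Eventually.of_forall (fun ξ hξ => fun s hs => ?_)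
    rw [hIoc] at hξ
    have hs0 : 0 < s := by
      rw [Metric.mem_ball, Real.dist_eq] at hs
      linarith [(abs_lt.1 hs).1]
    exact (u_deriv_t hu ⟨hξ.1.le, le_trans hξ.2 hxL⟩ hs0).const_mul (K x₀ ξ)

/-- integration by parts for the transform integral. -/
lemma transform_ibp (hL : 0 < L)
    (hK : ContDiffOn ℝ 1 (fun p : ℝ × ℝ => K p.1 p.2) (triSet L))
    (hu : ContDiffOn ℝ 1 (fun p : ℝ × ℝ => u p.1 p.2) (rectSet L))
    {x₀ t₀ : ℝ} (hx0 : 0 < x₀) (hxL : x₀ ≤ L) (ht0 : 0 < t₀) :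
    ∫ ξ in (0:ℝ)..x₀, K x₀ ξ * (pQ L u (ξ, t₀) (1, 0))
      = K x₀ x₀ * u x₀ t₀ - K x₀ 0 * u 0 t₀
        - ∫ ξ in (0:ℝ)..x₀, (pP L K (x₀, ξ) (0, 1)) * u ξ t₀ := by
  have hIcc : uIcc (0:ℝ) x₀ = Icc 0 x₀ := uIcc_of_le hx0.le
  have hmin : min (0:ℝ) x₀ = 0 := min_eq_left hx0.le
  have hmax : max (0:ℝ) x₀ = x₀ := max_eq_right hx0.le
  have hKc : ContinuousOn (fun ξ => K x₀ ξ) (Icc 0 x₀) := K_slice_cont_xi hK hx0.le hxL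
  have huc : ContinuousOn (fun ξ => u ξ t₀) (Icc 0 x₀) :=
    (u_slice_cont_x hu ht0.le).mono (fun ξ hξ => ⟨hξ.1, le_trans hξ.2 hxL⟩)
  have h := intervalIntegral.integral_mul_deriv_eq_deriv_mul_of_hasDeriv_right
    (a := 0) (b := x₀)
    (u := fun ξ => K x₀ ξ) (u' := fun ξ => pP L K (x₀, ξ) (0, 1))
    (v := fun ξ => u ξ t₀) (v' := fun ξ => pQ L u (ξ, t₀) (1, 0))
    (by rw [hIcc]; exact hKc) (by rw [hIcc]; exact huc) ?_ ?_ ?_ ?_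
  · exact h
  · intro ξ hξ
    rw [hmin, hmax] at hξ
    exact (K_deriv_xi hK hξ.1 hξ.2 hxL).hasDerivWithinAt
  · intro ξ hξ
    rw [hmin, hmax] at hξ
    exact (u_deriv_x hu ⟨hξ.1, lt_of_lt_of_le hξ.2 hxL⟩ ht0.le).hasDerivWithinAt
  · apply ContinuousOn.intervalIntegrable
    rw [hIcc]
    exact pP_slice_cont_xi hL hK hx0.le hxL _
  · apply ContinuousOn.intervalIntegrable
    rw [hIcc]
    exact (pQ_slice_cont_x hL hu ht0.le _).mono (fun ξ hξ => ⟨hξ.1, le_trans hξ.2 hxL⟩)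

/-- x-derivative of the transform integral (with moving endpoint). -/
lemma transform_deriv_x (hL : 0 < L)
    (hK : ContDiffOn ℝ 1 (fun p : ℝ × ℝ => K p.1 p.2) (triSet L))
    (hu : ContDiffOn ℝ 1 (fun p : ℝ × ℝ => u p.1 p.2) (rectSet L))
    {x₀ t₀ : ℝ} (hx : x₀ ∈ Ioo 0 L) (ht0 : 0 < t₀) :
    HasDerivAt (fun y => ∫ ξ in (0:ℝ)..y, K y ξ * u ξ t₀)
      (K x₀ x₀ * u x₀ t₀ + ∫ ξ in (0:ℝ)..x₀, pDx L K x₀ ξ * u ξ t₀) x₀ := by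
  obtain ⟨hx0, hxL⟩ := hx
  have hIoc : Ι (0:ℝ) x₀ = Ioc 0 x₀ := uIoc_of_le hx0.le
  have hIcc : uIcc (0:ℝ) x₀ = Icc 0 x₀ := uIcc_of_le hx0.le
  set m : ℝ := (x₀ + L)/2 with hm
  have hm0 : (0:ℝ) ≤ m := by rw [hm]; linarith
  have hmL : m < L := by rw [hm]; linarith
  have hx0m : x₀ < m := by rw [hm]; linarith
  have huc : ContinuousOn (fun ξ => u ξ t₀) (Icc 0 L) := u_slice_cont_x hu ht0.le
  obtain ⟨CU, hCU⟩ := (isCompact_Icc.image_of_continuousOn huc).isBounded.exists_norm_le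
  obtain ⟨CP, hCP⟩ :=
    (((isCompact_triSet L).image_of_continuousOn (pP_cont hL hK).norm)).isBounded.exists_norm_le
  have hCP0 : 0 ≤ CP := by
    have h00 : ((0:ℝ), (0:ℝ)) ∈ triSet L := ⟨le_rfl, le_rfl, hL.le⟩
    have := hCP (‖pP L K (0,0)‖) ⟨(0,0), h00, rfl⟩
    simp only [norm_norm] at this
    exact le_trans (norm_nonneg _) this
  have hpP_le : ∀ p ∈ triSet L, ‖pP L K p‖ ≤ CP := by
    intro p hp
    have := hCP (‖pP L K p‖) ⟨p, hp, rfl⟩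
    simpa [norm_norm] using this
  have hu_le : ∀ ξ ∈ Icc (0:ℝ) L, |u ξ t₀| ≤ CU := by
    intro ξ hξ
    have := hCU (u ξ t₀) ⟨ξ, hξ, rfl⟩
    simpa [Real.norm_eq_abs] using this
  -- slice continuity of the extended-kernel integrand
  have hslice : ∀ y ∈ Ioo (0:ℝ) L, ContinuousOn (fun ξ => kext K y ξ * u ξ t₀) (Icc 0 m) :=
    fun y hy => (kext_slice_cont hK hy hm0 hmL).mul
      (huc.mono (fun ξ hξ => ⟨hξ.1, le_trans hξ.2 hmL.le⟩))
  -- Part A: fixed-interval derivative in the kernel slot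
  set ε : ℝ := min x₀ (L - x₀) / 2 with hε
  have hεpos : 0 < ε := by
    have h1 : (0:ℝ) < min x₀ (L - x₀) := lt_min hx0 (by linarith)
    rw [hε]; linarith
  have hball : ∀ z ∈ Metric.ball x₀ ε, z ∈ Ioo (0:ℝ) L := by
    intro z hz
    rw [Metric.mem_ball, Real.dist_eq] at hz
    have h1 := abs_lt.1 hz
    have h2 : ε ≤ x₀ / 2 := by
      rw [hε]; have := min_le_left x₀ (L - x₀); linarith
    have h3 : ε ≤ (L - x₀) / 2 := by
      rw [hε]; have := min_le_right x₀ (L - x₀); linarith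
    constructor <;> [linarith [h1.1]; linarith [h1.2] ]
  have hA : HasDerivAt (fun z => ∫ ξ in (0:ℝ)..x₀, kext K z ξ * u ξ t₀)
      (∫ ξ in (0:ℝ)..x₀, pDx L K x₀ ξ * u ξ t₀) x₀ := by
    have hIccm : Icc (0:ℝ) x₀ ⊆ Icc 0 m := Icc_subset_Icc le_rfl hx0m.le
    refine (intervalIntegral.hasDerivAt_integral_of_dominated_loc_of_deriv_le (μ := volume)
      (F := fun z ξ => kext K z ξ * u ξ t₀) (F' := fun z ξ => pDx L K z ξ * u ξ t₀)
      (x₀ := x₀) (a := 0) (b := x₀) (s := Metric.ball x₀ ε)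
      (bound := fun _ => (CP + CP) * CU) (Metric.ball_mem_nhds x₀ hεpos) ?_ ?_ ?_ ?_ ?_ ?_).2
    · filter_upwards [Metric.ball_mem_nhds x₀ hεpos] with z hz
      have hzI := hball z hz
      rw [hIoc]
      exact (((hslice z hzI).mono hIccm).mono Ioc_subset_Icc_self).aestronglyMeasurable
        measurableSet_Ioc
    · apply ContinuousOn.intervalIntegrable
      rw [hIcc]
      exact ((hslice x₀ ⟨hx0, hxL⟩).mono hIccm)
    · rw [hIoc]
      have hc : ContinuousOn (fun ξ => pP L K (x₀, ξ) (1,0) * u ξ t₀) (Icc 0 x₀) :=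
        (pP_slice_cont_xi hL hK hx0.le hxL.le _).mul
          (huc.mono (fun ξ hξ => ⟨hξ.1, le_trans hξ.2 hxL.le⟩))
      refine ((hc.mono Ioc_subset_Icc_self).aestronglyMeasurable measurableSet_Ioc).congr ?_
      refine (ae_restrict_iff' measurableSet_Ioc).2 (Filter.Eventually.of_forall ?_)
      intro ξ hξ
      have hval : pDx L K x₀ ξ = pP L K (x₀, ξ) (1,0) := by
        rw [pDx, if_pos hξ.2]
      simp only [hval]
    · refine Filter.Eventually.of_forall (fun ξ hξ => fun z hz => ?_)
      rw [hIoc] at hξ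
      have hzI := hball z hz
      have hD : |pDx L K z ξ| ≤ CP + CP := by
        by_cases hc : ξ ≤ z
        · rw [pDx, if_pos hc]
          have hmem : ((z, ξ) : ℝ × ℝ) ∈ triSet L := ⟨hξ.1.le, hc, hzI.2.le⟩
          have hstep : ‖pP L K (z,ξ) (1,0)‖ ≤ CP := by
            calc ‖pP L K (z,ξ) (1,0)‖ ≤ ‖pP L K (z,ξ)‖ * ‖((1:ℝ),(0:ℝ))‖ :=
                  ContinuousLinearMap.le_opNorm _ _
              _ = ‖pP L K (z,ξ)‖ := by rw [norm_prod_10, mul_one]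
              _ ≤ CP := hpP_le _ hmem
          rw [Real.norm_eq_abs] at hstep
          linarith
        · push_neg at hc
          rw [pDx, if_neg (not_le.2 hc)]
          have hmem1 : (((z+ξ)/2, (z+ξ)/2) : ℝ × ℝ) ∈ triSet L := by
            refine ⟨?_, le_rfl, ?_⟩
            · show (0:ℝ) ≤ (z+ξ)/2; linarith [hzI.1, hξ.1]
            · show (z+ξ)/2 ≤ L
              linarith [hzI.2, lt_of_le_of_lt hξ.2 hxL]
          have hmem2 : ((ξ, z) : ℝ × ℝ) ∈ triSet L :=
            ⟨hzI.1.le, hc.le, le_trans hξ.2 hxL.le⟩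
          have h1 : |pP L K ((z+ξ)/2,(z+ξ)/2) (1,1)| ≤ CP := by
            rw [← Real.norm_eq_abs]
            calc ‖pP L K ((z+ξ)/2,(z+ξ)/2) (1,1)‖
                ≤ ‖pP L K ((z+ξ)/2,(z+ξ)/2)‖ * ‖((1:ℝ),(1:ℝ))‖ :=
                  ContinuousLinearMap.le_opNorm _ _
              _ = ‖pP L K ((z+ξ)/2,(z+ξ)/2)‖ := by rw [norm_prod_11, mul_one]
              _ ≤ CP := hpP_le _ hmem1
          have h2 : |pP L K (ξ,z) (0,1)| ≤ CP := by
            rw [← Real.norm_eq_abs]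
            calc ‖pP L K (ξ,z) (0,1)‖ ≤ ‖pP L K (ξ,z)‖ * ‖((0:ℝ),(1:ℝ))‖ :=
                  ContinuousLinearMap.le_opNorm _ _
              _ = ‖pP L K (ξ,z)‖ := by rw [norm_prod_01, mul_one]
              _ ≤ CP := hpP_le _ hmem2
          calc |pP L K ((z+ξ)/2,(z+ξ)/2) (1,1) - pP L K (ξ,z) (0,1)|
              ≤ |pP L K ((z+ξ)/2,(z+ξ)/2) (1,1)| + |pP L K (ξ,z) (0,1)| := abs_sub _ _
            _ ≤ CP + CP := add_le_add h1 h2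
      calc ‖pDx L K z ξ * u ξ t₀‖ = |pDx L K z ξ| * |u ξ t₀| := by
            rw [Real.norm_eq_abs, abs_mul]
        _ ≤ (CP + CP) * CU := by
            refine mul_le_mul hD (hu_le ξ ⟨hξ.1.le, le_trans hξ.2 hxL.le⟩) (abs_nonneg _) ?_
            linarith
    · exact intervalIntegrable_const
    · refine Filter.Eventually.of_forall (fun ξ hξ => fun z hz => ?_)
      rw [hIoc] at hξ
      have hzI := hball z hz
      exact (kext_deriv_x hK hzI.1 hzI.2 hξ.1 (lt_of_le_of_lt hξ.2 hxL)).mul_const (u ξ t₀)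
  -- Part B: the moving-endpoint piece
  set c : ℝ := K x₀ x₀ * u x₀ t₀ with hc
  set ℓ : ℝ × ℝ →L[ℝ] ℝ := c • (ContinuousLinearMap.fst ℝ ℝ ℝ) with hℓ
  have hB : HasFDerivAt (fun p : ℝ × ℝ => ∫ ξ in x₀..p.1, kext K p.2 ξ * u ξ t₀)
      ℓ ((x₀, x₀) : ℝ × ℝ) := by
    rw [hasFDerivAt_iff_isLittleO_nhds_zero, Asymptotics.isLittleO_iff]
    intro c' hc'
    have hgc : ContinuousAt (fun q : ℝ × ℝ => kext K q.1 q.2 * u q.2 t₀) ((x₀, x₀)) := by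
      have h1 : ContinuousAt (fun p : ℝ × ℝ => u p.1 p.2) ((x₀, t₀)) := by
        refine (hu.continuousOn.continuousAt ?_)
        exact prod_mem_nhds (Icc_mem_nhds hx0 hxL) (Ici_mem_nhds ht0)
      have h2 : ContinuousAt (fun q : ℝ × ℝ => u q.2 t₀) ((x₀, x₀)) := by
        have hcc : Continuous (fun q : ℝ × ℝ => ((q.2, t₀) : ℝ × ℝ)) := by fun_prop
        have := ContinuousAt.comp (g := fun p : ℝ × ℝ => u p.1 p.2)
          (f := fun q : ℝ × ℝ => ((q.2, t₀) : ℝ × ℝ)) (x := ((x₀, x₀) : ℝ × ℝ))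
          h1 hcc.continuousAt
        simpa [Function.comp_def] using this
      exact (kext_continuousAt hK ⟨hx0, hxL⟩ ⟨hx0, hxL⟩).mul h2
    rw [Metric.continuousAt_iff] at hgc
    obtain ⟨δ, hδpos, hδ⟩ := hgc c' hc'
    set ρ : ℝ := min (δ/2) (min (x₀/2) ((L - x₀)/2)) with hρ
    have hρpos : 0 < ρ := by
      rw [hρ]
      refine lt_min (by linarith) (lt_min (by linarith) (by linarith))
    have hρδ : ρ ≤ δ/2 := min_le_left _ _
    have hρx : ρ ≤ x₀/2 := le_trans (min_le_right _ _) (min_le_left _ _)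
    have hρL : ρ ≤ (L - x₀)/2 := le_trans (min_le_right _ _) (min_le_right _ _)
    filter_upwards [Metric.ball_mem_nhds (0 : ℝ × ℝ) hρpos] with h hh
    rw [mem_ball_zero_iff] at hh
    have hh1 : |h.1| ≤ ‖h‖ := by
      rw [← Real.norm_eq_abs]; exact norm_fst_le h
    have hh2 : |h.2| ≤ ‖h‖ := by
      rw [← Real.norm_eq_abs]; exact norm_snd_le h
    have hz0 : (0:ℝ) < x₀ + h.2 := by
      have := abs_lt.1 (lt_of_le_of_lt hh2 hh)
      linarith [this.1]
    have hzL : x₀ + h.2 < L := by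
      have := abs_lt.1 (lt_of_le_of_lt hh2 hh)
      linarith [this.2]
    have hy0 : (0:ℝ) ≤ x₀ + h.1 := by
      have := abs_lt.1 (lt_of_le_of_lt hh1 hh)
      linarith [this.1]
    have hym : x₀ + h.1 ≤ m := by
      have := abs_lt.1 (lt_of_le_of_lt hh1 hh)
      rw [hm]; linarith [this.2]
    have hsub2 : uIcc x₀ (x₀ + h.1) ⊆ Icc 0 m :=
      uIcc_subset_Icc ⟨hx0.le, hx0m.le⟩ ⟨hy0, hym⟩
    have hint : IntervalIntegrable (fun ξ => kext K (x₀ + h.2) ξ * u ξ t₀) volume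
        x₀ (x₀ + h.1) :=
      (((hslice (x₀ + h.2) ⟨hz0, hzL⟩)).mono hsub2).intervalIntegrable
    have hkd : kext K x₀ x₀ = K x₀ x₀ := by rw [kext, if_pos le_rfl]
    simp only [Prod.fst_add, Prod.snd_add, intervalIntegral.integral_same, sub_zero]
    have hℓh : ℓ h = c * h.1 := by
      rw [hℓ]
      simp [ContinuousLinearMap.smul_apply, smul_eq_mul]
    rw [hℓh]
    have heq1 : c * h.1 = ∫ ξ in x₀..(x₀ + h.1), c := by
      rw [intervalIntegral.integral_const, smul_eq_mul]; ring
    rw [heq1, ← intervalIntegral.integral_sub hint intervalIntegrable_const]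
    refine le_trans (intervalIntegral.norm_integral_le_of_norm_le_const (C := c') ?_) ?_
    · intro ξ hξ
      have hdξ : |ξ - x₀| ≤ |h.1| := by
        rcases le_total (0:ℝ) h.1 with hd | hd
        · rw [uIoc_of_le (by linarith)] at hξ
          rw [abs_le]
          constructor <;> [linarith [hξ.1, abs_nonneg h.1]; linarith [hξ.2, le_abs_self h.1] ]
        · rw [uIoc_of_ge (by linarith)] at hξ
          rw [abs_le]
          constructor <;> [linarith [hξ.1, neg_abs_le h.1]; linarith [hξ.2, abs_nonneg h.1] ]
      have hq : dist (((x₀ + h.2, ξ)) : ℝ × ℝ) ((x₀, x₀)) < δ := by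
        rw [Prod.dist_eq]
        have d1 : dist (x₀ + h.2) x₀ < δ := by
          rw [Real.dist_eq]
          have : |x₀ + h.2 - x₀| = |h.2| := by ring_nf
          rw [this]
          linarith [lt_of_le_of_lt hh2 hh]
        have d2 : dist ξ x₀ < δ := by
          rw [Real.dist_eq]
          linarith [lt_of_le_of_lt (le_trans hdξ hh1) hh]
        exact max_lt d1 d2
      have := hδ hq
      rw [Real.dist_eq] at this
      simp only at this
      rw [hkd] at this
      rw [Real.norm_eq_abs]
      exact le_of_lt this
    · have hrw : |x₀ + h.1 - x₀| = |h.1| := by ring_nf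
      rw [hrw]
      exact mul_le_mul_of_nonneg_left hh1 hc'.le
  -- combine
  have hdiag : HasDerivAt (fun y : ℝ => ((y, y) : ℝ × ℝ)) ((1:ℝ), (1:ℝ)) x₀ :=
    (hasDerivAt_id x₀).prodMk (hasDerivAt_id x₀)
  have hBc := HasFDerivAt.comp_hasDerivAt (f := fun y : ℝ => ((y, y) : ℝ × ℝ)) x₀ hB hdiag
  have hl11 : ℓ ((1:ℝ), (1:ℝ)) = c := by
    rw [hℓ]
    simp [ContinuousLinearMap.smul_apply, smul_eq_mul]
  rw [hl11] at hBc
  have hsum := hA.add hBc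
  have hev : (fun y => ∫ ξ in (0:ℝ)..y, K y ξ * u ξ t₀) =ᶠ[𝓝 x₀]
      (fun y => (∫ ξ in (0:ℝ)..x₀, kext K y ξ * u ξ t₀)
        + ∫ ξ in x₀..y, kext K y ξ * u ξ t₀) := by
    filter_upwards [Ioo_mem_nhds hx0 hx0m] with y hy
    have hyI : y ∈ Ioo 0 L := ⟨hy.1, lt_trans hy.2 hmL⟩
    have hint1 : IntervalIntegrable (fun ξ => kext K y ξ * u ξ t₀) volume 0 x₀ :=
      (((hslice y hyI)).mono (by rw [uIcc_of_le hx0.le]; exact Icc_subset_Icc le_rfl hx0m.le)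
        ).intervalIntegrable
    have hint2 : IntervalIntegrable (fun ξ => kext K y ξ * u ξ t₀) volume x₀ y :=
      (((hslice y hyI)).mono
        (uIcc_subset_Icc ⟨hx0.le, hx0m.le⟩ ⟨hy.1.le, hy.2.le⟩)).intervalIntegrable
    rw [intervalIntegral.integral_add_adjacent_intervals hint1 hint2]
    refine intervalIntegral.integral_congr ?_
    intro ξ hξ
    rw [uIcc_of_le hy.1.le] at hξ
    have hval : kext K y ξ = K y ξ := by rw [kext, if_pos hξ.2]
    simp only [hval]
  have hfin := hsum.congr_of_eventuallyEq hev
  rwa [add_comm] at hfin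

end CoreLemmas

/-- the backstepping transformation
`α(x,t) = w̃(x,t)`,
`β(x,t) = ṽ(x,t) − ∫₀^x K^w(x,ξ) w̃(ξ,t) dξ − ∫₀^x K^v(x,ξ) ṽ(ξ,t) dξ`
maps the closed-loop plant (with exact kernels and the backstepping control) into
the target system `∂_t α + λ₁ ∂_x α = 0`, `∂_t β − λ₂ ∂_x β = 0`,
`α(0,t) = −r β(0,t)`, `β(L,t) = 0`. -/
theorem stmt_3 (L lam1 lam2 τ vs : ℝ)
    (hL : 0 < L) (h1 : 0 < lam1) (h2 : 0 < lam2) (hτ : 0 < τ) (hvs : 0 < vs)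
    -- the kernels, C¹ on the triangle 𝒯, solving the kernel equations
    (Kw Kv : ℝ → ℝ → ℝ)
    (hKwC1 : ContDiffOn ℝ 1 (fun p : ℝ × ℝ => Kw p.1 p.2)
      {p : ℝ × ℝ | 0 ≤ p.2 ∧ p.2 ≤ p.1 ∧ p.1 ≤ L})
    (hKvC1 : ContDiffOn ℝ 1 (fun p : ℝ × ℝ => Kv p.1 p.2)
      {p : ℝ × ℝ | 0 ≤ p.2 ∧ p.2 ≤ p.1 ∧ p.1 ≤ L})
    (hker1 : ∀ x ξ : ℝ, 0 ≤ ξ → ξ ≤ x → x ≤ L →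
      lam2 * deriv (fun y => Kw y ξ) x - lam1 * deriv (fun s => Kw x s) ξ
        = (-(1 / τ) * Real.exp (-ξ / (τ * vs))) * Kv x ξ)
    (hker2 : ∀ x ξ : ℝ, 0 ≤ ξ → ξ ≤ x → x ≤ L →
      deriv (fun y => Kv y ξ) x + deriv (fun s => Kv x s) ξ = 0)
    (hker3 : ∀ x ∈ Icc (0:ℝ) L,
      Kw x x = -(-(1 / τ) * Real.exp (-x / (τ * vs))) / (lam1 + lam2))
    (hker4 : ∀ x ∈ Icc (0:ℝ) L, Kv x 0 = -Kw x 0)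
    -- a C¹ solution (w̃, ṽ) of the plant with the backstepping control
    (w v : ℝ → ℝ → ℝ) (U : ℝ → ℝ)
    (hwC1 : ContDiffOn ℝ 1 (fun p : ℝ × ℝ => w p.1 p.2) (Icc 0 L ×ˢ Ici 0))
    (hvC1 : ContDiffOn ℝ 1 (fun p : ℝ × ℝ => v p.1 p.2) (Icc 0 L ×ˢ Ici 0))
    (hwpde : ∀ x ∈ Ioo (0:ℝ) L, ∀ t ∈ Ioi (0:ℝ),
      deriv (fun s => w x s) t + lam1 * deriv (fun y => w y t) x = 0)
    (hvpde : ∀ x ∈ Ioo (0:ℝ) L, ∀ t ∈ Ioi (0:ℝ),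
      deriv (fun s => v x s) t - lam2 * deriv (fun y => v y t) x
        = (-(1 / τ) * Real.exp (-x / (τ * vs))) * w x t)
    (hbc0 : ∀ t : ℝ, 0 ≤ t → w 0 t = -(lam2 / lam1) * v 0 t)
    (hbcL : ∀ t : ℝ, 0 ≤ t →
      v L t = Real.exp (-L / (τ * vs)) * w L t + U t)
    (hU : ∀ t : ℝ, 0 ≤ t →
      U t = -Real.exp (-L / (τ * vs)) * w L t
        + (∫ ξ in (0:ℝ)..L, Kw L ξ * w ξ t)
        + ∫ ξ in (0:ℝ)..L, Kv L ξ * v ξ t)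
    -- the backstepping transformation
    (α β : ℝ → ℝ → ℝ)
    (hαdef : ∀ x t : ℝ, α x t = w x t)
    (hβdef : ∀ x t : ℝ, β x t = v x t
      - (∫ ξ in (0:ℝ)..x, Kw x ξ * w ξ t)
      - ∫ ξ in (0:ℝ)..x, Kv x ξ * v ξ t) :
    (∀ x ∈ Ioo (0:ℝ) L, ∀ t ∈ Ioi (0:ℝ),
      deriv (fun s => α x s) t + lam1 * deriv (fun y => α y t) x = 0) ∧
    (∀ x ∈ Ioo (0:ℝ) L, ∀ t ∈ Ioi (0:ℝ),
      deriv (fun s => β x s) t - lam2 * deriv (fun y => β y t) x = 0) ∧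
    (∀ t : ℝ, 0 ≤ t → α 0 t = -(lam2 / lam1) * β 0 t) ∧
    (∀ t : ℝ, 0 ≤ t → β L t = 0) := by
  classical
  have hKw : ContDiffOn ℝ 1 (fun p : ℝ × ℝ => Kw p.1 p.2) (triSet L) := hKwC1
  have hKv : ContDiffOn ℝ 1 (fun p : ℝ × ℝ => Kv p.1 p.2) (triSet L) := hKvC1
  have hw : ContDiffOn ℝ 1 (fun p : ℝ × ℝ => w p.1 p.2) (rectSet L) := hwC1
  have hv : ContDiffOn ℝ 1 (fun p : ℝ × ℝ => v p.1 p.2) (rectSet L) := hvC1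
  set cf : ℝ → ℝ := fun ξ => -(1 / τ) * Real.exp (-ξ / (τ * vs)) with hcf
  have hcfc : Continuous cf := by
    rw [hcf]; fun_prop
  refine ⟨?_, ?_, ?_, ?_⟩
  · -- α transport equation
    intro x hx t ht
    have h1 : (fun s => α x s) = fun s => w x s := funext fun s => hαdef x s
    have h2 : (fun y => α y t) = fun y => w y t := funext fun y => hαdef y t
    rw [h1, h2]
    exact hwpde x hx t ht
  · -- β transport equation
    intro x hx t ht
    have htpos : (0:ℝ) < t := ht
    have hxI : x ∈ Icc (0:ℝ) L := ⟨hx.1.le, hx.2.le⟩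
    -- the ae-avoidance of the right endpoint
    have hne : ∀ᵐ ξ : ℝ ∂(volume : Measure ℝ), ξ ≠ x := by
      rw [MeasureTheory.ae_iff]
      have : {ξ : ℝ | ¬ ξ ≠ x} = {x} := by ext ξ; simp
      rw [this]
      exact Real.volume_singleton
    have hIoc : Ι (0:ℝ) x = Ioc 0 x := uIoc_of_le hx.1.le
    have hIcc : uIcc (0:ℝ) x = Icc 0 x := uIcc_of_le hx.1.le
    -- point derivatives
    have hv_t : HasDerivAt (fun s => v x s) (pQ L v (x, t) (0,1)) t := u_deriv_t hv hxI htpos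
    have hv_x : HasDerivAt (fun y => v y t) (pQ L v (x, t) (1,0)) x := u_deriv_x hv hx htpos.le
    have hw_t : HasDerivAt (fun s => w x s) (pQ L w (x, t) (0,1)) t := u_deriv_t hw hxI htpos
    have hw_x : HasDerivAt (fun y => w y t) (pQ L w (x, t) (1,0)) x := u_deriv_x hw hx htpos.le
    -- integral derivatives
    have hIw_t := transform_deriv_t hL hKw hw hx.1 hx.2.le htpos
    have hIv_t := transform_deriv_t hL hKv hv hx.1 hx.2.le htpos
    have hIw_x := transform_deriv_x hL hKw hw hx htpos
    have hIv_x := transform_deriv_x hL hKv hv hx htpos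
    -- derivative of β in t
    have hβt : HasDerivAt (fun s => β x s)
        (pQ L v (x, t) (0,1) - (∫ ξ in (0:ℝ)..x, Kw x ξ * (pQ L w (ξ, t) (0,1)))
          - ∫ ξ in (0:ℝ)..x, Kv x ξ * (pQ L v (ξ, t) (0,1))) t := by
      have heq : (fun s => β x s) = fun s => v x s - (∫ ξ in (0:ℝ)..x, Kw x ξ * w ξ s)
          - ∫ ξ in (0:ℝ)..x, Kv x ξ * v ξ s := funext fun s => hβdef x s
      rw [heq]
      exact (hv_t.sub hIw_t).sub hIv_t
    -- derivative of β in x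
    have hβx : HasDerivAt (fun y => β y t)
        (pQ L v (x, t) (1,0)
          - (Kw x x * w x t + ∫ ξ in (0:ℝ)..x, pDx L Kw x ξ * w ξ t)
          - (Kv x x * v x t + ∫ ξ in (0:ℝ)..x, pDx L Kv x ξ * v ξ t)) x := by
      have heq : (fun y => β y t) = fun y => v y t - (∫ ξ in (0:ℝ)..y, Kw y ξ * w ξ t)
          - ∫ ξ in (0:ℝ)..y, Kv y ξ * v ξ t := funext fun y => hβdef y t
      rw [heq]
      exact (hv_x.sub hIw_x).sub hIv_x
    rw [hβt.deriv, hβx.deriv]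
    -- integrability of the continuous integrands
    have hwc : ContinuousOn (fun ξ => w ξ t) (Icc 0 x) :=
      (u_slice_cont_x hw htpos.le).mono (Icc_subset_Icc le_rfl hx.2.le)
    have hvc : ContinuousOn (fun ξ => v ξ t) (Icc 0 x) :=
      (u_slice_cont_x hv htpos.le).mono (Icc_subset_Icc le_rfl hx.2.le)
    have hKvc : ContinuousOn (fun ξ => Kv x ξ) (Icc 0 x) := K_slice_cont_xi hKv hx.1.le hx.2.le
    have hJw_int : IntervalIntegrable (fun ξ => pP L Kw (x, ξ) (0,1) * w ξ t) volume 0 x := by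
      apply ContinuousOn.intervalIntegrable
      rw [hIcc]
      exact (pP_slice_cont_xi hL hKw hx.1.le hx.2.le _).mul hwc
    have hIc_int : IntervalIntegrable (fun ξ => Kv x ξ * (cf ξ * w ξ t)) volume 0 x := by
      apply ContinuousOn.intervalIntegrable
      rw [hIcc]
      exact hKvc.mul (hcfc.continuousOn.mul hwc)
    have hIvX_int : IntervalIntegrable (fun ξ => Kv x ξ * (pQ L v (ξ, t) (1,0))) volume 0 x := by
      apply ContinuousOn.intervalIntegrable
      rw [hIcc]
      exact hKvc.mul ((pQ_slice_cont_x hL hv htpos.le _).mono (Icc_subset_Icc le_rfl hx.2.le))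
    have hJv_int : IntervalIntegrable (fun ξ => pP L Kv (x, ξ) (0,1) * v ξ t) volume 0 x := by
      apply ContinuousOn.intervalIntegrable
      rw [hIcc]
      exact (pP_slice_cont_xi hL hKv hx.1.le hx.2.le _).mul hvc
    -- (a) t-integral of w-kernel via w-PDE
    have ha : (∫ ξ in (0:ℝ)..x, Kw x ξ * (pQ L w (ξ, t) (0,1)))
        = -lam1 * ∫ ξ in (0:ℝ)..x, Kw x ξ * (pQ L w (ξ, t) (1,0)) := by
      rw [← intervalIntegral.integral_const_mul]
      apply intervalIntegral.integral_congr_ae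
      filter_upwards [hne] with ξ hξne hξI
      rw [hIoc] at hξI
      have hξL : ξ < L := lt_of_le_of_lt (lt_of_le_of_ne hξI.2 hξne).le hx.2
      have hξoo : ξ ∈ Ioo (0:ℝ) L := ⟨hξI.1, hξL⟩
      have d1 : deriv (fun s => w ξ s) t = pQ L w (ξ, t) (0,1) :=
        (u_deriv_t hw ⟨hξI.1.le, hξL.le⟩ htpos).deriv
      have d2 : deriv (fun y => w y t) ξ = pQ L w (ξ, t) (1,0) :=
        (u_deriv_x hw hξoo htpos.le).deriv
      have hpde := hwpde ξ hξoo t ht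
      rw [d1, d2] at hpde
      have hval : pQ L w (ξ, t) (0,1) = -lam1 * (pQ L w (ξ, t) (1,0)) := by linarith
      rw [hval]; ring
    -- (b) IBP for w
    have hb := transform_ibp hL hKw hw hx.1 hx.2.le htpos
    -- (c) t-integral of v-kernel via v-PDE
    have hc : (∫ ξ in (0:ℝ)..x, Kv x ξ * (pQ L v (ξ, t) (0,1)))
        = lam2 * (∫ ξ in (0:ℝ)..x, Kv x ξ * (pQ L v (ξ, t) (1,0)))
          + ∫ ξ in (0:ℝ)..x, Kv x ξ * (cf ξ * w ξ t) := by
      rw [← intervalIntegral.integral_const_mul,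
        ← intervalIntegral.integral_add (hIvX_int.const_mul lam2) hIc_int]
      apply intervalIntegral.integral_congr_ae
      filter_upwards [hne] with ξ hξne hξI
      rw [hIoc] at hξI
      have hξL : ξ < L := lt_of_le_of_lt (lt_of_le_of_ne hξI.2 hξne).le hx.2
      have hξoo : ξ ∈ Ioo (0:ℝ) L := ⟨hξI.1, hξL⟩
      have d1 : deriv (fun s => v ξ s) t = pQ L v (ξ, t) (0,1) :=
        (u_deriv_t hv ⟨hξI.1.le, hξL.le⟩ htpos).deriv
      have d2 : deriv (fun y => v y t) ξ = pQ L v (ξ, t) (1,0) :=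
        (u_deriv_x hv hξoo htpos.le).deriv
      have hpde := hvpde ξ hξoo t ht
      rw [d1, d2] at hpde
      have hval : pQ L v (ξ, t) (0,1) = lam2 * (pQ L v (ξ, t) (1,0)) + cf ξ * w ξ t := by
        rw [hcf]; linarith
      rw [hval]; ring
    -- (d) IBP for v
    have hd := transform_ibp hL hKv hv hx.1 hx.2.le htpos
    -- (f) kernel equation 1 inside the Dw integral
    have hf : (∫ ξ in (0:ℝ)..x, pDx L Kw x ξ * w ξ t)
        = lam2⁻¹ * (lam1 * (∫ ξ in (0:ℝ)..x, pP L Kw (x, ξ) (0,1) * w ξ t)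
          + ∫ ξ in (0:ℝ)..x, Kv x ξ * (cf ξ * w ξ t)) := by
      rw [← intervalIntegral.integral_const_mul,
        ← intervalIntegral.integral_add (hJw_int.const_mul lam1) hIc_int,
        ← intervalIntegral.integral_const_mul]
      apply intervalIntegral.integral_congr_ae
      filter_upwards [hne] with ξ hξne hξI
      rw [hIoc] at hξI
      have hξx : ξ < x := lt_of_le_of_ne hξI.2 hξne
      have d1 : deriv (fun y => Kw y ξ) x = pP L Kw (x, ξ) (1,0) :=
        (K_deriv_x hKw hξI.1.le hξx hx.2).deriv
      have d2 : deriv (fun s => Kw x s) ξ = pP L Kw (x, ξ) (0,1) :=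
        (K_deriv_xi hKw hξI.1 hξx hx.2.le).deriv
      have hker := hker1 x ξ hξI.1.le hξx.le hx.2.le
      rw [d1, d2] at hker
      have hpdx : pDx L Kw x ξ = pP L Kw (x, ξ) (1,0) := by
        rw [pDx, if_pos hξx.le]
      rw [hpdx]
      have h5 : lam2 * (pP L Kw (x, ξ) (1,0))
          = lam1 * (pP L Kw (x, ξ) (0,1)) + cf ξ * Kv x ξ := by
        rw [hcf]; linarith
      have hval : pP L Kw (x, ξ) (1,0)
          = lam2⁻¹ * (lam1 * (pP L Kw (x, ξ) (0,1)) + cf ξ * Kv x ξ) := by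
        rw [← h5, inv_mul_cancel_left₀ (ne_of_gt h2)]
      rw [hval]; ring
    -- (g) kernel equation 2 inside the Dv integral
    have hg : (∫ ξ in (0:ℝ)..x, pDx L Kv x ξ * v ξ t)
        = -(∫ ξ in (0:ℝ)..x, pP L Kv (x, ξ) (0,1) * v ξ t) := by
      rw [← intervalIntegral.integral_neg]
      apply intervalIntegral.integral_congr_ae
      filter_upwards [hne] with ξ hξne hξI
      rw [hIoc] at hξI
      have hξx : ξ < x := lt_of_le_of_ne hξI.2 hξne
      have d1 : deriv (fun y => Kv y ξ) x = pP L Kv (x, ξ) (1,0) :=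
        (K_deriv_x hKv hξI.1.le hξx hx.2).deriv
      have d2 : deriv (fun s => Kv x s) ξ = pP L Kv (x, ξ) (0,1) :=
        (K_deriv_xi hKv hξI.1 hξx hx.2.le).deriv
      have hker := hker2 x ξ hξI.1.le hξx.le hx.2.le
      rw [d1, d2] at hker
      have hpdx : pDx L Kv x ξ = pP L Kv (x, ξ) (1,0) := by
        rw [pDx, if_pos hξx.le]
      rw [hpdx]
      have hval : pP L Kv (x, ξ) (1,0) = -(pP L Kv (x, ξ) (0,1)) := by linarith
      rw [hval]; ring
    -- (e) plant PDE for v at (x,t)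
    have he := hvpde x hx t ht
    rw [hv_t.deriv, hv_x.deriv] at he
    -- boundary relations
    have h3 := hker3 x hxI
    have h4 := hker4 x hxI
    have h0 := hbc0 t htpos.le
    -- final algebra
    have hVt : pQ L v (x, t) (0,1)
        = lam2 * (pQ L v (x, t) (1,0)) + -(1 / τ) * Real.exp (-x / (τ * vs)) * w x t := by
      linarith
    rw [hVt, ha, hb, hc, hd, hf, hg, h3, h4, h0]
    have hsum : lam1 + lam2 ≠ 0 := by positivity
    field_simp
    ring
  · -- boundary condition at x = 0
    intro t ht
    rw [hαdef, hβdef]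
    simp only [intervalIntegral.integral_same, sub_zero]
    exact hbc0 t ht
  · -- boundary condition at x = L
    intro t ht
    rw [hβdef, hbcL t ht, hU t ht]
    ring

end
end

section
/- Let K̂^w, K̂^v ∈ C¹(𝒯) be arbitrary (approximate) kernels, and let (w̃, ṽ) be a C¹ solution of the plant with the approximated control Û(t) = −κ w̃(L,t) + ∫₀^L K̂^w(L,ξ) w̃(ξ,t) dξ + ∫₀^L K̂^v(L,ξ) ṽ(ξ,t) dξ. Define α̂(x,t) = w̃(x,t) and β̂(x,t) = ṽ(x,t) − ∫₀^x K̂^w(x,ξ) w̃(ξ,t) dξ − ∫₀^x K̂^v(x,ξ) ṽ(ξ,t) dξ. Then ∂_t α̂ + λ₁ ∂_x α̂ = 0, α̂(0,t) = −r β̂(0,t), β̂(L,t) = 0, and β̂ satisfies the perturbed transport equation ∂_t β̂ − λ₂ ∂_x β̂ = (c(x) + (λ₁+λ₂) K̂^w(x,x)) w̃(x,t) + λ₂ (K̂^w(x,0) + K̂^v(x,0)) ṽ(0,t) + ∫₀^x (λ₂ ∂_x K̂^w(x,ξ) − λ₁ ∂_ξ K̂^w(x,ξ) − c(ξ) K̂^v(x,ξ))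 w̃(ξ,t) dξ + λ₂ ∫₀^x (∂_x K̂^v(x,ξ) + ∂_ξ K̂^v(x,ξ)) ṽ(ξ,t) dξ, with all perturbation terms given by the residuals of the approximate kernels in the kernel equations. -/
open Set Real MeasureTheory intervalIntegral Topology Filter Metric Asymptotics

namespace Stmt4Aux

noncomputable section

def Tri (L : ℝ) : Set (ℝ × ℝ) := {p : ℝ × ℝ | 0 ≤ p.2 ∧ p.2 ≤ p.1 ∧ p.1 ≤ L}
def Rec (L : ℝ) : Set (ℝ × ℝ) := Icc 0 L ×ˢ Ici 0

variable {L : ℝ}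

lemma mem_Tri {x ξ : ℝ} (h0 : 0 ≤ ξ) (h1 : ξ ≤ x) (h2 : x ≤ L) : ((x, ξ) : ℝ × ℝ) ∈ Tri L :=
  ⟨h0, h1, h2⟩

lemma mem_Rec {x t : ℝ} (h0 : 0 ≤ x) (h1 : x ≤ L) (h2 : 0 ≤ t) : ((x, t) : ℝ × ℝ) ∈ Rec L :=
  ⟨⟨h0, h1⟩, h2⟩

lemma convex_Tri : Convex ℝ (Tri L) := by
  have : Tri L = {p : ℝ × ℝ | 0 ≤ p.2} ∩ ({p : ℝ × ℝ | p.2 ≤ p.1} ∩ {p : ℝ × ℝ | p.1 ≤ L}) := by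
    ext p; simp [Tri, mem_setOf_eq, and_assoc]
  rw [this]
  refine Convex.inter ?_ (Convex.inter ?_ ?_)
  · exact convex_halfSpace_ge (LinearMap.snd ℝ ℝ ℝ).isLinear 0
  · have : {p : ℝ × ℝ | p.2 ≤ p.1} = {p : ℝ × ℝ | p.2 - p.1 ≤ 0} := by ext p; simp [sub_nonpos]
    rw [this]
    exact convex_halfSpace_le (((LinearMap.snd ℝ ℝ ℝ) - (LinearMap.fst ℝ ℝ ℝ)).isLinear) 0
  · exact convex_halfSpace_le (LinearMap.fst ℝ ℝ ℝ).isLinear L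

lemma isCompact_Tri (hL : 0 ≤ L) : IsCompact (Tri L) := by
  refine (isCompact_Icc.prod isCompact_Icc : IsCompact (Icc (0:ℝ) L ×ˢ Icc (0:ℝ) L)).of_isClosed_subset ?_ ?_
  · have h1 : IsClosed {p : ℝ × ℝ | 0 ≤ p.2} := isClosed_le continuous_const continuous_snd
    have h2 : IsClosed {p : ℝ × ℝ | p.2 ≤ p.1} := isClosed_le continuous_snd continuous_fst
    have h3 : IsClosed {p : ℝ × ℝ | p.1 ≤ L} := isClosed_le continuous_fst continuous_const
    have : Tri L = {p : ℝ × ℝ | 0 ≤ p.2} ∩ ({p : ℝ × ℝ | p.2 ≤ p.1} ∩ {p : ℝ × ℝ | p.1 ≤ L}) := by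
      ext p; simp [Tri, mem_setOf_eq, and_assoc]
    rw [this]; exact h1.inter (h2.inter h3)
  · rintro ⟨x, ξ⟩ ⟨h0, h1, h2⟩
    exact ⟨⟨le_trans h0 h1, h2⟩, ⟨h0, le_trans h1 h2⟩⟩

lemma Tri_mem_nhds {x ξ : ℝ} (h0 : 0 < ξ) (h1 : ξ < x) (h2 : x < L) :
    Tri L ∈ 𝓝 ((x, ξ) : ℝ × ℝ) := by
  have hopen : IsOpen {p : ℝ × ℝ | 0 < p.2 ∧ p.2 < p.1 ∧ p.1 < L} := by
    rw [show {p : ℝ × ℝ | 0 < p.2 ∧ p.2 < p.1 ∧ p.1 < L}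
        = {p : ℝ × ℝ | 0 < p.2} ∩ ({p : ℝ × ℝ | p.2 < p.1} ∩ {p : ℝ × ℝ | p.1 < L}) by
      ext p; simp [mem_setOf_eq, and_assoc]]
    exact (isOpen_lt continuous_const continuous_snd).inter
      ((isOpen_lt continuous_snd continuous_fst).inter (isOpen_lt continuous_fst continuous_const))
  refine mem_nhds_iff.2 ⟨_, ?_, hopen, ⟨h0, h1, h2⟩⟩
  rintro ⟨a, b⟩ ⟨g0, g1, g2⟩; exact ⟨g0.le, g1.le, g2.le⟩

lemma Rec_mem_nhds {x t : ℝ} (h0 : 0 < x) (h1 : x < L) (h2 : 0 < t) :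
    Rec L ∈ 𝓝 ((x, t) : ℝ × ℝ) := by
  refine mem_nhds_iff.2 ⟨Ioo 0 L ×ˢ Ioi 0, ?_, (isOpen_Ioo.prod isOpen_Ioi), ⟨⟨h0, h1⟩, h2⟩⟩
  rintro ⟨a, b⟩ ⟨⟨g0, g1⟩, g2⟩; exact ⟨⟨g0.le, g1.le⟩, show (0:ℝ) ≤ b from le_of_lt (show (0:ℝ) < b from g2)⟩

lemma isOpen_TriInt : IsOpen {p : ℝ × ℝ | 0 < p.2 ∧ p.2 < p.1 ∧ p.1 < L} := by
  rw [show {p : ℝ × ℝ | 0 < p.2 ∧ p.2 < p.1 ∧ p.1 < L}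
      = {p : ℝ × ℝ | 0 < p.2} ∩ ({p : ℝ × ℝ | p.2 < p.1} ∩ {p : ℝ × ℝ | p.1 < L}) by
    ext p; simp [mem_setOf_eq, and_assoc]]
  exact (isOpen_lt continuous_const continuous_snd).inter
    ((isOpen_lt continuous_snd continuous_fst).inter (isOpen_lt continuous_fst continuous_const))

lemma uniqueDiffOn_Tri (hL : 0 < L) : UniqueDiffOn ℝ (Tri L) := by
  refine uniqueDiffOn_convex convex_Tri ⟨(2*L/3, L/3), ?_⟩
  rw [mem_interior]
  refine ⟨{p : ℝ × ℝ | 0 < p.2 ∧ p.2 < p.1 ∧ p.1 < L}, ?_, isOpen_TriInt, ?_, ?_, ?_⟩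
  · rintro ⟨a, b⟩ ⟨g0, g1, g2⟩; exact ⟨g0.le, g1.le, g2.le⟩
  · show (0:ℝ) < L/3; linarith
  · show L/3 < 2*L/3; linarith
  · show 2*L/3 < L; linarith

lemma uniqueDiffOn_Rec (hL : 0 < L) : UniqueDiffOn ℝ (Rec L) :=
  (uniqueDiffOn_Icc hL).prod (uniqueDiffOn_Ici 0)

-- PART 2 ------------------------------------------------------------

lemma hasDerivAt_slice_fst {F : ℝ × ℝ → ℝ} {s : Set (ℝ × ℝ)} {a b : ℝ}
    (hf : ContDiffOn ℝ 1 F s) (hs : s ∈ 𝓝 ((a, b) : ℝ × ℝ)) :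
    HasDerivAt (fun y => F (y, b)) (fderivWithin ℝ F s (a, b) (1, 0)) a := by
  have hd : DifferentiableAt ℝ F (a, b) :=
    ((hf.differentiableOn one_ne_zero) _ (mem_of_mem_nhds hs)).differentiableAt hs
  have h1 : HasDerivAt (fun y : ℝ => ((y, b) : ℝ × ℝ)) (1, 0) a :=
    (hasDerivAt_id a).prodMk (hasDerivAt_const a b)
  have h2 := hd.hasFDerivAt.comp_hasDerivAt a h1
  rw [fderivWithin_of_mem_nhds hs]
  exact h2

lemma hasDerivAt_slice_snd {F : ℝ × ℝ → ℝ} {s : Set (ℝ × ℝ)} {a b : ℝ}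
    (hf : ContDiffOn ℝ 1 F s) (hs : s ∈ 𝓝 ((a, b) : ℝ × ℝ)) :
    HasDerivAt (fun z => F (a, z)) (fderivWithin ℝ F s (a, b) (0, 1)) b := by
  have hd : DifferentiableAt ℝ F (a, b) :=
    ((hf.differentiableOn one_ne_zero) _ (mem_of_mem_nhds hs)).differentiableAt hs
  have h1 : HasDerivAt (fun z : ℝ => ((a, z) : ℝ × ℝ)) (0, 1) b :=
    (hasDerivAt_const b a).prodMk (hasDerivAt_id b)
  have h2 := hd.hasFDerivAt.comp_hasDerivAt b h1
  rw [fderivWithin_of_mem_nhds hs]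
  exact h2

lemma contOn_slice_fst {F : ℝ × ℝ → ℝ} {s : Set (ℝ × ℝ)} (hF : ContinuousOn F s) (b : ℝ)
    {I : Set ℝ} (h : ∀ y ∈ I, ((y, b) : ℝ × ℝ) ∈ s) :
    ContinuousOn (fun y => F (y, b)) I :=
  hF.comp ((continuous_id.prodMk continuous_const).continuousOn) h

lemma contOn_slice_snd {F : ℝ × ℝ → ℝ} {s : Set (ℝ × ℝ)} (hF : ContinuousOn F s) (a : ℝ)
    {I : Set ℝ} (h : ∀ z ∈ I, ((a, z) : ℝ × ℝ) ∈ s) :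
    ContinuousOn (fun z => F (a, z)) I :=
  hF.comp ((continuous_const.prodMk continuous_id).continuousOn) h

lemma ii_of_contOn {g : ℝ → ℝ} {a : ℝ} (ha : 0 ≤ a) (h : ContinuousOn g (Icc 0 a)) :
    IntervalIntegrable g volume 0 a :=
  (by rwa [uIcc_of_le ha] : ContinuousOn g (uIcc 0 a)).intervalIntegrable

lemma norm01 : ‖(((0:ℝ), (1:ℝ)) : ℝ × ℝ)‖ = 1 := by
  simp [Prod.norm_def]

lemma norm10 : ‖(((1:ℝ), (0:ℝ)) : ℝ × ℝ)‖ = 1 := by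
  simp [Prod.norm_def]

/-- Differentiation in `t` under the integral sign. -/
theorem hasDerivAt_param_t (hL : 0 < L) {K f : ℝ → ℝ → ℝ}
    (hK : ContDiffOn ℝ 1 (fun p : ℝ × ℝ => K p.1 p.2) (Tri L))
    (hf : ContDiffOn ℝ 1 (fun p : ℝ × ℝ => f p.1 p.2) (Rec L))
    {x₀ t₀ : ℝ} (hx : x₀ ∈ Ioo 0 L) (ht : 0 < t₀) :
    HasDerivAt (fun t => ∫ ξ in (0:ℝ)..x₀, K x₀ ξ * f ξ t)
      (∫ ξ in (0:ℝ)..x₀, K x₀ ξ *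
        (fderivWithin ℝ (fun p : ℝ × ℝ => f p.1 p.2) (Rec L) (ξ, t₀)) (0, 1)) t₀ := by
  obtain ⟨hx0, hxL⟩ := hx
  have hfc : ContinuousOn (fun p : ℝ × ℝ => f p.1 p.2) (Rec L) := hf.continuousOn
  have hKc : ContinuousOn (fun p : ℝ × ℝ => K p.1 p.2) (Tri L) := hK.continuousOn
  have hf' : ContinuousOn (fderivWithin ℝ (fun p : ℝ × ℝ => f p.1 p.2) (Rec L)) (Rec L) :=
    hf.continuousOn_fderivWithin (uniqueDiffOn_Rec hL) le_rfl
  obtain ⟨MK, hMK⟩ := (isCompact_Tri hL.le).exists_bound_of_continuousOn hKc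
  have hbox : IsCompact (Icc (0:ℝ) L ×ˢ Icc (t₀/2) (t₀ + t₀/2)) := isCompact_Icc.prod isCompact_Icc
  have hboxsub : (Icc (0:ℝ) L ×ˢ Icc (t₀/2) (t₀ + t₀/2)) ⊆ Rec L := by
    rintro ⟨a, b⟩ ⟨ha, hb⟩; exact ⟨ha, le_trans (by linarith) hb.1⟩
  obtain ⟨MD, hMD⟩ := hbox.exists_bound_of_continuousOn (hf'.mono hboxsub)
  have hεpos : 0 < t₀/2 := by linarith
  have hIoc : uIoc (0:ℝ) x₀ = Ioc 0 x₀ := uIoc_of_le hx0.le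
  have c1 : ContinuousOn (fun ξ => K x₀ ξ) (Icc 0 x₀) :=
    contOn_slice_snd hKc x₀ (fun ξ hξ => mem_Tri hξ.1 hξ.2 hxL.le)
  have cf : ∀ t : ℝ, 0 ≤ t → ContinuousOn (fun ξ => f ξ t) (Icc 0 x₀) := fun t ht' =>
    contOn_slice_fst hfc t (fun ξ hξ => mem_Rec hξ.1 (le_trans hξ.2 hxL.le) ht')
  have c3' : ContinuousOn (fun ξ => fderivWithin ℝ (fun p : ℝ × ℝ => f p.1 p.2) (Rec L) (ξ, t₀))
      (Icc 0 x₀) :=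
    hf'.comp ((continuous_id.prodMk continuous_const).continuousOn)
      (fun ξ hξ => mem_Rec hξ.1 (le_trans hξ.2 hxL.le) ht.le)
  have c3 : ContinuousOn
      (fun ξ => (fderivWithin ℝ (fun p : ℝ × ℝ => f p.1 p.2) (Rec L) (ξ, t₀)) (0, 1))
      (Icc 0 x₀) := c3'.clm_apply continuousOn_const
  have key := intervalIntegral.hasDerivAt_integral_of_dominated_loc_of_deriv_le
      (F := fun t ξ => K x₀ ξ * f ξ t)
      (F' := fun t ξ => K x₀ ξ * (fderivWithin ℝ (fun p : ℝ × ℝ => f p.1 p.2) (Rec L) (ξ, t)) (0, 1))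
      (x₀ := t₀) (a := 0) (b := x₀) (μ := volume)
      (bound := fun _ => (max MK 0 + 1) * (max MD 0 + 1)) (Metric.ball_mem_nhds t₀ hεpos) ?_ ?_ ?_ ?_ ?_ ?_
  · exact key.2
  · filter_upwards [Metric.ball_mem_nhds t₀ hεpos] with t htb
    have ht' : 0 < t := by
      have := abs_lt.1 (by simpa [Real.dist_eq] using htb); linarith [this.1]
    rw [hIoc]
    exact ((c1.mul (cf t ht'.le)).mono Ioc_subset_Icc_self).aestronglyMeasurable measurableSet_Ioc
  · exact ii_of_contOn hx0.le (c1.mul (cf t₀ ht.le))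
  · rw [hIoc]
    exact ((c1.mul c3).mono Ioc_subset_Icc_self).aestronglyMeasurable measurableSet_Ioc
  · refine ae_of_all _ ?_
    intro ξ hξ t htb
    rw [hIoc] at hξ
    have htt : t₀/2 ≤ t ∧ t ≤ t₀ + t₀/2 := by
      have := abs_lt.1 (by simpa [Real.dist_eq] using htb); constructor <;> linarith [this.1, this.2]
    have hmembox : ((ξ, t) : ℝ × ℝ) ∈ Icc (0:ℝ) L ×ˢ Icc (t₀/2) (t₀ + t₀/2) :=
      ⟨⟨hξ.1.le, le_trans hξ.2 hxL.le⟩, htt.1, htt.2⟩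
    have b1 : |K x₀ ξ| ≤ max MK 0 + 1 := by
      have := hMK (x₀, ξ) (mem_Tri hξ.1.le hξ.2 hxL.le)
      simp only [Real.norm_eq_abs] at this
      have := le_max_left MK 0; linarith [le_max_left MK 0,
        hMK (x₀, ξ) (mem_Tri hξ.1.le hξ.2 hxL.le)]
    have b2 : ‖(fderivWithin ℝ (fun p : ℝ × ℝ => f p.1 p.2) (Rec L) (ξ, t)) (0, 1)‖
        ≤ max MD 0 + 1 := by
      calc ‖(fderivWithin ℝ (fun p : ℝ × ℝ => f p.1 p.2) (Rec L) (ξ, t)) (0, 1)‖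
          ≤ ‖fderivWithin ℝ (fun p : ℝ × ℝ => f p.1 p.2) (Rec L) (ξ, t)‖ * ‖(((0:ℝ),(1:ℝ)) : ℝ × ℝ)‖ :=
            ContinuousLinearMap.le_opNorm _ _
        _ = ‖fderivWithin ℝ (fun p : ℝ × ℝ => f p.1 p.2) (Rec L) (ξ, t)‖ := by rw [norm01, mul_one]
        _ ≤ max MD 0 + 1 := by
            have := hMD _ hmembox; linarith [le_max_left MD 0]
    calc ‖K x₀ ξ * (fderivWithin ℝ (fun p : ℝ × ℝ => f p.1 p.2) (Rec L) (ξ, t)) (0, 1)‖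
        = |K x₀ ξ| * ‖(fderivWithin ℝ (fun p : ℝ × ℝ => f p.1 p.2) (Rec L) (ξ, t)) (0, 1)‖ := by
          rw [norm_mul]; rfl
      _ ≤ (max MK 0 + 1) * (max MD 0 + 1) := by
          apply mul_le_mul b1 b2 (norm_nonneg _) (by positivity)
  · exact intervalIntegrable_const
  · refine ae_of_all _ ?_
    intro ξ hξ t htb
    rw [hIoc] at hξ
    have ht' : 0 < t := by
      have := abs_lt.1 (by simpa [Real.dist_eq] using htb); linarith [this.1]
    have hmem : Rec L ∈ 𝓝 ((ξ, t) : ℝ × ℝ) :=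
      Rec_mem_nhds hξ.1 (lt_of_le_of_lt hξ.2 hxL) ht'
    exact (hasDerivAt_slice_snd hf hmem).const_mul (K x₀ ξ)

/-- Integration by parts for the kernel terms. -/
theorem ibp_kernel (hL : 0 < L) {K f : ℝ → ℝ → ℝ}
    (hK : ContDiffOn ℝ 1 (fun p : ℝ × ℝ => K p.1 p.2) (Tri L))
    (hf : ContDiffOn ℝ 1 (fun p : ℝ × ℝ => f p.1 p.2) (Rec L))
    {x₀ t₀ : ℝ} (hx : x₀ ∈ Ioo 0 L) (ht : 0 < t₀) :
    ∫ ξ in (0:ℝ)..x₀, K x₀ ξ * (fderivWithin ℝ (fun p : ℝ × ℝ => f p.1 p.2) (Rec L) (ξ, t₀)) (1, 0)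
      = K x₀ x₀ * f x₀ t₀ - K x₀ 0 * f 0 t₀
        - ∫ ξ in (0:ℝ)..x₀,
            (fderivWithin ℝ (fun p : ℝ × ℝ => K p.1 p.2) (Tri L) (x₀, ξ)) (0, 1) * f ξ t₀ := by
  obtain ⟨hx0, hxL⟩ := hx
  have hfc : ContinuousOn (fun p : ℝ × ℝ => f p.1 p.2) (Rec L) := hf.continuousOn
  have hKc : ContinuousOn (fun p : ℝ × ℝ => K p.1 p.2) (Tri L) := hK.continuousOn
  have hf' : ContinuousOn (fderivWithin ℝ (fun p : ℝ × ℝ => f p.1 p.2) (Rec L)) (Rec L) :=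
    hf.continuousOn_fderivWithin (uniqueDiffOn_Rec hL) le_rfl
  have hK' : ContinuousOn (fderivWithin ℝ (fun p : ℝ × ℝ => K p.1 p.2) (Tri L)) (Tri L) :=
    hK.continuousOn_fderivWithin (uniqueDiffOn_Tri hL) le_rfl
  have hIcc : uIcc (0:ℝ) x₀ = Icc 0 x₀ := uIcc_of_le hx0.le
  have hmin : min (0:ℝ) x₀ = 0 := min_eq_left hx0.le
  have hmax : max (0:ℝ) x₀ = x₀ := max_eq_right hx0.le
  have cu : ContinuousOn (fun ξ => K x₀ ξ) (Icc 0 x₀) :=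
    contOn_slice_snd hKc x₀ (fun ξ hξ => mem_Tri hξ.1 hξ.2 hxL.le)
  have cv : ContinuousOn (fun ξ => f ξ t₀) (Icc 0 x₀) :=
    contOn_slice_fst hfc t₀ (fun ξ hξ => mem_Rec hξ.1 (le_trans hξ.2 hxL.le) ht.le)
  have cu' : ContinuousOn
      (fun ξ => (fderivWithin ℝ (fun p : ℝ × ℝ => K p.1 p.2) (Tri L) (x₀, ξ)) (0, 1))
      (Icc 0 x₀) :=
    (hK'.comp ((continuous_const.prodMk continuous_id).continuousOn)
      (fun ξ hξ => mem_Tri hξ.1 hξ.2 hxL.le)).clm_apply continuousOn_const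
  have cv' : ContinuousOn
      (fun ξ => (fderivWithin ℝ (fun p : ℝ × ℝ => f p.1 p.2) (Rec L) (ξ, t₀)) (1, 0))
      (Icc 0 x₀) :=
    (hf'.comp ((continuous_id.prodMk continuous_const).continuousOn)
      (fun ξ hξ => mem_Rec hξ.1 (le_trans hξ.2 hxL.le) ht.le)).clm_apply continuousOn_const
  have hu'int : IntervalIntegrable
      (fun ξ => (fderivWithin ℝ (fun p : ℝ × ℝ => K p.1 p.2) (Tri L) (x₀, ξ)) (0, 1))
      volume 0 x₀ := ii_of_contOn hx0.le cu'
  have hv'int : IntervalIntegrable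
      (fun ξ => (fderivWithin ℝ (fun p : ℝ × ℝ => f p.1 p.2) (Rec L) (ξ, t₀)) (1, 0))
      volume 0 x₀ := ii_of_contOn hx0.le cv'
  have main := intervalIntegral.integral_deriv_mul_eq_sub_of_hasDerivAt
      (u := fun ξ => K x₀ ξ) (v := fun ξ => f ξ t₀)
      (u' := fun ξ => (fderivWithin ℝ (fun p : ℝ × ℝ => K p.1 p.2) (Tri L) (x₀, ξ)) (0, 1))
      (v' := fun ξ => (fderivWithin ℝ (fun p : ℝ × ℝ => f p.1 p.2) (Rec L) (ξ, t₀)) (1, 0))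
      (a := 0) (b := x₀)
      (by rwa [hIcc]) (by rwa [hIcc]) ?_ ?_ hu'int hv'int
  · rw [intervalIntegral.integral_add ((hu'int).mul_continuousOn (by rwa [hIcc]))
      ((hv'int).continuousOn_mul (by rwa [hIcc]))] at main
    linarith [main]
  · intro ξ hξ
    rw [hmin, hmax] at hξ
    exact hasDerivAt_slice_snd hK (Tri_mem_nhds hξ.1 hξ.2 hxL)
  · intro ξ hξ
    rw [hmin, hmax] at hξ
    exact hasDerivAt_slice_fst hf (Rec_mem_nhds hξ.1 (lt_trans hξ.2 hxL) ht)

lemma ii2 {g : ℝ → ℝ} {y : ℝ} (hg : ContinuousOn g (Icc 0 y)) {a b : ℝ}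
    (h1 : 0 ≤ a) (h2 : a ≤ b) (h3 : b ≤ y) : IntervalIntegrable g volume a b := by
  apply ContinuousOn.intervalIntegrable
  rw [uIcc_of_le h2]
  exact hg.mono (Icc_subset_Icc h1 h3)

set_option maxHeartbeats 1000000 in
set_option maxHeartbeats 1000000 in
/-- Leibniz rule: derivative in `x` of `∫_0^x K x ξ f ξ t₀ dξ`. -/
theorem hasDerivAt_leibniz_x (hL : 0 < L) {K f : ℝ → ℝ → ℝ}
    (hK : ContDiffOn ℝ 1 (fun p : ℝ × ℝ => K p.1 p.2) (Tri L))
    (hf : ContDiffOn ℝ 1 (fun p : ℝ × ℝ => f p.1 p.2) (Rec L))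
    {x₀ t₀ : ℝ} (hx : x₀ ∈ Ioo 0 L) (ht : 0 < t₀) :
    HasDerivAt (fun x => ∫ ξ in (0:ℝ)..x, K x ξ * f ξ t₀)
      (K x₀ x₀ * f x₀ t₀ + ∫ ξ in (0:ℝ)..x₀,
        (fderivWithin ℝ (fun p : ℝ × ℝ => K p.1 p.2) (Tri L) (x₀, ξ)) (1, 0) * f ξ t₀) x₀ := by
  obtain ⟨hx0, hxL⟩ := hx
  set K' := fderivWithin ℝ (fun p : ℝ × ℝ => K p.1 p.2) (Tri L) with hK'def
  have hKc : ContinuousOn (fun p : ℝ × ℝ => K p.1 p.2) (Tri L) := hK.continuousOn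
  have hfc : ContinuousOn (fun p : ℝ × ℝ => f p.1 p.2) (Rec L) := hf.continuousOn
  have hK'c : ContinuousOn K' (Tri L) :=
    hK.continuousOn_fderivWithin (uniqueDiffOn_Tri hL) le_rfl
  -- bound on K'
  obtain ⟨MK1, hMK1⟩ := (isCompact_Tri hL.le).exists_bound_of_continuousOn hK'c
  set M1 := max MK1 0 with hM1def
  have hM1nn : (0:ℝ) ≤ M1 := le_max_right _ _
  have hM1 : ∀ p ∈ Tri L, ‖K' p‖ ≤ M1 := fun p hp => le_trans (hMK1 p hp) (le_max_left _ _)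
  -- bound on f
  have cfL : ContinuousOn (fun ξ => f ξ t₀) (Icc 0 L) :=
    contOn_slice_fst hfc t₀ (fun ξ hξ => mem_Rec hξ.1 hξ.2 ht.le)
  obtain ⟨Mf0, hMf0⟩ := isCompact_Icc.exists_bound_of_continuousOn cfL
  set Mf := max Mf0 0 with hMfdef
  have hMfnn : (0:ℝ) ≤ Mf := le_max_right _ _
  have hMf : ∀ ξ ∈ Icc (0:ℝ) L, ‖f ξ t₀‖ ≤ Mf := fun ξ hξ =>
    le_trans (hMf0 ξ hξ) (le_max_left _ _)
  -- uniform continuity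
  have hucK' := (isCompact_Tri hL.le).uniformContinuousOn_of_continuous hK'c
  have hPc : ContinuousOn (fun p : ℝ × ℝ => K p.1 p.2 * f p.2 t₀) (Tri L) :=
    hKc.mul (hfc.comp ((continuous_snd.prodMk continuous_const).continuousOn)
      (fun p hp => mem_Rec hp.1 (le_trans hp.2.1 hp.2.2) ht.le))
  have hucP := (isCompact_Tri hL.le).uniformContinuousOn_of_continuous hPc
  -- slice continuity for integrands
  have cc : ∀ y : ℝ, y ≤ L → ContinuousOn (fun ξ => K y ξ * f ξ t₀) (Icc 0 y) := fun y h2 =>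
    (contOn_slice_snd hKc y (fun ξ hξ => mem_Tri hξ.1 hξ.2 h2)).mul
      (contOn_slice_fst hfc t₀ (fun ξ hξ => mem_Rec hξ.1 (le_trans hξ.2 h2) ht.le))
  have ccx : ContinuousOn (fun ξ => (K' (x₀, ξ)) (1, 0) * f ξ t₀) (Icc 0 x₀) :=
    ((hK'c.comp ((continuous_const.prodMk continuous_id).continuousOn)
      (fun ξ hξ => mem_Tri hξ.1 hξ.2 hxL.le)).clm_apply continuousOn_const).mul
      (contOn_slice_fst hfc t₀ (fun ξ hξ => mem_Rec hξ.1 (le_trans hξ.2 hxL.le) ht.le))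
  rw [hasDerivAt_iff_isLittleO, isLittleO_iff]
  intro c hc
  have hden : (0:ℝ) < 1 + Mf * L + M1 * Mf := by nlinarith [mul_nonneg hMfnn hL.le, mul_nonneg hM1nn hMfnn]
  set ε := c / (1 + Mf * L + M1 * Mf) with hεdef
  have hε : 0 < ε := div_pos hc hden
  have hc3 : ε * (1 + Mf * L + M1 * Mf) = c := div_mul_cancel₀ c hden.ne'
  obtain ⟨δ₁, hδ₁pos, hδ₁⟩ := Metric.uniformContinuousOn_iff.1 hucK' ε hε
  obtain ⟨δ₂, hδ₂pos, hδ₂⟩ := Metric.uniformContinuousOn_iff.1 hucP ε hε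
  set δ := min (min δ₁ δ₂) (min (min (x₀/2) ((L - x₀)/2)) ε) with hδdef
  have hδpos : 0 < δ := by
    refine lt_min (lt_min hδ₁pos hδ₂pos) (lt_min (lt_min ?_ ?_) hε) <;> linarith
  filter_upwards [Metric.ball_mem_nhds x₀ hδpos] with x hxb
  have hdist : |x - x₀| < δ := by simpa [Real.dist_eq] using hxb
  have hdδ₁ : |x - x₀| < δ₁ := lt_of_lt_of_le hdist (le_trans (min_le_left _ _) (min_le_left _ _))
  have hdδ₂ : |x - x₀| < δ₂ := lt_of_lt_of_le hdist (le_trans (min_le_left _ _) (min_le_right _ _))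
  have hdε : |x - x₀| ≤ ε :=
    le_of_lt (lt_of_lt_of_le hdist (le_trans (min_le_right _ _) (min_le_right _ _)))
  have hdx : |x - x₀| < x₀/2 := lt_of_lt_of_le hdist
    (le_trans (min_le_right _ _) (le_trans (min_le_left _ _) (min_le_left _ _)))
  have hdX : |x - x₀| < (L - x₀)/2 := lt_of_lt_of_le hdist
    (le_trans (min_le_right _ _) (le_trans (min_le_left _ _) (min_le_right _ _)))
  have habs := abs_lt.1 hdist
  have h0x : 0 < x := by have := abs_lt.1 hdx; linarith [this.1]
  have hxL' : x < L := by have := abs_lt.1 hdX; linarith [this.2]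
  have habsnn : (0:ℝ) ≤ |x - x₀| := abs_nonneg _
  -- the key pointwise estimate
  have key : ∀ ξ : ℝ, 0 ≤ ξ → ξ ≤ x → ξ ≤ x₀ →
      ‖K x ξ - K x₀ ξ - (x - x₀) * (K' (x₀, ξ)) (1, 0)‖ ≤ ε * |x - x₀| := by
    intro ξ h0 h1 h2
    have hm1 : ((x, ξ) : ℝ × ℝ) ∈ Tri L := mem_Tri h0 h1 hxL'.le
    have hm2 : ((x₀, ξ) : ℝ × ℝ) ∈ Tri L := mem_Tri h0 h2 hxL.le
    set s := Tri L ∩ Metric.ball ((x₀, ξ) : ℝ × ℝ) δ₁ with hsdef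
    have hconv : Convex ℝ s := convex_Tri.inter (convex_ball _ _)
    have hder : ∀ z ∈ s, HasFDerivWithinAt (fun p : ℝ × ℝ => K p.1 p.2) (K' z) s z := fun z hz =>
      (((hK.differentiableOn one_ne_zero) z hz.1).hasFDerivWithinAt).mono inter_subset_left
    have hbd : ∀ z ∈ s, ‖K' z - K' (x₀, ξ)‖ ≤ ε := by
      intro z hz
      have hd := hδ₁ z hz.1 (x₀, ξ) hm2 (by simpa [Metric.mem_ball] using hz.2)
      rw [dist_eq_norm] at hd
      exact hd.le
    have hdxy : dist ((x, ξ) : ℝ × ℝ) ((x₀, ξ) : ℝ × ℝ) = |x - x₀| := by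
      rw [Prod.dist_eq, dist_self, Real.dist_eq]
      exact max_eq_left (abs_nonneg _)
    have hy : ((x, ξ) : ℝ × ℝ) ∈ s := ⟨hm1, by rw [Metric.mem_ball, hdxy]; exact hdδ₁⟩
    have hx' : ((x₀, ξ) : ℝ × ℝ) ∈ s := ⟨hm2, Metric.mem_ball_self hδ₁pos⟩
    have est := hconv.norm_image_sub_le_of_norm_hasFDerivWithin_le' hder hbd hx' hy
    have hvec : (((x, ξ) : ℝ × ℝ) - ((x₀, ξ) : ℝ × ℝ)) = (x - x₀) • (((1:ℝ), (0:ℝ)) : ℝ × ℝ) := by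
      apply Prod.ext <;> simp
    rw [hvec, _root_.map_smul, smul_eq_mul, norm_smul, Real.norm_eq_abs, norm10, mul_one] at est
    simpa using est
  -- final computation, case split
  simp only [Real.norm_eq_abs, smul_eq_mul]
  rcases le_total x₀ x with hxx | hxx
  · -- x₀ ≤ x
    have iiP : IntervalIntegrable (fun ξ => K x ξ * f ξ t₀) volume 0 x₀ :=
      ii2 (cc x hxL'.le) le_rfl hx0.le hxx
    have iiQ : IntervalIntegrable (fun ξ => K x ξ * f ξ t₀) volume x₀ x :=
      ii2 (cc x hxL'.le) hx0.le hxx le_rfl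
    have iiB : IntervalIntegrable (fun ξ => K x₀ ξ * f ξ t₀) volume 0 x₀ :=
      ii2 (cc x₀ hxL.le) le_rfl hx0.le le_rfl
    have iiT : IntervalIntegrable (fun ξ => (K' (x₀, ξ)) (1, 0) * f ξ t₀) volume 0 x₀ :=
      ii2 ccx le_rfl hx0.le le_rfl
    have e1 := integral_add_adjacent_intervals iiP iiQ
    have e2 : (∫ ξ in x₀..x, (K x ξ * f ξ t₀ - K x₀ x₀ * f x₀ t₀))
        = (∫ ξ in x₀..x, K x ξ * f ξ t₀) - (x - x₀) * (K x₀ x₀ * f x₀ t₀) := by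
      rw [intervalIntegral.integral_sub iiQ intervalIntegrable_const,
        intervalIntegral.integral_const, smul_eq_mul]
    have e3 : (∫ ξ in (0:ℝ)..x₀, ((K x ξ - K x₀ ξ - (x - x₀) * (K' (x₀, ξ)) (1, 0)) * f ξ t₀))
        = (∫ ξ in (0:ℝ)..x₀, K x ξ * f ξ t₀) - (∫ ξ in (0:ℝ)..x₀, K x₀ ξ * f ξ t₀)
          - (x - x₀) * ∫ ξ in (0:ℝ)..x₀, (K' (x₀, ξ)) (1, 0) * f ξ t₀ := by
      have hptwise : ∀ ξ : ℝ, (K x ξ - K x₀ ξ - (x - x₀) * (K' (x₀, ξ)) (1, 0)) * f ξ t₀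
          = K x ξ * f ξ t₀ - K x₀ ξ * f ξ t₀ - (x - x₀) * ((K' (x₀, ξ)) (1, 0) * f ξ t₀) :=
        fun ξ => by ring
      simp_rw [hptwise]
      rw [intervalIntegral.integral_sub (iiP.sub iiB) (iiT.const_mul (x - x₀)),
        intervalIntegral.integral_sub iiP iiB, intervalIntegral.integral_const_mul]
    have hsplit : (∫ ξ in (0:ℝ)..x, K x ξ * f ξ t₀) - (∫ ξ in (0:ℝ)..x₀, K x₀ ξ * f ξ t₀)
        - (x - x₀) * (K x₀ x₀ * f x₀ t₀
            + ∫ ξ in (0:ℝ)..x₀, (K' (x₀, ξ)) (1, 0) * f ξ t₀)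
        = (∫ ξ in x₀..x, (K x ξ * f ξ t₀ - K x₀ x₀ * f x₀ t₀))
          + ∫ ξ in (0:ℝ)..x₀, ((K x ξ - K x₀ ξ - (x - x₀) * (K' (x₀, ξ)) (1, 0)) * f ξ t₀) := by
      linear_combination -e1 - e2 - e3
    rw [hsplit]
    have hR : ‖∫ ξ in x₀..x, (K x ξ * f ξ t₀ - K x₀ x₀ * f x₀ t₀)‖ ≤ ε * |x - x₀| := by
      apply intervalIntegral.norm_integral_le_of_norm_le_const
      intro ξ hξ
      rw [uIoc_of_le hxx] at hξ
      have hm1 : ((x, ξ) : ℝ × ℝ) ∈ Tri L := mem_Tri (le_trans hx0.le hξ.1.le) hξ.2 hxL'.le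
      have hm2 : ((x₀, x₀) : ℝ × ℝ) ∈ Tri L := mem_Tri hx0.le le_rfl hxL.le
      have hd : dist ((x, ξ) : ℝ × ℝ) ((x₀, x₀) : ℝ × ℝ) < δ₂ := by
        rw [Prod.dist_eq, Real.dist_eq, Real.dist_eq]
        apply max_lt hdδ₂
        calc |ξ - x₀| = ξ - x₀ := abs_of_pos (by linarith [hξ.1])
          _ ≤ x - x₀ := by linarith [hξ.2]
          _ ≤ |x - x₀| := le_abs_self _
          _ < δ₂ := hdδ₂
      have := hδ₂ (x, ξ) hm1 (x₀, x₀) hm2 hd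
      rw [Real.dist_eq] at this
      exact this.le
    have hS : ‖∫ ξ in (0:ℝ)..x₀, ((K x ξ - K x₀ ξ - (x - x₀) * (K' (x₀, ξ)) (1, 0)) * f ξ t₀)‖
        ≤ ε * |x - x₀| * Mf * x₀ := by
      have hb := intervalIntegral.norm_integral_le_of_norm_le_const
        (C := ε * |x - x₀| * Mf)
        (f := fun ξ => (K x ξ - K x₀ ξ - (x - x₀) * (K' (x₀, ξ)) (1, 0)) * f ξ t₀)
        (a := 0) (b := x₀) ?_
      · rw [sub_zero, abs_of_pos hx0] at hb; exact hb
      · intro ξ hξ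
        rw [uIoc_of_le hx0.le] at hξ
        rw [norm_mul]
        have h1 := key ξ hξ.1.le (le_trans hξ.2 hxx) hξ.2
        have h2 := hMf ξ ⟨hξ.1.le, le_trans hξ.2 hxL.le⟩
        calc ‖K x ξ - K x₀ ξ - (x - x₀) * (K' (x₀, ξ)) (1, 0)‖ * ‖f ξ t₀‖
            ≤ (ε * |x - x₀|) * Mf :=
              mul_le_mul h1 h2 (norm_nonneg _) (by positivity)
          _ = ε * |x - x₀| * Mf := by ring
    calc ‖(∫ ξ in x₀..x, (K x ξ * f ξ t₀ - K x₀ x₀ * f x₀ t₀))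
          + ∫ ξ in (0:ℝ)..x₀, ((K x ξ - K x₀ ξ - (x - x₀) * (K' (x₀, ξ)) (1, 0)) * f ξ t₀)‖
        ≤ ε * |x - x₀| + ε * |x - x₀| * Mf * x₀ := le_trans (norm_add_le _ _) (by linarith)
      _ ≤ c * |x - x₀| := by
          nlinarith [mul_le_mul_of_nonneg_left hxL.le (mul_nonneg (mul_nonneg hε.le habsnn) hMfnn), mul_nonneg (mul_nonneg (mul_nonneg hε.le hM1nn) hMfnn) habsnn, hc3]
  · -- x ≤ x₀
    have iiA : IntervalIntegrable (fun ξ => K x ξ * f ξ t₀) volume 0 x :=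
      ii2 (cc x hxL'.le) le_rfl h0x.le le_rfl
    have iiP : IntervalIntegrable (fun ξ => K x₀ ξ * f ξ t₀) volume 0 x :=
      ii2 (cc x₀ hxL.le) le_rfl h0x.le hxx
    have iiQ : IntervalIntegrable (fun ξ => K x₀ ξ * f ξ t₀) volume x x₀ :=
      ii2 (cc x₀ hxL.le) h0x.le hxx le_rfl
    have iiT : IntervalIntegrable (fun ξ => (K' (x₀, ξ)) (1, 0) * f ξ t₀) volume 0 x :=
      ii2 ccx le_rfl h0x.le hxx
    have iiU : IntervalIntegrable (fun ξ => (K' (x₀, ξ)) (1, 0) * f ξ t₀) volume x x₀ :=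
      ii2 ccx h0x.le hxx le_rfl
    have e1 := integral_add_adjacent_intervals iiP iiQ
    have e4 := integral_add_adjacent_intervals iiT iiU
    have e2 : (∫ ξ in x..x₀, (K x₀ ξ * f ξ t₀ - K x₀ x₀ * f x₀ t₀))
        = (∫ ξ in x..x₀, K x₀ ξ * f ξ t₀) - (x₀ - x) * (K x₀ x₀ * f x₀ t₀) := by
      rw [intervalIntegral.integral_sub iiQ intervalIntegrable_const,
        intervalIntegral.integral_const, smul_eq_mul]
    have e3 : (∫ ξ in (0:ℝ)..x, ((K x ξ - K x₀ ξ - (x - x₀) * (K' (x₀, ξ)) (1, 0)) * f ξ t₀))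
        = (∫ ξ in (0:ℝ)..x, K x ξ * f ξ t₀) - (∫ ξ in (0:ℝ)..x, K x₀ ξ * f ξ t₀)
          - (x - x₀) * ∫ ξ in (0:ℝ)..x, (K' (x₀, ξ)) (1, 0) * f ξ t₀ := by
      have hptwise : ∀ ξ : ℝ, (K x ξ - K x₀ ξ - (x - x₀) * (K' (x₀, ξ)) (1, 0)) * f ξ t₀
          = K x ξ * f ξ t₀ - K x₀ ξ * f ξ t₀ - (x - x₀) * ((K' (x₀, ξ)) (1, 0) * f ξ t₀) :=
        fun ξ => by ring
      simp_rw [hptwise]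
      rw [intervalIntegral.integral_sub (iiA.sub iiP) (iiT.const_mul (x - x₀)),
        intervalIntegral.integral_sub iiA iiP, intervalIntegral.integral_const_mul]
    have hsplit : (∫ ξ in (0:ℝ)..x, K x ξ * f ξ t₀) - (∫ ξ in (0:ℝ)..x₀, K x₀ ξ * f ξ t₀)
        - (x - x₀) * (K x₀ x₀ * f x₀ t₀
            + ∫ ξ in (0:ℝ)..x₀, (K' (x₀, ξ)) (1, 0) * f ξ t₀)
        = (∫ ξ in (0:ℝ)..x, ((K x ξ - K x₀ ξ - (x - x₀) * (K' (x₀, ξ)) (1, 0)) * f ξ t₀))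
          - (∫ ξ in x..x₀, (K x₀ ξ * f ξ t₀ - K x₀ x₀ * f x₀ t₀))
          - (x - x₀) * ∫ ξ in x..x₀, (K' (x₀, ξ)) (1, 0) * f ξ t₀ := by
      linear_combination e1 + (x - x₀) * e4 + e2 - e3
    rw [hsplit]
    have hR : ‖∫ ξ in x..x₀, (K x₀ ξ * f ξ t₀ - K x₀ x₀ * f x₀ t₀)‖ ≤ ε * |x - x₀| := by
      have hb := intervalIntegral.norm_integral_le_of_norm_le_const (C := ε)
        (f := fun ξ => K x₀ ξ * f ξ t₀ - K x₀ x₀ * f x₀ t₀) (a := x) (b := x₀) ?_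
      · calc ‖∫ ξ in x..x₀, (K x₀ ξ * f ξ t₀ - K x₀ x₀ * f x₀ t₀)‖
            ≤ ε * |x₀ - x| := hb
          _ = ε * |x - x₀| := by rw [abs_sub_comm]
      · intro ξ hξ
        rw [uIoc_of_le hxx] at hξ
        have hm1 : ((x₀, ξ) : ℝ × ℝ) ∈ Tri L :=
          mem_Tri (le_trans h0x.le hξ.1.le) hξ.2 hxL.le
        have hm2 : ((x₀, x₀) : ℝ × ℝ) ∈ Tri L := mem_Tri hx0.le le_rfl hxL.le
        have hd : dist ((x₀, ξ) : ℝ × ℝ) ((x₀, x₀) : ℝ × ℝ) < δ₂ := by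
          rw [Prod.dist_eq, Real.dist_eq, Real.dist_eq, sub_self, abs_zero]
          apply max_lt hδ₂pos
          calc |ξ - x₀| = x₀ - ξ := by rw [abs_sub_comm]; exact abs_of_nonneg (by linarith [hξ.2])
            _ < x₀ - x := by linarith [hξ.1]
            _ ≤ |x - x₀| := by rw [abs_sub_comm]; exact le_abs_self _
            _ < δ₂ := hdδ₂
        have := hδ₂ (x₀, ξ) hm1 (x₀, x₀) hm2 hd
        rw [Real.dist_eq] at this
        exact this.le
    have hS : ‖∫ ξ in (0:ℝ)..x, ((K x ξ - K x₀ ξ - (x - x₀) * (K' (x₀, ξ)) (1, 0)) * f ξ t₀)‖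
        ≤ ε * |x - x₀| * Mf * L := by
      have hb := intervalIntegral.norm_integral_le_of_norm_le_const
        (C := ε * |x - x₀| * Mf)
        (f := fun ξ => (K x ξ - K x₀ ξ - (x - x₀) * (K' (x₀, ξ)) (1, 0)) * f ξ t₀)
        (a := 0) (b := x) ?_
      · rw [sub_zero, abs_of_pos h0x] at hb
        calc ‖∫ ξ in (0:ℝ)..x, ((K x ξ - K x₀ ξ - (x - x₀) * (K' (x₀, ξ)) (1, 0)) * f ξ t₀)‖
            ≤ ε * |x - x₀| * Mf * x := hb
          _ ≤ ε * |x - x₀| * Mf * L :=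
            mul_le_mul_of_nonneg_left hxL'.le (by positivity)
      · intro ξ hξ
        rw [uIoc_of_le h0x.le] at hξ
        rw [norm_mul]
        have h1 := key ξ hξ.1.le hξ.2 (le_trans hξ.2 hxx)
        have h2 := hMf ξ ⟨hξ.1.le, le_trans hξ.2 hxL'.le⟩
        calc ‖K x ξ - K x₀ ξ - (x - x₀) * (K' (x₀, ξ)) (1, 0)‖ * ‖f ξ t₀‖
            ≤ (ε * |x - x₀|) * Mf := mul_le_mul h1 h2 (norm_nonneg _) (by positivity)
          _ = ε * |x - x₀| * Mf := by ring
    have hU : ‖(x - x₀) * ∫ ξ in x..x₀, (K' (x₀, ξ)) (1, 0) * f ξ t₀‖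
        ≤ ε * (M1 * Mf) * |x - x₀| := by
      rw [norm_mul, Real.norm_eq_abs]
      have hb := intervalIntegral.norm_integral_le_of_norm_le_const (C := M1 * Mf)
        (f := fun ξ => (K' (x₀, ξ)) (1, 0) * f ξ t₀) (a := x) (b := x₀) ?_
      · have h1 : ‖∫ ξ in x..x₀, (K' (x₀, ξ)) (1, 0) * f ξ t₀‖ ≤ M1 * Mf * |x - x₀| := by
          calc ‖∫ ξ in x..x₀, (K' (x₀, ξ)) (1, 0) * f ξ t₀‖ ≤ M1 * Mf * |x₀ - x| := hb
            _ = M1 * Mf * |x - x₀| := by rw [abs_sub_comm]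
        calc |x - x₀| * ‖∫ ξ in x..x₀, (K' (x₀, ξ)) (1, 0) * f ξ t₀‖
            ≤ |x - x₀| * (M1 * Mf * |x - x₀|) :=
              mul_le_mul_of_nonneg_left h1 habsnn
          _ = (M1 * Mf * |x - x₀|) * |x - x₀| := by ring
          _ ≤ (M1 * Mf * |x - x₀|) * ε := by
              apply mul_le_mul_of_nonneg_left hdε (by positivity)
          _ = ε * (M1 * Mf) * |x - x₀| := by ring
      · intro ξ hξ
        rw [uIoc_of_le hxx] at hξ
        rw [norm_mul]
        have hm : ((x₀, ξ) : ℝ × ℝ) ∈ Tri L := mem_Tri (le_trans h0x.le hξ.1.le) hξ.2 hxL.le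
        have h1 : ‖(K' (x₀, ξ)) (1, 0)‖ ≤ M1 := by
          calc ‖(K' (x₀, ξ)) (1, 0)‖ ≤ ‖K' (x₀, ξ)‖ * ‖(((1:ℝ), (0:ℝ)) : ℝ × ℝ)‖ :=
              ContinuousLinearMap.le_opNorm _ _
            _ = ‖K' (x₀, ξ)‖ := by rw [norm10, mul_one]
            _ ≤ M1 := hM1 _ hm
        have h2 := hMf ξ ⟨le_trans h0x.le hξ.1.le, le_trans hξ.2 hxL.le⟩
        exact mul_le_mul h1 h2 (norm_nonneg _) hM1nn
    calc ‖(∫ ξ in (0:ℝ)..x, ((K x ξ - K x₀ ξ - (x - x₀) * (K' (x₀, ξ)) (1, 0)) * f ξ t₀))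
          - (∫ ξ in x..x₀, (K x₀ ξ * f ξ t₀ - K x₀ x₀ * f x₀ t₀))
          - (x - x₀) * ∫ ξ in x..x₀, (K' (x₀, ξ)) (1, 0) * f ξ t₀‖
        ≤ ε * |x - x₀| * Mf * L + ε * |x - x₀| + ε * (M1 * Mf) * |x - x₀| := by
          have := norm_sub_le ((∫ ξ in (0:ℝ)..x, ((K x ξ - K x₀ ξ - (x - x₀) * (K' (x₀, ξ)) (1, 0)) * f ξ t₀))
            - (∫ ξ in x..x₀, (K x₀ ξ * f ξ t₀ - K x₀ x₀ * f x₀ t₀)))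
            ((x - x₀) * ∫ ξ in x..x₀, (K' (x₀, ξ)) (1, 0) * f ξ t₀)
          have h2 := norm_sub_le (∫ ξ in (0:ℝ)..x, ((K x ξ - K x₀ ξ - (x - x₀) * (K' (x₀, ξ)) (1, 0)) * f ξ t₀))
            (∫ ξ in x..x₀, (K x₀ ξ * f ξ t₀ - K x₀ x₀ * f x₀ t₀))
          linarith
      _ ≤ c * |x - x₀| := by nlinarith [hc3, habsnn, hε.le, hMfnn, hM1nn, mul_nonneg (mul_nonneg hε.le habsnn) hMfnn]
end
end Stmt4Aux

open Stmt4Aux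

set_option maxHeartbeats 1000000 in
/-- with arbitrary approximate kernels `K̂^w, K̂^v ∈ C¹(𝒯)` and the
approximated control `Û`, the transformed states
`α̂(x,t) = w̃(x,t)`,
`β̂(x,t) = ṽ(x,t) − ∫₀^x K̂^w(x,ξ) w̃(ξ,t) dξ − ∫₀^x K̂^v(x,ξ) ṽ(ξ,t) dξ`
satisfy `∂_t α̂ + λ₁ ∂_x α̂ = 0`, `α̂(0,t) = −r β̂(0,t)`, `β̂(L,t) = 0`, and a
perturbed transport equation for `β̂` whose source terms are exactly the
residuals of the approximate kernels in the kernel equations. -/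
theorem stmt_4 (L lam1 lam2 τ vs : ℝ)
    (hL : 0 < L) (h1 : 0 < lam1) (h2 : 0 < lam2) (hτ : 0 < τ) (hvs : 0 < vs)
    -- the approximate kernels, C¹ on the triangle 𝒯
    (Khw Khv : ℝ → ℝ → ℝ)
    (hKhwC1 : ContDiffOn ℝ 1 (fun p : ℝ × ℝ => Khw p.1 p.2)
      {p : ℝ × ℝ | 0 ≤ p.2 ∧ p.2 ≤ p.1 ∧ p.1 ≤ L})
    (hKhvC1 : ContDiffOn ℝ 1 (fun p : ℝ × ℝ => Khv p.1 p.2)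
      {p : ℝ × ℝ | 0 ≤ p.2 ∧ p.2 ≤ p.1 ∧ p.1 ≤ L})
    -- a C¹ solution (w̃, ṽ) of the plant with the approximated control
    (w v : ℝ → ℝ → ℝ) (U : ℝ → ℝ)
    (hwC1 : ContDiffOn ℝ 1 (fun p : ℝ × ℝ => w p.1 p.2) (Icc 0 L ×ˢ Ici 0))
    (hvC1 : ContDiffOn ℝ 1 (fun p : ℝ × ℝ => v p.1 p.2) (Icc 0 L ×ˢ Ici 0))
    (hwpde : ∀ x ∈ Ioo (0:ℝ) L, ∀ t ∈ Ioi (0:ℝ),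
      deriv (fun s => w x s) t + lam1 * deriv (fun y => w y t) x = 0)
    (hvpde : ∀ x ∈ Ioo (0:ℝ) L, ∀ t ∈ Ioi (0:ℝ),
      deriv (fun s => v x s) t - lam2 * deriv (fun y => v y t) x
        = (-(1 / τ) * Real.exp (-x / (τ * vs))) * w x t)
    (hbc0 : ∀ t : ℝ, 0 ≤ t → w 0 t = -(lam2 / lam1) * v 0 t)
    (hbcL : ∀ t : ℝ, 0 ≤ t →
      v L t = Real.exp (-L / (τ * vs)) * w L t + U t)
    (hU : ∀ t : ℝ, 0 ≤ t →
      U t = -Real.exp (-L / (τ * vs)) * w L t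
        + (∫ ξ in (0:ℝ)..L, Khw L ξ * w ξ t)
        + ∫ ξ in (0:ℝ)..L, Khv L ξ * v ξ t)
    -- the transformed states
    (αh βh : ℝ → ℝ → ℝ)
    (hαdef : ∀ x t : ℝ, αh x t = w x t)
    (hβdef : ∀ x t : ℝ, βh x t = v x t
      - (∫ ξ in (0:ℝ)..x, Khw x ξ * w ξ t)
      - ∫ ξ in (0:ℝ)..x, Khv x ξ * v ξ t) :
    (∀ x ∈ Ioo (0:ℝ) L, ∀ t ∈ Ioi (0:ℝ),
      deriv (fun s => αh x s) t + lam1 * deriv (fun y => αh y t) x = 0) ∧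
    (∀ t : ℝ, 0 ≤ t → αh 0 t = -(lam2 / lam1) * βh 0 t) ∧
    (∀ t : ℝ, 0 ≤ t → βh L t = 0) ∧
    (∀ x ∈ Ioo (0:ℝ) L, ∀ t ∈ Ioi (0:ℝ),
      deriv (fun s => βh x s) t - lam2 * deriv (fun y => βh y t) x
        = ((-(1 / τ) * Real.exp (-x / (τ * vs))) + (lam1 + lam2) * Khw x x) * w x t
          + lam2 * (Khw x 0 + Khv x 0) * v 0 t
          + (∫ ξ in (0:ℝ)..x,
              (lam2 * deriv (fun y => Khw y ξ) x - lam1 * deriv (fun s => Khw x s) ξ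
                - (-(1 / τ) * Real.exp (-ξ / (τ * vs))) * Khv x ξ) * w ξ t)
          + lam2 * ∫ ξ in (0:ℝ)..x,
              (deriv (fun y => Khv y ξ) x + deriv (fun s => Khv x s) ξ) * v ξ t) := by
  have hKw : ContDiffOn ℝ 1 (fun p : ℝ × ℝ => Khw p.1 p.2) (Tri L) := hKhwC1
  have hKv : ContDiffOn ℝ 1 (fun p : ℝ × ℝ => Khv p.1 p.2) (Tri L) := hKhvC1
  have hwR : ContDiffOn ℝ 1 (fun p : ℝ × ℝ => w p.1 p.2) (Rec L) := hwC1
  have hvR : ContDiffOn ℝ 1 (fun p : ℝ × ℝ => v p.1 p.2) (Rec L) := hvC1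
  refine ⟨?_, ?_, ?_, ?_⟩
  · intro x hx t ht
    rw [show (fun s => αh x s) = (fun s => w x s) from funext fun s => hαdef x s,
      show (fun y => αh y t) = (fun y => w y t) from funext fun y => hαdef y t]
    exact hwpde x hx t ht
  · intro t ht
    rw [hαdef, hβdef]
    simp only [intervalIntegral.integral_same, sub_zero]
    rw [hbc0 t ht]
  · intro t ht
    rw [hβdef, hbcL t ht, hU t ht]; ring
  · intro x₀ hx₀ t₀ ht₀
    obtain ⟨hx0, hxL⟩ := hx₀
    have ht : (0:ℝ) < t₀ := ht₀
    -- canonical derivative values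
    set W' := fderivWithin ℝ (fun p : ℝ × ℝ => w p.1 p.2) (Rec L) with hW'def
    set V' := fderivWithin ℝ (fun p : ℝ × ℝ => v p.1 p.2) (Rec L) with hV'def
    set Aw' := fderivWithin ℝ (fun p : ℝ × ℝ => Khw p.1 p.2) (Tri L) with hAw'def
    set Av' := fderivWithin ℝ (fun p : ℝ × ℝ => Khv p.1 p.2) (Tri L) with hAv'def
    have hmem0 : Rec L ∈ 𝓝 ((x₀, t₀) : ℝ × ℝ) := Rec_mem_nhds hx0 hxL ht
    -- t-derivative of βh
    have hvt : HasDerivAt (fun s => v x₀ s) ((V' (x₀, t₀)) (0, 1)) t₀ :=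
      hasDerivAt_slice_snd hvR hmem0
    have hvx : HasDerivAt (fun y => v y t₀) ((V' (x₀, t₀)) (1, 0)) x₀ :=
      hasDerivAt_slice_fst hvR hmem0
    have hIw_t : HasDerivAt (fun s => ∫ ξ in (0:ℝ)..x₀, Khw x₀ ξ * w ξ s)
        (∫ ξ in (0:ℝ)..x₀, Khw x₀ ξ * (W' (ξ, t₀)) (0, 1)) t₀ :=
      hasDerivAt_param_t hL hKw hwR ⟨hx0, hxL⟩ ht
    have hIv_t : HasDerivAt (fun s => ∫ ξ in (0:ℝ)..x₀, Khv x₀ ξ * v ξ s)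
        (∫ ξ in (0:ℝ)..x₀, Khv x₀ ξ * (V' (ξ, t₀)) (0, 1)) t₀ :=
      hasDerivAt_param_t hL hKv hvR ⟨hx0, hxL⟩ ht
    have hβt : HasDerivAt (fun s => βh x₀ s)
        ((V' (x₀, t₀)) (0, 1) - (∫ ξ in (0:ℝ)..x₀, Khw x₀ ξ * (W' (ξ, t₀)) (0, 1))
          - ∫ ξ in (0:ℝ)..x₀, Khv x₀ ξ * (V' (ξ, t₀)) (0, 1)) t₀ := by
      rw [show (fun s => βh x₀ s) = (fun s => v x₀ s
        - (∫ ξ in (0:ℝ)..x₀, Khw x₀ ξ * w ξ s)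
        - ∫ ξ in (0:ℝ)..x₀, Khv x₀ ξ * v ξ s) from funext fun s => hβdef x₀ s]
      exact (hvt.sub hIw_t).sub hIv_t
    -- x-derivative of βh
    have hJw : HasDerivAt (fun y => ∫ ξ in (0:ℝ)..y, Khw y ξ * w ξ t₀)
        (Khw x₀ x₀ * w x₀ t₀ + ∫ ξ in (0:ℝ)..x₀, (Aw' (x₀, ξ)) (1, 0) * w ξ t₀) x₀ :=
      hasDerivAt_leibniz_x hL hKw hwR ⟨hx0, hxL⟩ ht
    have hJv : HasDerivAt (fun y => ∫ ξ in (0:ℝ)..y, Khv y ξ * v ξ t₀)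
        (Khv x₀ x₀ * v x₀ t₀ + ∫ ξ in (0:ℝ)..x₀, (Av' (x₀, ξ)) (1, 0) * v ξ t₀) x₀ :=
      hasDerivAt_leibniz_x hL hKv hvR ⟨hx0, hxL⟩ ht
    have hβx : HasDerivAt (fun y => βh y t₀)
        ((V' (x₀, t₀)) (1, 0)
          - (Khw x₀ x₀ * w x₀ t₀ + ∫ ξ in (0:ℝ)..x₀, (Aw' (x₀, ξ)) (1, 0) * w ξ t₀)
          - (Khv x₀ x₀ * v x₀ t₀ + ∫ ξ in (0:ℝ)..x₀, (Av' (x₀, ξ)) (1, 0) * v ξ t₀)) x₀ := by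
      rw [show (fun y => βh y t₀) = (fun y => v y t₀
        - (∫ ξ in (0:ℝ)..y, Khw y ξ * w ξ t₀)
        - ∫ ξ in (0:ℝ)..y, Khv y ξ * v ξ t₀) from funext fun y => hβdef y t₀]
      exact (hvx.sub hJw).sub hJv
    -- continuity facts
    have hWc : ContinuousOn W' (Rec L) :=
      hwR.continuousOn_fderivWithin (uniqueDiffOn_Rec hL) le_rfl
    have hVc : ContinuousOn V' (Rec L) :=
      hvR.continuousOn_fderivWithin (uniqueDiffOn_Rec hL) le_rfl
    have hmemI : ∀ ξ ∈ Icc (0:ℝ) x₀, ((ξ, t₀) : ℝ × ℝ) ∈ Rec L := fun ξ hξ =>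
      mem_Rec hξ.1 (le_trans hξ.2 hxL.le) ht.le
    have hmemT : ∀ ξ ∈ Icc (0:ℝ) x₀, ((x₀, ξ) : ℝ × ℝ) ∈ Tri L := fun ξ hξ =>
      mem_Tri hξ.1 hξ.2 hxL.le
    have cKw : ContinuousOn (fun ξ => Khw x₀ ξ) (Icc 0 x₀) :=
      contOn_slice_snd hKw.continuousOn x₀ hmemT
    have cKv : ContinuousOn (fun ξ => Khv x₀ ξ) (Icc 0 x₀) :=
      contOn_slice_snd hKv.continuousOn x₀ hmemT
    have cw : ContinuousOn (fun ξ => w ξ t₀) (Icc 0 x₀) :=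
      contOn_slice_fst hwR.continuousOn t₀ hmemI
    have cv : ContinuousOn (fun ξ => v ξ t₀) (Icc 0 x₀) :=
      contOn_slice_fst hvR.continuousOn t₀ hmemI
    have ccurveR : ContinuousOn (fun ξ : ℝ => ((ξ, t₀) : ℝ × ℝ)) (Icc 0 x₀) :=
      (continuous_id.prodMk continuous_const).continuousOn
    have ccurveT : ContinuousOn (fun ξ : ℝ => ((x₀, ξ) : ℝ × ℝ)) (Icc 0 x₀) :=
      (continuous_const.prodMk continuous_id).continuousOn
    have cW'x : ContinuousOn (fun ξ => (W' (ξ, t₀)) (1, 0)) (Icc 0 x₀) :=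
      ((hWc.comp ccurveR hmemI).clm_apply continuousOn_const)
    have cV'x : ContinuousOn (fun ξ => (V' (ξ, t₀)) (1, 0)) (Icc 0 x₀) :=
      ((hVc.comp ccurveR hmemI).clm_apply continuousOn_const)
    have hAwc : ContinuousOn Aw' (Tri L) :=
      hKw.continuousOn_fderivWithin (uniqueDiffOn_Tri hL) le_rfl
    have hAvc : ContinuousOn Av' (Tri L) :=
      hKv.continuousOn_fderivWithin (uniqueDiffOn_Tri hL) le_rfl
    have cAwx : ContinuousOn (fun ξ => (Aw' (x₀, ξ)) (1, 0)) (Icc 0 x₀) :=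
      ((hAwc.comp ccurveT hmemT).clm_apply continuousOn_const)
    have cAwξ : ContinuousOn (fun ξ => (Aw' (x₀, ξ)) (0, 1)) (Icc 0 x₀) :=
      ((hAwc.comp ccurveT hmemT).clm_apply continuousOn_const)
    have cAvx : ContinuousOn (fun ξ => (Av' (x₀, ξ)) (1, 0)) (Icc 0 x₀) :=
      ((hAvc.comp ccurveT hmemT).clm_apply continuousOn_const)
    have cAvξ : ContinuousOn (fun ξ => (Av' (x₀, ξ)) (0, 1)) (Icc 0 x₀) :=
      ((hAvc.comp ccurveT hmemT).clm_apply continuousOn_const)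
    have cexp : ContinuousOn (fun ξ : ℝ => -(1 / τ) * Real.exp (-ξ / (τ * vs))) (Icc 0 x₀) :=
      (continuous_const.mul (Real.continuous_exp.comp
        ((continuous_neg).div_const _))).continuousOn
    -- PDE substitution inside the integrals
    have hwt_eq : ∀ ξ ∈ uIoc (0:ℝ) x₀, (W' (ξ, t₀)) (0, 1) = -(lam1 * (W' (ξ, t₀)) (1, 0)) := by
      intro ξ hξ
      rw [uIoc_of_le hx0.le] at hξ
      have hmem : Rec L ∈ 𝓝 ((ξ, t₀) : ℝ × ℝ) :=
        Rec_mem_nhds hξ.1 (lt_of_le_of_lt hξ.2 hxL) ht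
      have e1 : HasDerivAt (fun s => w ξ s) ((W' (ξ, t₀)) (0, 1)) t₀ :=
        hasDerivAt_slice_snd hwR hmem
      have e2 : HasDerivAt (fun y => w y t₀) ((W' (ξ, t₀)) (1, 0)) ξ :=
        hasDerivAt_slice_fst hwR hmem
      have hp := hwpde ξ ⟨hξ.1, lt_of_le_of_lt hξ.2 hxL⟩ t₀ ht₀
      rw [e1.deriv, e2.deriv] at hp
      linarith
    have hvt_eq : ∀ ξ ∈ uIoc (0:ℝ) x₀, (V' (ξ, t₀)) (0, 1)
        = lam2 * (V' (ξ, t₀)) (1, 0) + (-(1 / τ) * Real.exp (-ξ / (τ * vs))) * w ξ t₀ := by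
      intro ξ hξ
      rw [uIoc_of_le hx0.le] at hξ
      have hmem : Rec L ∈ 𝓝 ((ξ, t₀) : ℝ × ℝ) :=
        Rec_mem_nhds hξ.1 (lt_of_le_of_lt hξ.2 hxL) ht
      have e1 : HasDerivAt (fun s => v ξ s) ((V' (ξ, t₀)) (0, 1)) t₀ :=
        hasDerivAt_slice_snd hvR hmem
      have e2 : HasDerivAt (fun y => v y t₀) ((V' (ξ, t₀)) (1, 0)) ξ :=
        hasDerivAt_slice_fst hvR hmem
      have hp := hvpde ξ ⟨hξ.1, lt_of_le_of_lt hξ.2 hxL⟩ t₀ ht₀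
      rw [e1.deriv, e2.deriv] at hp
      linarith
    have hIw_eq : (∫ ξ in (0:ℝ)..x₀, Khw x₀ ξ * (W' (ξ, t₀)) (0, 1))
        = -(lam1 * ∫ ξ in (0:ℝ)..x₀, Khw x₀ ξ * (W' (ξ, t₀)) (1, 0)) := by
      rw [← intervalIntegral.integral_const_mul, ← intervalIntegral.integral_neg]
      exact intervalIntegral.integral_congr_ae
        (ae_of_all _ fun ξ hξ => by rw [hwt_eq ξ hξ]; ring)
    have hIv_eq : (∫ ξ in (0:ℝ)..x₀, Khv x₀ ξ * (V' (ξ, t₀)) (0, 1))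
        = lam2 * (∫ ξ in (0:ℝ)..x₀, Khv x₀ ξ * (V' (ξ, t₀)) (1, 0))
          + ∫ ξ in (0:ℝ)..x₀, Khv x₀ ξ * ((-(1 / τ) * Real.exp (-ξ / (τ * vs))) * w ξ t₀) := by
      rw [show (∫ ξ in (0:ℝ)..x₀, Khv x₀ ξ * (V' (ξ, t₀)) (0, 1))
          = ∫ ξ in (0:ℝ)..x₀, (lam2 * (Khv x₀ ξ * (V' (ξ, t₀)) (1, 0))
            + Khv x₀ ξ * ((-(1 / τ) * Real.exp (-ξ / (τ * vs))) * w ξ t₀)) from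
        intervalIntegral.integral_congr_ae
          (ae_of_all _ fun ξ hξ => by rw [hvt_eq ξ hξ]; ring)]
      rw [intervalIntegral.integral_add
        (((ii2 (cKv.fun_mul cV'x) le_rfl hx0.le le_rfl)).const_mul lam2)
        (ii2 (cKv.fun_mul (cexp.fun_mul cw)) le_rfl hx0.le le_rfl),
        intervalIntegral.integral_const_mul]
    -- integration by parts
    have hIBPw := ibp_kernel hL hKw hwR ⟨hx0, hxL⟩ ht
    have hIBPv := ibp_kernel hL hKv hvR ⟨hx0, hxL⟩ ht
    rw [← hW'def, ← hAw'def] at hIBPw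
    rw [← hV'def, ← hAv'def] at hIBPv
    -- rewrite the statement's integrals into canonical form
    have hne : ∀ᵐ ξ : ℝ, ξ ≠ x₀ := by
      rw [MeasureTheory.ae_iff]
      simpa using measure_singleton (α := ℝ) x₀
    have hRw : (∫ ξ in (0:ℝ)..x₀,
          (lam2 * deriv (fun y => Khw y ξ) x₀ - lam1 * deriv (fun s => Khw x₀ s) ξ
            - (-(1 / τ) * Real.exp (-ξ / (τ * vs))) * Khv x₀ ξ) * w ξ t₀)
        = lam2 * (∫ ξ in (0:ℝ)..x₀, (Aw' (x₀, ξ)) (1, 0) * w ξ t₀)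
          - lam1 * (∫ ξ in (0:ℝ)..x₀, (Aw' (x₀, ξ)) (0, 1) * w ξ t₀)
          - ∫ ξ in (0:ℝ)..x₀,
              ((-(1 / τ) * Real.exp (-ξ / (τ * vs))) * Khv x₀ ξ) * w ξ t₀ := by
      rw [show (∫ ξ in (0:ℝ)..x₀,
          (lam2 * deriv (fun y => Khw y ξ) x₀ - lam1 * deriv (fun s => Khw x₀ s) ξ
            - (-(1 / τ) * Real.exp (-ξ / (τ * vs))) * Khv x₀ ξ) * w ξ t₀)
          = ∫ ξ in (0:ℝ)..x₀, (lam2 * ((Aw' (x₀, ξ)) (1, 0) * w ξ t₀)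
              - lam1 * ((Aw' (x₀, ξ)) (0, 1) * w ξ t₀)
              - ((-(1 / τ) * Real.exp (-ξ / (τ * vs))) * Khv x₀ ξ) * w ξ t₀) from ?_]
      · rw [intervalIntegral.integral_sub
          (((ii2 (cAwx.fun_mul cw) le_rfl hx0.le le_rfl).const_mul lam2).sub
            ((ii2 (cAwξ.fun_mul cw) le_rfl hx0.le le_rfl).const_mul lam1))
          (ii2 ((cexp.fun_mul cKv).fun_mul cw) le_rfl hx0.le le_rfl),
          intervalIntegral.integral_sub
            ((ii2 (cAwx.fun_mul cw) le_rfl hx0.le le_rfl).const_mul lam2)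
            ((ii2 (cAwξ.fun_mul cw) le_rfl hx0.le le_rfl).const_mul lam1),
          intervalIntegral.integral_const_mul, intervalIntegral.integral_const_mul]
      · apply intervalIntegral.integral_congr_ae
        filter_upwards [hne] with ξ hξne hξI
        rw [uIoc_of_le hx0.le] at hξI
        have hξlt : ξ < x₀ := lt_of_le_of_ne hξI.2 hξne
        have hmem : Tri L ∈ 𝓝 ((x₀, ξ) : ℝ × ℝ) := Tri_mem_nhds hξI.1 hξlt hxL
        have d1 : HasDerivAt (fun y => Khw y ξ) ((Aw' (x₀, ξ)) (1, 0)) x₀ :=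
          hasDerivAt_slice_fst hKw hmem
        have d2 : HasDerivAt (fun s => Khw x₀ s) ((Aw' (x₀, ξ)) (0, 1)) ξ :=
          hasDerivAt_slice_snd hKw hmem
        rw [d1.deriv, d2.deriv]
        ring
    have hRv : (∫ ξ in (0:ℝ)..x₀,
          (deriv (fun y => Khv y ξ) x₀ + deriv (fun s => Khv x₀ s) ξ) * v ξ t₀)
        = (∫ ξ in (0:ℝ)..x₀, (Av' (x₀, ξ)) (1, 0) * v ξ t₀)
          + ∫ ξ in (0:ℝ)..x₀, (Av' (x₀, ξ)) (0, 1) * v ξ t₀ := by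
      rw [show (∫ ξ in (0:ℝ)..x₀,
          (deriv (fun y => Khv y ξ) x₀ + deriv (fun s => Khv x₀ s) ξ) * v ξ t₀)
          = ∫ ξ in (0:ℝ)..x₀, ((Av' (x₀, ξ)) (1, 0) * v ξ t₀
            + (Av' (x₀, ξ)) (0, 1) * v ξ t₀) from ?_]
      · exact intervalIntegral.integral_add (ii2 (cAvx.mul cv) le_rfl hx0.le le_rfl)
          (ii2 (cAvξ.mul cv) le_rfl hx0.le le_rfl)
      · apply intervalIntegral.integral_congr_ae
        filter_upwards [hne] with ξ hξne hξI
        rw [uIoc_of_le hx0.le] at hξI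
        have hξlt : ξ < x₀ := lt_of_le_of_ne hξI.2 hξne
        have hmem : Tri L ∈ 𝓝 ((x₀, ξ) : ℝ × ℝ) := Tri_mem_nhds hξI.1 hξlt hxL
        have d1 : HasDerivAt (fun y => Khv y ξ) ((Av' (x₀, ξ)) (1, 0)) x₀ :=
          hasDerivAt_slice_fst hKv hmem
        have d2 : HasDerivAt (fun s => Khv x₀ s) ((Av' (x₀, ξ)) (0, 1)) ξ :=
          hasDerivAt_slice_snd hKv hmem
        rw [d1.deriv, d2.deriv]
        ring
    have hcomm : (∫ ξ in (0:ℝ)..x₀, Khv x₀ ξ * ((-(1 / τ) * Real.exp (-ξ / (τ * vs))) * w ξ t₀))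
        = ∫ ξ in (0:ℝ)..x₀, ((-(1 / τ) * Real.exp (-ξ / (τ * vs))) * Khv x₀ ξ) * w ξ t₀ :=
      intervalIntegral.integral_congr (fun ξ _ => by ring)
    have hp := hvpde x₀ ⟨hx0, hxL⟩ t₀ ht₀
    rw [hvt.deriv, hvx.deriv] at hp
    have hw0 : lam1 * w 0 t₀ = -(lam2 * v 0 t₀) := by
      rw [hbc0 t₀ ht.le]; field_simp
    rw [hβt.deriv, hβx.deriv, hRw, hRv, hIw_eq, hIv_eq, hIBPw, hIBPv, hcomm]
    linear_combination hp - Khw x₀ 0 * hw0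
end

section
/- Let ρ̄, v̄ ∈ C¹([0,L]×[0,∞)) satisfy the linearized ARZ system: ∂_t ρ̄ + v* ∂_x ρ̄ + ρ* ∂_x v̄ = 0 and ∂_t v̄ + (v* + ρ* V′) ∂_x v̄ = (V′ ρ̄ − v̄)/τ. Define q̄ = v* ρ̄ + ρ* v̄, w̃(x,t) = exp(x/(τ v*)) · (q̄(x,t) − (ρ* + v*/V′) v̄(x,t)), and ṽ(x,t) = −(v*/V′) v̄(x,t). Then w̃ and ṽ satisfy the diagonalized system ∂_t w̃ + λ₁ ∂_x w̃ = 0 and ∂_t ṽ − λ₂ ∂_x ṽ = c(x) w̃, where λ₁ = v*, λ₂ = −ρ* V′ − v*, and c(x) = −(1/τ) exp(−x/(τ v*)). -/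
open Set Real

/-- the Riemann-type transformation
`w̃(x,t) = e^{x/(τ v*)} (q̄ − (ρ* + v*/V′) v̄)(x,t)`, `ṽ(x,t) = −(v*/V′) v̄(x,t)`
(with `q̄ = v* ρ̄ + ρ* v̄`) diagonalizes the linearized ARZ system:
`∂_t w̃ + λ₁ ∂_x w̃ = 0` and `∂_t ṽ − λ₂ ∂_x ṽ = c(x) w̃`, where `λ₁ = v*`,
`λ₂ = −ρ* V′ − v*`, `c(x) = −(1/τ) e^{−x/(τ v*)}`. -/
theorem stmt_5 (L τ ρs vs Vp : ℝ)
    (hL : 0 < L) (hτ : 0 < τ) (hρs : 0 < ρs) (hvs : 0 < vs) (hVp : Vp < 0)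
    (hcong : 0 < -ρs * Vp - vs)
    (ρb vb w v : ℝ → ℝ → ℝ)
    (hρC1 : ContDiffOn ℝ 1 (fun p : ℝ × ℝ => ρb p.1 p.2) (Icc 0 L ×ˢ Ici 0))
    (hvC1 : ContDiffOn ℝ 1 (fun p : ℝ × ℝ => vb p.1 p.2) (Icc 0 L ×ˢ Ici 0))
    (hpde1 : ∀ x ∈ Ioo (0:ℝ) L, ∀ t ∈ Ioi (0:ℝ),
      deriv (fun s => ρb x s) t + vs * deriv (fun y => ρb y t) x
        + ρs * deriv (fun y => vb y t) x = 0)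
    (hpde2 : ∀ x ∈ Ioo (0:ℝ) L, ∀ t ∈ Ioi (0:ℝ),
      deriv (fun s => vb x s) t + (vs + ρs * Vp) * deriv (fun y => vb y t) x
        = (Vp * ρb x t - vb x t) / τ)
    (hwdef : ∀ x t : ℝ, w x t = Real.exp (x / (τ * vs))
      * ((vs * ρb x t + ρs * vb x t) - (ρs + vs / Vp) * vb x t))
    (hvdef : ∀ x t : ℝ, v x t = -(vs / Vp) * vb x t) :
    (∀ x ∈ Ioo (0:ℝ) L, ∀ t ∈ Ioi (0:ℝ),
      deriv (fun s => w x s) t + vs * deriv (fun y => w y t) x = 0) ∧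
    (∀ x ∈ Ioo (0:ℝ) L, ∀ t ∈ Ioi (0:ℝ),
      deriv (fun s => v x s) t - (-ρs * Vp - vs) * deriv (fun y => v y t) x
        = (-(1 / τ) * Real.exp (-x / (τ * vs))) * w x t) := by

  have hτ0 : τ ≠ 0 := ne_of_gt hτ
  have hvs0 : vs ≠ 0 := ne_of_gt hvs
  have hVp0 : Vp ≠ 0 := ne_of_lt hVp
  -- common setup for a point
  have key : ∀ x ∈ Ioo (0:ℝ) L, ∀ t ∈ Ioi (0:ℝ),
      (DifferentiableAt ℝ (fun s => ρb x s) t ∧ DifferentiableAt ℝ (fun y => ρb y t) x) ∧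
      (DifferentiableAt ℝ (fun s => vb x s) t ∧ DifferentiableAt ℝ (fun y => vb y t) x) := by
    intro x hx t ht
    have hmem : (x, t) ∈ (Ioo (0:ℝ) L ×ˢ Ioi (0:ℝ)) := ⟨hx, ht⟩
    have hopen : IsOpen (Ioo (0:ℝ) L ×ˢ Ioi (0:ℝ)) := isOpen_Ioo.prod isOpen_Ioi
    have hsub : (Ioo (0:ℝ) L ×ˢ Ioi (0:ℝ)) ⊆ (Icc 0 L ×ˢ Ici 0) :=
      prod_mono Ioo_subset_Icc_self Ioi_subset_Ici_self
    have hnhds : (Icc (0:ℝ) L ×ˢ Ici (0:ℝ)) ∈ nhds (x, t) :=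
      Filter.mem_of_superset (hopen.mem_nhds hmem) hsub
    have hρd : DifferentiableAt ℝ (fun p : ℝ × ℝ => ρb p.1 p.2) (x, t) :=
      (hρC1.contDiffAt hnhds).differentiableAt one_ne_zero
    have hvd : DifferentiableAt ℝ (fun p : ℝ × ℝ => vb p.1 p.2) (x, t) :=
      (hvC1.contDiffAt hnhds).differentiableAt one_ne_zero
    have hslicet : DifferentiableAt ℝ (fun s : ℝ => ((x : ℝ), s)) t :=
      (differentiableAt_const x).prodMk differentiableAt_id
    have hslicex : DifferentiableAt ℝ (fun y : ℝ => (y, (t : ℝ))) x :=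
      differentiableAt_id.prodMk (differentiableAt_const t)
    exact ⟨⟨hρd.comp t hslicet, (hρd.comp x hslicex :
        DifferentiableAt ℝ ((fun p : ℝ × ℝ => ρb p.1 p.2) ∘ fun y : ℝ => (y, t)) x)⟩,
      ⟨hvd.comp t hslicet, (hvd.comp x hslicex :
        DifferentiableAt ℝ ((fun p : ℝ × ℝ => vb p.1 p.2) ∘ fun y : ℝ => (y, t)) x)⟩⟩
  constructor
  · intro x hx t ht
    obtain ⟨⟨hρt, hρx⟩, hvt, hvx⟩ := key x hx t ht
    set a := deriv (fun s => ρb x s) t with ha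
    set b := deriv (fun y => ρb y t) x with hb
    set c := deriv (fun s => vb x s) t with hc
    set d := deriv (fun y => vb y t) x with hd
    set E := Real.exp (x / (τ * vs)) with hE
    have hwt : HasDerivAt (fun s => w x s)
        (E * (vs * a + ρs * c - (ρs + vs / Vp) * c)) t := by
      have h1 : HasDerivAt (fun s => (vs * ρb x s + ρs * vb x s) - (ρs + vs / Vp) * vb x s)
          (vs * a + ρs * c - (ρs + vs / Vp) * c) t :=
        ((hρt.hasDerivAt.const_mul vs).add (hvt.hasDerivAt.const_mul ρs)).sub
          (hvt.hasDerivAt.const_mul (ρs + vs / Vp))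
      have h2 := h1.const_mul E
      simp only [hwdef]
      exact h2
    have hEexp : HasDerivAt (fun y => Real.exp (y / (τ * vs))) (E * (1 / (τ * vs))) x := by
      have h0 : HasDerivAt (fun y : ℝ => y / (τ * vs)) (1 / (τ * vs)) x := by
        simpa using (hasDerivAt_id x).div_const (τ * vs)
      simpa using h0.exp
    have hF : HasDerivAt (fun y => (vs * ρb y t + ρs * vb y t) - (ρs + vs / Vp) * vb y t)
        (vs * b + ρs * d - (ρs + vs / Vp) * d) x :=
      ((hρx.hasDerivAt.const_mul vs).add (hvx.hasDerivAt.const_mul ρs)).sub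
        (hvx.hasDerivAt.const_mul (ρs + vs / Vp))
    have hwx : HasDerivAt (fun y => w y t)
        (E * (1 / (τ * vs)) * ((vs * ρb x t + ρs * vb x t) - (ρs + vs / Vp) * vb x t)
          + E * (vs * b + ρs * d - (ρs + vs / Vp) * d)) x := by
      have := hEexp.mul hF
      simp only [hwdef]
      exact this
    rw [hwt.deriv, hwx.deriv]
    have e1 := hpde1 x hx t ht
    have e2 := hpde2 x hx t ht
    simp only [← ha, ← hb, ← hc, ← hd] at e1 e2
    have ha' : a = -(vs * b) - ρs * d := by linarith
    have hc' : c = (Vp * ρb x t - vb x t) / τ - (vs + ρs * Vp) * d := by linarith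
    rw [ha', hc']
    field_simp
    ring
  · intro x hx t ht
    obtain ⟨⟨hρt, hρx⟩, hvt, hvx⟩ := key x hx t ht
    set c := deriv (fun s => vb x s) t with hc
    set d := deriv (fun y => vb y t) x with hd
    have hvt' : HasDerivAt (fun s => v x s) (-(vs / Vp) * c) t := by
      have := hvt.hasDerivAt.const_mul (-(vs / Vp))
      simp only [hvdef]
      exact this
    have hvx' : HasDerivAt (fun y => v y t) (-(vs / Vp) * d) x := by
      have := hvx.hasDerivAt.const_mul (-(vs / Vp))
      simp only [hvdef]
      exact this
    rw [hvt'.deriv, hvx'.deriv, hwdef]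
    have e2 := hpde2 x hx t ht
    simp only [← hc, ← hd] at e2
    have hc' : c = (Vp * ρb x t - vb x t) / τ - (vs + ρs * Vp) * d := by linarith
    rw [hc']
    rw [neg_div, Real.exp_neg]
    have hEne : Real.exp (x / (τ * vs)) ≠ 0 := Real.exp_ne_zero _
    field_simp
    ring
end

section
/- Let α, β ∈ C¹([0,L]×[0,∞)) satisfy ∂_t α + λ₁ ∂_x α = 0 and ∂_t β − λ₂ ∂_x β = 0 on (0,L)×(0,∞), with boundary conditions β(L,t) = 0 and α(0,t) = −r β(0,t) for all t ≥ 0. Then the solution vanishes identically after the finite time t_f = L/λ₁ + L/λ₂: α(x,t) = 0 and β(x,t) = 0 for all x ∈ [0,L] and all t ≥ t_f. More precisely, β(x,t) = 0 whenever t ≥ (L−x)/λ₂, and α(x,t) = 0 whenever t ≥ L/λ₂ + x/λ₁. -/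
open Set Real

set_option maxHeartbeats 800000

private lemma const_of_deriv_zero_Ioo {g : ℝ → ℝ} {a b : ℝ} (hab : a ≤ b)
    (hc : ContinuousOn g (Icc a b))
    (hd : ∀ s ∈ Ioo a b, HasDerivAt g 0 s) : g b = g a := by
  have hdiff : DifferentiableOn ℝ g (interior (Icc a b)) := by
    rw [interior_Icc]; exact fun s hs => (hd s hs).differentiableAt.differentiableWithinAt
  have hderiv0 : ∀ s ∈ interior (Icc a b), deriv g s = 0 := by
    rw [interior_Icc]; exact fun s hs => (hd s hs).deriv
  have hmono : MonotoneOn g (Icc a b) :=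
    monotoneOn_of_deriv_nonneg (convex_Icc a b) hc hdiff (fun s hs => (hderiv0 s hs).ge)
  have hanti : AntitoneOn g (Icc a b) :=
    antitoneOn_of_deriv_nonpos (convex_Icc a b) hc hdiff (fun s hs => (hderiv0 s hs).le)
  exact le_antisymm (hanti (left_mem_Icc.2 hab) (right_mem_Icc.2 hab) hab)
    (hmono (left_mem_Icc.2 hab) (right_mem_Icc.2 hab) hab)

private lemma dir_deriv {L : ℝ} {f : ℝ → ℝ → ℝ}
    (hf : ContDiffOn ℝ 1 (fun p : ℝ × ℝ => f p.1 p.2) (Icc 0 L ×ˢ Ici 0))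
    {a b c d s0 : ℝ} (hmem : (a + c*s0, b + d*s0) ∈ Ioo (0:ℝ) L ×ˢ Ioi (0:ℝ)) :
    HasDerivAt (fun s => f (a + c*s) (b + d*s))
      (c * deriv (fun y => f y (b + d*s0)) (a + c*s0)
        + d * deriv (fun u => f (a + c*s0) u) (b + d*s0)) s0 := by
  have hU : IsOpen (Ioo (0:ℝ) L ×ˢ Ioi (0:ℝ)) := isOpen_Ioo.prod isOpen_Ioi
  have hsub : (Ioo (0:ℝ) L ×ˢ Ioi (0:ℝ)) ⊆ (Icc 0 L ×ˢ Ici 0) :=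
    prod_mono Ioo_subset_Icc_self Ioi_subset_Ici_self
  have hdiff : DifferentiableAt ℝ (fun p : ℝ × ℝ => f p.1 p.2) (a + c*s0, b + d*s0) :=
    ((hf.mono hsub).contDiffAt (hU.mem_nhds hmem)).differentiableAt one_ne_zero
  have hF := hdiff.hasFDerivAt
  set D := fderiv ℝ (fun p : ℝ × ℝ => f p.1 p.2) (a + c*s0, b + d*s0) with hD
  have hxc : HasDerivAt (fun y : ℝ => (y, b + d*s0)) ((1:ℝ), (0:ℝ)) (a + c*s0) :=
    (hasDerivAt_id _).prodMk (hasDerivAt_const _ _)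
  have hx : HasDerivAt (fun y => f y (b + d*s0)) (D (1, 0)) (a + c*s0) :=
    by have := hF.comp_hasDerivAt (a + c*s0) hxc; exact this
  have htc : HasDerivAt (fun u : ℝ => ((a + c*s0 : ℝ), u)) ((0:ℝ), (1:ℝ)) (b + d*s0) :=
    (hasDerivAt_const _ _).prodMk (hasDerivAt_id _)
  have ht : HasDerivAt (fun u => f (a + c*s0) u) (D (0, 1)) (b + d*s0) :=
    hF.comp_hasDerivAt (b + d*s0) htc
  have h1 : HasDerivAt (fun s : ℝ => a + c*s) c s0 := by
    simpa using ((hasDerivAt_id s0).const_mul c).const_add a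
  have h2 : HasDerivAt (fun s : ℝ => b + d*s) d s0 := by
    simpa using ((hasDerivAt_id s0).const_mul d).const_add b
  have hg : HasDerivAt (fun s => f (a + c*s) (b + d*s)) (D (c, d)) s0 :=
    by have := hF.comp_hasDerivAt s0 (h1.prodMk h2); exact this
  have hcd : ((c, d) : ℝ × ℝ) = c • ((1:ℝ), (0:ℝ)) + d • ((0:ℝ), (1:ℝ)) := by
    simp [Prod.ext_iff]
  have hlin : D (c, d) = c * D (1, 0) + d * D (0, 1) := by
    rw [hcd, map_add, map_smul, map_smul]; simp [smul_eq_mul]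
  rw [hx.deriv, ht.deriv]
  exact hlin ▸ hg

/-- finite-time convergence of the target system.  Solutions of the
two transport equations with boundary conditions `β(L,t) = 0`, `α(0,t) = −r β(0,t)`
vanish identically after `t_f = L/λ₁ + L/λ₂`; more precisely `β(x,t) = 0` for
`t ≥ (L−x)/λ₂` and `α(x,t) = 0` for `t ≥ L/λ₂ + x/λ₁`. -/
theorem stmt_7 (L lam1 lam2 r : ℝ)
    (hL : 0 < L) (h1 : 0 < lam1) (h2 : 0 < lam2)
    (α β : ℝ → ℝ → ℝ)
    (hα : ContDiffOn ℝ 1 (fun p : ℝ × ℝ => α p.1 p.2) (Icc 0 L ×ˢ Ici 0))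
    (hβ : ContDiffOn ℝ 1 (fun p : ℝ × ℝ => β p.1 p.2) (Icc 0 L ×ˢ Ici 0))
    (hαpde : ∀ x ∈ Ioo (0:ℝ) L, ∀ t ∈ Ioi (0:ℝ),
      deriv (fun s => α x s) t + lam1 * deriv (fun y => α y t) x = 0)
    (hβpde : ∀ x ∈ Ioo (0:ℝ) L, ∀ t ∈ Ioi (0:ℝ),
      deriv (fun s => β x s) t - lam2 * deriv (fun y => β y t) x = 0)
    (hbc0 : ∀ t : ℝ, 0 ≤ t → α 0 t = -r * β 0 t)
    (hbcL : ∀ t : ℝ, 0 ≤ t → β L t = 0) :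
    (∀ x ∈ Icc (0:ℝ) L, ∀ t : ℝ, (L - x) / lam2 ≤ t → β x t = 0) ∧
    (∀ x ∈ Icc (0:ℝ) L, ∀ t : ℝ, L / lam2 + x / lam1 ≤ t → α x t = 0) ∧
    (∀ x ∈ Icc (0:ℝ) L, ∀ t : ℝ, L / lam1 + L / lam2 ≤ t → α x t = 0 ∧ β x t = 0) := by
  -- Part 1 : β
  have partβ : ∀ x ∈ Icc (0:ℝ) L, ∀ t : ℝ, (L - x) / lam2 ≤ t → β x t = 0 := by
    intro x hx t ht
    obtain ⟨hx0, hxL⟩ := hx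
    set T : ℝ := (L - x) / lam2 with hT
    have hLT : lam2 * T = L - x := by rw [hT]; field_simp
    have hT0 : 0 ≤ T := div_nonneg (by linarith) h2.le
    have ht0 : 0 ≤ t := hT0.trans ht
    rcases eq_or_lt_of_le hxL with hxeq | hxlt
    · rw [hxeq]; exact hbcL t ht0
    set g : ℝ → ℝ := fun s => β (x + lam2 * s) (t + (-1) * s) with hg
    have key : g T = g 0 := by
      apply const_of_deriv_zero_Ioo hT0
      · apply (hβ.continuousOn.comp (f := fun s : ℝ => (x + lam2 * s, t + (-1) * s)))
        · exact (Continuous.prodMk (continuous_const.add (continuous_const.mul continuous_id)) (continuous_const.add (continuous_const.mul continuous_id))).continuousOn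
        · intro s hs
          obtain ⟨hs0, hsT⟩ := hs
          simp only [mem_prod, mem_Icc, mem_Ici]
          refine ⟨⟨by nlinarith, by nlinarith⟩, by nlinarith⟩
      · intro s hs
        obtain ⟨hs0, hsT⟩ := hs
        have hmem : ((x + lam2 * s, t + (-1) * s) : ℝ × ℝ) ∈ Ioo (0:ℝ) L ×ˢ Ioi (0:ℝ) := by
          simp only [mem_prod, mem_Ioo, mem_Ioi]
          refine ⟨⟨by nlinarith, by nlinarith⟩, by nlinarith⟩
        have hd := dir_deriv hβ hmem
        have hpde := hβpde _ hmem.1 _ hmem.2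
        have hzero : lam2 * deriv (fun y => β y (t + -1 * s)) (x + lam2 * s)
            + (-1) * deriv (fun u => β (x + lam2 * s) u) (t + -1 * s) = 0 := by
          linarith
        rw [hzero] at hd
        exact hd
    have hgT : g T = 0 := by
      have hxT : x + lam2 * T = L := by linarith
      have : g T = β L (t + (-1) * T) := by rw [hg]; simp [hxT]
      rw [this]
      exact hbcL _ (by linarith)
    have hg0 : g 0 = β x t := by simp [hg]
    rw [← hg0, ← key, hgT]
  -- Part 2 : α
  have partα : ∀ x ∈ Icc (0:ℝ) L, ∀ t : ℝ, L / lam2 + x / lam1 ≤ t → α x t = 0 := by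
    intro x hx t ht
    obtain ⟨hx0, hxL⟩ := hx
    set T : ℝ := x / lam1 with hT
    have hlT : lam1 * T = x := by rw [hT]; field_simp
    have hT0 : 0 ≤ T := div_nonneg hx0 h1.le
    have hL2 : 0 < L / lam2 := div_pos hL h2
    have ht0 : 0 < t := by linarith
    have hβ0 : ∀ u : ℝ, L / lam2 ≤ u → β 0 u = 0 := by
      intro u hu
      exact partβ 0 ⟨le_refl 0, hL.le⟩ u (by simpa using hu)
    rcases eq_or_lt_of_le hx0 with hxeq | hxpos
    · rw [← hxeq, hbc0 t ht0.le, hβ0 t (by linarith), mul_zero]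
    set g : ℝ → ℝ := fun s => α (x + (-lam1) * s) (t + (-1) * s) with hg
    have key : g T = g 0 := by
      apply const_of_deriv_zero_Ioo hT0
      · apply (hα.continuousOn.comp (f := fun s : ℝ => (x + (-lam1) * s, t + (-1) * s)))
        · exact (Continuous.prodMk (continuous_const.add (continuous_const.mul continuous_id)) (continuous_const.add (continuous_const.mul continuous_id))).continuousOn
        · intro s hs
          obtain ⟨hs0, hsT⟩ := hs
          simp only [mem_prod, mem_Icc, mem_Ici]
          refine ⟨⟨by nlinarith, by nlinarith⟩, by nlinarith⟩
      · intro s hs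
        obtain ⟨hs0, hsT⟩ := hs
        have hmem : ((x + (-lam1) * s, t + (-1) * s) : ℝ × ℝ) ∈ Ioo (0:ℝ) L ×ˢ Ioi (0:ℝ) := by
          simp only [mem_prod, mem_Ioo, mem_Ioi]
          refine ⟨⟨by nlinarith, by nlinarith⟩, by nlinarith⟩
        have hd := dir_deriv hα hmem
        have hpde := hαpde _ hmem.1 _ hmem.2
        have hzero : (-lam1) * deriv (fun y => α y (t + -1 * s)) (x + (-lam1) * s)
            + (-1) * deriv (fun u => α (x + (-lam1) * s) u) (t + -1 * s) = 0 := by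
          linarith
        rw [hzero] at hd
        exact hd
    have hgT : g T = 0 := by
      have hxT : x + (-lam1) * T = 0 := by linarith
      have htT : (0:ℝ) ≤ t + (-1) * T := by linarith
      have : g T = α 0 (t + (-1) * T) := by
        show α (x + -lam1 * T) (t + -1 * T) = _
        rw [hxT]
      rw [this, hbc0 _ htT, hβ0 _ (by linarith), mul_zero]
    have hg0 : g 0 = α x t := by simp [hg]
    rw [← hg0, ← key, hgT]
  refine ⟨partβ, partα, ?_⟩
  intro x hx t ht
  obtain ⟨hx0, hxL⟩ := hx
  have hd1 : x / lam1 ≤ L / lam1 := by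
    gcongr
  have h3 : (L - x) / lam2 ≤ L / lam2 := by
    gcongr; linarith
  have h4 : 0 ≤ L / lam1 := div_nonneg hL.le h1.le
  exact ⟨partα x ⟨hx0, hxL⟩ t (by linarith), partβ x ⟨hx0, hxL⟩ t (by linarith)⟩
end
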